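/- arXiv:2112.08537 — 4 statements merged into one kernel-verified Lean document; each statement's English description precedes it below -/
import Mathlib

section
/- Let R be a universal R-matrix for H with Drinfeld u-operator u. Then S²(a)·u = u·a for every a ∈ H. -/
open TensorProduct

noncomputable section

section

variable (k H : Type*) [CommRing k] [Ring H] [HopfAlgebra k H]

/-- The k-linear swap `τ : H ⊗ H → H ⊗ H`, `x ⊗ y ↦ y ⊗ x`. -/
def tau : H ⊗[k] H →ₗ[k] H ⊗[k] H := (TensorProduct.comm k H H).toLinearMap

/-- The opposite comultiplication `Δᵀ := τ ∘ Δ`. -/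
def DeltaT : H →ₗ[k] H ⊗[k] H := tau k H ∘ₗ Coalgebra.comul

/-- Embedding of `H ⊗ H` into slots (1,2) of `H ⊗ (H ⊗ H)`: `x ⊗ y ↦ x ⊗ y ⊗ 1`. -/
def emb12 : H ⊗[k] H →ₐ[k] H ⊗[k] (H ⊗[k] H) :=
  Algebra.TensorProduct.map (AlgHom.id k H) Algebra.TensorProduct.includeLeft

/-- Embedding of `H ⊗ H` into slots (1,3) of `H ⊗ (H ⊗ H)`: `x ⊗ y ↦ x ⊗ 1 ⊗ y`. -/
def emb13 : H ⊗[k] H →ₐ[k] H ⊗[k] (H ⊗[k] H) :=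
  Algebra.TensorProduct.map (AlgHom.id k H) Algebra.TensorProduct.includeRight

/-- Embedding of `H ⊗ H` into slots (2,3) of `H ⊗ (H ⊗ H)`: `x ⊗ y ↦ 1 ⊗ x ⊗ y`. -/
def emb23 : H ⊗[k] H →ₐ[k] H ⊗[k] (H ⊗[k] H) :=
  Algebra.TensorProduct.includeRight

/-- The map `Δ ⊗ id : H ⊗ H → H ⊗ (H ⊗ H)`. -/
def DeltaId : H ⊗[k] H →ₗ[k] H ⊗[k] (H ⊗[k] H) :=
  (TensorProduct.assoc k H H H).toLinearMap ∘ₗ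
    TensorProduct.map Coalgebra.comul LinearMap.id

/-- The map `id ⊗ Δ : H ⊗ H → H ⊗ (H ⊗ H)`. -/
def IdDelta : H ⊗[k] H →ₗ[k] H ⊗[k] (H ⊗[k] H) :=
  TensorProduct.map LinearMap.id Coalgebra.comul

/-- `R` is a universal R-matrix: it is invertible, satisfies the two hexagon
relations `(Δ⊗id)R = R₁₃R₂₃`, `(id⊗Δ)R = R₁₃R₁₂`, and intertwines `Δ` with `Δᵀ`. -/
structure IsUniversalRMatrix (R : H ⊗[k] H) : Prop where
  isUnit : IsUnit R
  hexagon1 : DeltaId k H R = emb13 k H R * emb23 k H R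
  hexagon2 : IdDelta k H R = emb13 k H R * emb12 k H R
  intertwine : ∀ a : H, R * Coalgebra.comul a = DeltaT k H a * R

/-- The Drinfeld u-operator `u = m ((S ⊗ id) (τ R))`. -/
def uOp (R : H ⊗[k] H) : H :=
  LinearMap.mul' k H
    (TensorProduct.map (HopfAlgebra.antipode (R := k)) LinearMap.id (tau k H R))

end

namespace DrinfeldAux

open Coalgebra

variable {k H : Type*} [CommRing k] [Ring H] [HopfAlgebra k H]

lemma antipode_one' : HopfAlgebra.antipode (R := k) (1 : H) = 1 := by
  have h := HopfAlgebra.mul_antipode_rTensor_comul_apply (R := k) (1 : H)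
  simpa [Bialgebra.comul_one, Algebra.TensorProduct.one_def] using h

lemma antipode_algebraMap (c : k) :
    HopfAlgebra.antipode (R := k) (algebraMap k H c) = algebraMap k H c := by
  rw [Algebra.algebraMap_eq_smul_one, map_smul, antipode_one']

lemma sum_counit_right_smul {x : H} (r : Coalgebra.Repr k x (H × H)) :
    ∑ i ∈ r.index, Coalgebra.counit (R := k) (r.right i) • r.left i = x := by
  have h := congrArg (TensorProduct.rid k H) (Coalgebra.sum_tmul_counit_eq (R := k) r)
  rw [map_sum] at h
  simp only [TensorProduct.rid_tmul, one_smul] at h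
  exact h

lemma sum_counit_left_smul {x : H} (r : Coalgebra.Repr k x (H × H)) :
    ∑ i ∈ r.index, Coalgebra.counit (R := k) (r.left i) • r.right i = x := by
  have h := congrArg (TensorProduct.lid k H) (Coalgebra.sum_counit_tmul_eq (R := k) r)
  rw [map_sum] at h
  simp only [TensorProduct.lid_tmul, one_smul] at h
  exact h

lemma transport (Φ : H ⊗[k] (H ⊗[k] H) →ₗ[k] H) {a : H} (r : Coalgebra.Repr k a (H × H))
    (r1 : ∀ i, Coalgebra.Repr k (r.left i) (H × H)) (r2 : ∀ i, Coalgebra.Repr k (r.right i) (H × H)) :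
    ∑ i ∈ r.index, ∑ j ∈ (r2 i).index,
        Φ (r.left i ⊗ₜ[k] ((r2 i).left j ⊗ₜ[k] (r2 i).right j)) =
    ∑ i ∈ r.index, ∑ j ∈ (r1 i).index,
        Φ ((r1 i).left j ⊗ₜ[k] ((r1 i).right j ⊗ₜ[k] r.right i)) := by
  have h := Coalgebra.sum_map_tmul_tmul_eq (R := k)
    (LinearMap.id (R := k) (M := H)) LinearMap.id LinearMap.id a
    (repr := r) (a₁ := r1) (a₂ := r2)
  simp only [LinearMap.id_coe, id_eq] at h
  calc ∑ i ∈ r.index, ∑ j ∈ (r2 i).index,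
        Φ (r.left i ⊗ₜ[k] ((r2 i).left j ⊗ₜ[k] (r2 i).right j))
      = Φ (∑ i ∈ r.index, ∑ j ∈ (r2 i).index,
          r.left i ⊗ₜ[k] ((r2 i).left j ⊗ₜ[k] (r2 i).right j)) := by simp [map_sum]
    _ = Φ (∑ i ∈ r.index, ∑ j ∈ (r1 i).index,
          (r1 i).left j ⊗ₜ[k] ((r1 i).right j ⊗ₜ[k] r.right i)) := by rw [h]
    _ = _ := by simp [map_sum]

/-- `x ⊗ (y ⊗ z) ↦ S(x*p) * ((y*q) * (m * S z))`. -/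
def tri (p q m : H) : H ⊗[k] (H ⊗[k] H) →ₗ[k] H :=
  LinearMap.mul' k H ∘ₗ
    TensorProduct.map (HopfAlgebra.antipode (R := k) ∘ₗ LinearMap.mulRight k p)
      (LinearMap.mul' k H ∘ₗ
        TensorProduct.map (LinearMap.mulRight k q)
          (LinearMap.mulLeft k m ∘ₗ HopfAlgebra.antipode (R := k)))

@[simp] lemma tri_apply (p q m x y z : H) :
    tri (k := k) p q m (x ⊗ₜ[k] (y ⊗ₜ[k] z)) =
      HopfAlgebra.antipode (R := k) (x * p) *
        ((y * q) * (m * HopfAlgebra.antipode (R := k) z)) := by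
  simp [tri]

/-- `x ⊗ (y ⊗ z) ↦ S(p*x) * ((q*y) * (S z * m))`. -/
def tri' (p q m : H) : H ⊗[k] (H ⊗[k] H) →ₗ[k] H :=
  LinearMap.mul' k H ∘ₗ
    TensorProduct.map (HopfAlgebra.antipode (R := k) ∘ₗ LinearMap.mulLeft k p)
      (LinearMap.mul' k H ∘ₗ
        TensorProduct.map (LinearMap.mulLeft k q)
          (LinearMap.mulRight k m ∘ₗ HopfAlgebra.antipode (R := k)))

@[simp] lemma tri'_apply (p q m x y z : H) :
    tri' (k := k) p q m (x ⊗ₜ[k] (y ⊗ₜ[k] z)) =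
      HopfAlgebra.antipode (R := k) (p * x) *
        ((q * y) * (HopfAlgebra.antipode (R := k) z * m)) := by
  simp [tri']

lemma sum_swap₄ {ι κ M : Type*} [AddCommMonoid M] {γ : ι → Type*} {δ : κ → Type*}
    (s : Finset ι) (t : Finset κ) (u : ∀ i, Finset (γ i)) (v : ∀ j, Finset (δ j))
    (f : ∀ i, γ i → ∀ j, δ j → M) :
    ∑ i ∈ s, ∑ m ∈ u i, ∑ j ∈ t, ∑ l ∈ v j, f i m j l
      = ∑ j ∈ t, ∑ l ∈ v j, ∑ i ∈ s, ∑ m ∈ u i, f i m j l := by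
  calc ∑ i ∈ s, ∑ m ∈ u i, ∑ j ∈ t, ∑ l ∈ v j, f i m j l
      = ∑ i ∈ s, ∑ j ∈ t, ∑ m ∈ u i, ∑ l ∈ v j, f i m j l :=
        Finset.sum_congr rfl fun i _ => Finset.sum_comm
    _ = ∑ j ∈ t, ∑ i ∈ s, ∑ m ∈ u i, ∑ l ∈ v j, f i m j l := Finset.sum_comm
    _ = ∑ j ∈ t, ∑ i ∈ s, ∑ l ∈ v j, ∑ m ∈ u i, f i m j l :=
        Finset.sum_congr rfl fun j _ => Finset.sum_congr rfl fun i _ => Finset.sum_comm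
    _ = ∑ j ∈ t, ∑ l ∈ v j, ∑ i ∈ s, ∑ m ∈ u i, f i m j l :=
        Finset.sum_congr rfl fun j _ => Finset.sum_comm

def mulRepr {x y : H} (rx : Coalgebra.Repr k x (H × H)) (ry : Coalgebra.Repr k y (H × H)) :
    Coalgebra.Repr k (x * y) ((H × H) × (H × H)) where
  index := rx.index ×ˢ ry.index
  left := fun p => rx.left p.1 * ry.left p.2
  right := fun p => rx.right p.1 * ry.right p.2
  eq := by
    rw [Finset.sum_product]
    rw [Bialgebra.comul_mul, ← rx.eq, ← ry.eq, Finset.sum_mul_sum]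
    exact Finset.sum_congr rfl fun i _ => Finset.sum_congr rfl fun j _ =>
      (Algebra.TensorProduct.tmul_mul_tmul _ _ _ _).symm

@[simp] lemma mulRepr_index {x y : H} (rx : Coalgebra.Repr k x (H × H)) (ry : Coalgebra.Repr k y (H × H)) :
    (mulRepr rx ry).index = rx.index ×ˢ ry.index := rfl

@[simp] lemma mulRepr_left {x y : H} (rx : Coalgebra.Repr k x (H × H)) (ry : Coalgebra.Repr k y (H × H))
    (p : (H × H) × (H × H)) : (mulRepr rx ry).left p = rx.left p.1 * ry.left p.2 := rfl

@[simp] lemma mulRepr_right {x y : H} (rx : Coalgebra.Repr k x (H × H)) (ry : Coalgebra.Repr k y (H × H))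
    (p : (H × H) × (H × H)) : (mulRepr rx ry).right p = rx.right p.1 * ry.right p.2 := rfl

lemma mul_algebraMap_eq_smul (x : H) (c : k) : x * algebraMap k H c = c • x := by
  rw [← Algebra.commutes, ← Algebra.smul_def]

lemma sum_counit_left_smul_antipode {x : H} (r : Coalgebra.Repr k x (H × H)) :
    ∑ i ∈ r.index, Coalgebra.counit (R := k) (r.left i) •
      HopfAlgebra.antipode (R := k) (r.right i) = HopfAlgebra.antipode (R := k) x := by
  conv_rhs => rw [← sum_counit_left_smul r]
  rw [map_sum]
  exact Finset.sum_congr rfl fun i _ => (map_smul _ _ _).symm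

lemma sum_counit_right_smul_antipode {x : H} (r : Coalgebra.Repr k x (H × H)) :
    ∑ i ∈ r.index, Coalgebra.counit (R := k) (r.right i) •
      HopfAlgebra.antipode (R := k) (r.left i) = HopfAlgebra.antipode (R := k) x := by
  conv_rhs => rw [← sum_counit_right_smul r]
  rw [map_sum]
  exact Finset.sum_congr rfl fun i _ => (map_smul _ _ _).symm

lemma antipode_mul (a b : H) :
    HopfAlgebra.antipode (R := k) (a * b) =
      HopfAlgebra.antipode (R := k) b * HopfAlgebra.antipode (R := k) a := by
  classical
  have ra : Coalgebra.Repr k a (H × H) := ℛ k a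
  have rb : Coalgebra.Repr k b (H × H) := ℛ k b
  have ra1 : ∀ i, Coalgebra.Repr k (ra.left i) (H × H) := fun i => ℛ k _
  have ra2 : ∀ i, Coalgebra.Repr k (ra.right i) (H × H) := fun i => ℛ k _
  have rb1 : ∀ j, Coalgebra.Repr k (rb.left j) (H × H) := fun j => ℛ k _
  have rb2 : ∀ j, Coalgebra.Repr k (rb.right j) (H × H) := fun j => ℛ k _
  -- the master sum, with both comultiplications expanded on the right
  set X : H := ∑ i ∈ ra.index, ∑ j ∈ rb.index, ∑ m ∈ (ra2 i).index, ∑ l ∈ (rb2 j).index,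
      HopfAlgebra.antipode (R := k) (ra.left i * rb.left j) *
        (((ra2 i).left m * (rb2 j).left l) *
          (HopfAlgebra.antipode (R := k) ((rb2 j).right l) *
            HopfAlgebra.antipode (R := k) ((ra2 i).right m))) with hX
  have key1 : X = HopfAlgebra.antipode (R := k) (a * b) := by
    calc X
        = ∑ i ∈ ra.index, ∑ j ∈ rb.index, ∑ m ∈ (ra2 i).index,
            HopfAlgebra.antipode (R := k) (ra.left i * rb.left j) *
              ((ra2 i).left m *
                ((∑ l ∈ (rb2 j).index,
                    (rb2 j).left l * HopfAlgebra.antipode (R := k) ((rb2 j).right l)) *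
                  HopfAlgebra.antipode (R := k) ((ra2 i).right m))) := by
          rw [hX]
          refine Finset.sum_congr rfl fun i _ => Finset.sum_congr rfl fun j _ =>
            Finset.sum_congr rfl fun m _ => ?_
          rw [Finset.sum_mul, Finset.mul_sum, Finset.mul_sum]
          exact Finset.sum_congr rfl fun l _ => by simp only [mul_assoc]
      _ = ∑ i ∈ ra.index, ∑ j ∈ rb.index, ∑ m ∈ (ra2 i).index,
            Coalgebra.counit (R := k) (rb.right j) •
              (HopfAlgebra.antipode (R := k) (ra.left i * rb.left j) *
                ((ra2 i).left m * HopfAlgebra.antipode (R := k) ((ra2 i).right m))) := by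
          refine Finset.sum_congr rfl fun i _ => Finset.sum_congr rfl fun j _ =>
            Finset.sum_congr rfl fun m _ => ?_
          rw [HopfAlgebra.sum_mul_antipode_eq_algebraMap_counit (rb2 j), ← Algebra.smul_def,
            mul_smul_comm, mul_smul_comm]
      _ = ∑ i ∈ ra.index, ∑ j ∈ rb.index,
            Coalgebra.counit (R := k) (rb.right j) •
              (Coalgebra.counit (R := k) (ra.right i) •
                HopfAlgebra.antipode (R := k) (ra.left i * rb.left j)) := by
          refine Finset.sum_congr rfl fun i _ => Finset.sum_congr rfl fun j _ => ?_
          rw [← Finset.smul_sum, ← Finset.mul_sum, HopfAlgebra.sum_mul_antipode_eq_algebraMap_counit (ra2 i),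
            mul_algebraMap_eq_smul]
      _ = ∑ i ∈ ra.index, ∑ j ∈ rb.index,
            (Coalgebra.counit (R := k) (ra.right i) * Coalgebra.counit (R := k) (rb.right j)) •
              HopfAlgebra.antipode (R := k) (ra.left i * rb.left j) := by
          refine Finset.sum_congr rfl fun i _ => Finset.sum_congr rfl fun j _ => ?_
          rw [smul_smul, mul_comm]
      _ = HopfAlgebra.antipode (R := k) (a * b) := by
          conv_rhs => rw [← sum_counit_right_smul ra, ← sum_counit_right_smul rb,
            Finset.sum_mul_sum, map_sum]
          refine Finset.sum_congr rfl fun i _ => ?_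
          rw [map_sum]
          refine Finset.sum_congr rfl fun j _ => ?_
          rw [smul_mul_assoc, mul_smul_comm, map_smul, map_smul, smul_smul]
  have key2 : X = HopfAlgebra.antipode (R := k) b * HopfAlgebra.antipode (R := k) a := by
    calc X
        -- reorder (i,j,m,l) → (j,l,i,m)
        = ∑ j ∈ rb.index, ∑ l ∈ (rb2 j).index, ∑ i ∈ ra.index, ∑ m ∈ (ra2 i).index,
            HopfAlgebra.antipode (R := k) (ra.left i * rb.left j) *
              (((ra2 i).left m * (rb2 j).left l) *
                (HopfAlgebra.antipode (R := k) ((rb2 j).right l) *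
                  HopfAlgebra.antipode (R := k) ((ra2 i).right m))) := by
          rw [hX]
          rw [show (∑ i ∈ ra.index, ∑ j ∈ rb.index, ∑ m ∈ (ra2 i).index, ∑ l ∈ (rb2 j).index,
              HopfAlgebra.antipode (R := k) (ra.left i * rb.left j) *
                (((ra2 i).left m * (rb2 j).left l) *
                  (HopfAlgebra.antipode (R := k) ((rb2 j).right l) *
                    HopfAlgebra.antipode (R := k) ((ra2 i).right m))))
            = ∑ i ∈ ra.index, ∑ m ∈ (ra2 i).index, ∑ j ∈ rb.index, ∑ l ∈ (rb2 j).index,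
              HopfAlgebra.antipode (R := k) (ra.left i * rb.left j) *
                (((ra2 i).left m * (rb2 j).left l) *
                  (HopfAlgebra.antipode (R := k) ((rb2 j).right l) *
                    HopfAlgebra.antipode (R := k) ((ra2 i).right m)))
            from Finset.sum_congr rfl fun i _ => Finset.sum_comm]
          exact sum_swap₄ _ _ _ _ _
      _ = ∑ j ∈ rb.index, ∑ l ∈ (rb2 j).index, ∑ i ∈ ra.index, ∑ m ∈ (ra2 i).index,
            tri (k := k) (rb.left j) ((rb2 j).left l)
              (HopfAlgebra.antipode (R := k) ((rb2 j).right l))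
              (ra.left i ⊗ₜ[k] ((ra2 i).left m ⊗ₜ[k] (ra2 i).right m)) := by
          simp only [tri_apply]
      _ = ∑ j ∈ rb.index, ∑ l ∈ (rb2 j).index, ∑ i ∈ ra.index, ∑ m ∈ (ra1 i).index,
            tri (k := k) (rb.left j) ((rb2 j).left l)
              (HopfAlgebra.antipode (R := k) ((rb2 j).right l))
              ((ra1 i).left m ⊗ₜ[k] ((ra1 i).right m ⊗ₜ[k] ra.right i)) := by
          refine Finset.sum_congr rfl fun j _ => Finset.sum_congr rfl fun l _ => ?_
          exact transport _ ra ra1 ra2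
      _ = ∑ j ∈ rb.index, ∑ l ∈ (rb2 j).index, ∑ i ∈ ra.index, ∑ m ∈ (ra1 i).index,
            HopfAlgebra.antipode (R := k) ((ra1 i).left m * rb.left j) *
              (((ra1 i).right m * (rb2 j).left l) *
                (HopfAlgebra.antipode (R := k) ((rb2 j).right l) *
                  HopfAlgebra.antipode (R := k) (ra.right i))) := by
          simp only [tri_apply]
      -- reorder (j,l,i,m) → (i,m,j,l)
      _ = ∑ i ∈ ra.index, ∑ m ∈ (ra1 i).index, ∑ j ∈ rb.index, ∑ l ∈ (rb2 j).index,
            HopfAlgebra.antipode (R := k) ((ra1 i).left m * rb.left j) *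
              (((ra1 i).right m * (rb2 j).left l) *
                (HopfAlgebra.antipode (R := k) ((rb2 j).right l) *
                  HopfAlgebra.antipode (R := k) (ra.right i))) := by
          exact sum_swap₄ _ _ _ _ _
      _ = ∑ i ∈ ra.index, ∑ m ∈ (ra1 i).index, ∑ j ∈ rb.index, ∑ l ∈ (rb1 j).index,
            tri' (k := k) ((ra1 i).left m) ((ra1 i).right m)
              (HopfAlgebra.antipode (R := k) (ra.right i))
              ((rb1 j).left l ⊗ₜ[k] ((rb1 j).right l ⊗ₜ[k] rb.right j)) := by
          refine Finset.sum_congr rfl fun i _ => Finset.sum_congr rfl fun m _ => ?_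
          rw [← transport _ rb rb1 rb2]
          simp only [tri'_apply]
      _ = ∑ i ∈ ra.index, ∑ m ∈ (ra1 i).index, ∑ j ∈ rb.index, ∑ l ∈ (rb1 j).index,
            HopfAlgebra.antipode (R := k) ((ra1 i).left m * (rb1 j).left l) *
              (((ra1 i).right m * (rb1 j).right l) *
                (HopfAlgebra.antipode (R := k) (rb.right j) *
                  HopfAlgebra.antipode (R := k) (ra.right i))) := by
          simp only [tri'_apply]
      -- reorder (i,m,j,l) → (i,j,m,l)
      _ = ∑ i ∈ ra.index, ∑ j ∈ rb.index, ∑ m ∈ (ra1 i).index, ∑ l ∈ (rb1 j).index,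
            HopfAlgebra.antipode (R := k) ((ra1 i).left m * (rb1 j).left l) *
              (((ra1 i).right m * (rb1 j).right l) *
                (HopfAlgebra.antipode (R := k) (rb.right j) *
                  HopfAlgebra.antipode (R := k) (ra.right i))) := by
          exact Finset.sum_congr rfl fun i _ => Finset.sum_comm
      -- collapse the inner double sum using the antipode axiom for `aˡᵢ * bˡⱼ`
      _ = ∑ i ∈ ra.index, ∑ j ∈ rb.index,
            (Coalgebra.counit (R := k) (ra.left i) * Coalgebra.counit (R := k) (rb.left j)) •
              (HopfAlgebra.antipode (R := k) (rb.right j) *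
                HopfAlgebra.antipode (R := k) (ra.right i)) := by
          refine Finset.sum_congr rfl fun i _ => Finset.sum_congr rfl fun j _ => ?_
          have hcm : Coalgebra.comul (R := k) (ra.left i * rb.left j) =
              ∑ m ∈ (ra1 i).index, ∑ l ∈ (rb1 j).index,
                ((ra1 i).left m * (rb1 j).left l) ⊗ₜ[k]
                  ((ra1 i).right m * (rb1 j).right l) := by
            rw [Bialgebra.comul_mul, ← (ra1 i).eq, ← (rb1 j).eq, Finset.sum_mul_sum]
            exact Finset.sum_congr rfl fun m _ => Finset.sum_congr rfl fun l _ =>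
              Algebra.TensorProduct.tmul_mul_tmul _ _ _ _
          have hmul := HopfAlgebra.mul_antipode_rTensor_comul_apply (R := k)
            (ra.left i * rb.left j)
          rw [hcm] at hmul
          simp only [map_sum, LinearMap.rTensor_tmul, LinearMap.mul'_apply] at hmul
          calc ∑ m ∈ (ra1 i).index, ∑ l ∈ (rb1 j).index,
                HopfAlgebra.antipode (R := k) ((ra1 i).left m * (rb1 j).left l) *
                  (((ra1 i).right m * (rb1 j).right l) *
                    (HopfAlgebra.antipode (R := k) (rb.right j) *
                      HopfAlgebra.antipode (R := k) (ra.right i)))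
              = (∑ m ∈ (ra1 i).index, ∑ l ∈ (rb1 j).index,
                  HopfAlgebra.antipode (R := k) ((ra1 i).left m * (rb1 j).left l) *
                    ((ra1 i).right m * (rb1 j).right l)) *
                  (HopfAlgebra.antipode (R := k) (rb.right j) *
                    HopfAlgebra.antipode (R := k) (ra.right i)) := by
                rw [Finset.sum_mul]
                refine Finset.sum_congr rfl fun m _ => ?_
                rw [Finset.sum_mul]
                exact Finset.sum_congr rfl fun l _ => (mul_assoc _ _ _).symm
            _ = _ := by
                rw [hmul, Bialgebra.counit_mul, ← Algebra.smul_def]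
      _ = HopfAlgebra.antipode (R := k) b * HopfAlgebra.antipode (R := k) a := by
          calc ∑ i ∈ ra.index, ∑ j ∈ rb.index,
                (Coalgebra.counit (R := k) (ra.left i) * Coalgebra.counit (R := k) (rb.left j)) •
                  (HopfAlgebra.antipode (R := k) (rb.right j) *
                    HopfAlgebra.antipode (R := k) (ra.right i))
              = ∑ i ∈ ra.index, Coalgebra.counit (R := k) (ra.left i) •
                  ((∑ j ∈ rb.index, Coalgebra.counit (R := k) (rb.left j) •
                      HopfAlgebra.antipode (R := k) (rb.right j)) *
                    HopfAlgebra.antipode (R := k) (ra.right i)) := by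
                refine Finset.sum_congr rfl fun i _ => ?_
                rw [Finset.sum_mul, Finset.smul_sum]
                refine Finset.sum_congr rfl fun j _ => ?_
                rw [smul_mul_assoc, smul_smul]
            _ = ∑ i ∈ ra.index, Coalgebra.counit (R := k) (ra.left i) •
                  (HopfAlgebra.antipode (R := k) b *
                    HopfAlgebra.antipode (R := k) (ra.right i)) := by
                refine Finset.sum_congr rfl fun i _ => ?_
                rw [sum_counit_left_smul_antipode rb]
            _ = ∑ i ∈ ra.index, HopfAlgebra.antipode (R := k) b *
                  (Coalgebra.counit (R := k) (ra.left i) •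
                    HopfAlgebra.antipode (R := k) (ra.right i)) := by
                exact Finset.sum_congr rfl fun i _ => (mul_smul_comm _ _ _).symm
            _ = HopfAlgebra.antipode (R := k) b *
                  HopfAlgebra.antipode (R := k) a := by
                rw [← Finset.mul_sum, sum_counit_left_smul_antipode ra]
  rw [← key1, key2]


/-- `ν : H ⊗ H → H`, `x ⊗ y ↦ S(y) * x`. -/
def nu : H ⊗[k] H →ₗ[k] H :=
  LinearMap.mul' k H ∘ₗ
    TensorProduct.map (HopfAlgebra.antipode (R := k)) LinearMap.id ∘ₗ
      (TensorProduct.comm k H H).toLinearMap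

@[simp] lemma nu_tmul (x y : H) :
    nu (k := k) (x ⊗ₜ[k] y) = HopfAlgebra.antipode (R := k) y * x := by
  simp [nu]

lemma nuA (R w : H ⊗[k] H) :
    nu (k := k) (R * w) = nu (k := k) ((nu (k := k) R ⊗ₜ[k] (1 : H)) * w) := by
  induction R using TensorProduct.induction_on with
  | zero => simp
  | tmul x y =>
      induction w using TensorProduct.induction_on with
      | zero => simp
      | tmul p q =>
          simp only [Algebra.TensorProduct.tmul_mul_tmul, nu_tmul, one_mul,
            antipode_mul, mul_assoc]
      | add w1 w2 h1 h2 => simp only [mul_add, map_add, h1, h2]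
  | add R1 R2 h1 h2 => simp only [add_mul, map_add, add_tmul, h1, h2]

lemma nuB (w R : H ⊗[k] H) :
    nu (k := k) ((TensorProduct.comm k H H w) * R) =
      nu (k := k)
        ((LinearMap.mul' k H ((HopfAlgebra.antipode (R := k)).rTensor H w) ⊗ₜ[k] (1 : H)) * R) := by
  induction w using TensorProduct.induction_on with
  | zero => simp
  | tmul p q =>
      induction R using TensorProduct.induction_on with
      | zero => simp
      | tmul x y =>
          simp only [TensorProduct.comm_tmul, Algebra.TensorProduct.tmul_mul_tmul,
            LinearMap.rTensor_tmul, LinearMap.mul'_apply, nu_tmul, one_mul,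
            antipode_mul, mul_assoc]
      | add R1 R2 h1 h2 => simp only [mul_add, map_add, h1, h2]
  | add w1 w2 h1 h2 =>
      simp only [map_add, add_mul, add_tmul, h1, h2]

/-- `p ⊗ (q ⊗ r) ↦ S(q * S(r)) * u * p`. -/
def theta (u : H) : H ⊗[k] (H ⊗[k] H) →ₗ[k] H :=
  LinearMap.mul' k H ∘ₗ
    TensorProduct.map
      (LinearMap.mulRight k u ∘ₗ HopfAlgebra.antipode (R := k) ∘ₗ LinearMap.mul' k H ∘ₗ
        LinearMap.lTensor H (HopfAlgebra.antipode (R := k)))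
      LinearMap.id ∘ₗ
    (TensorProduct.comm k H (H ⊗[k] H)).toLinearMap

@[simp] lemma theta_apply (u p q r : H) :
    theta (k := k) u (p ⊗ₜ[k] (q ⊗ₜ[k] r)) =
      HopfAlgebra.antipode (R := k) (q * HopfAlgebra.antipode (R := k) r) * u * p := by
  simp [theta]

end DrinfeldAux


variable (k H : Type*) [CommRing k] [Ring H] [HopfAlgebra k H]

/-- For the Drinfeld u-operator: `S²(a) · u = u · a` for all `a ∈ H`. -/
theorem antipode_sq_mul_uOp (R : H ⊗[k] H) (hR : IsUniversalRMatrix k H R) :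
    ∀ a : H,
      HopfAlgebra.antipode (R := k) (HopfAlgebra.antipode (R := k) a) * uOp k H R =
        uOp k H R * a := by
  intro x
  have hu : uOp k H R = DrinfeldAux.nu (k := k) R := rfl
  have hstar : ∀ y : H,
      DrinfeldAux.nu (k := k)
        ((DrinfeldAux.nu (k := k) R ⊗ₜ[k] (1 : H)) * Coalgebra.comul y) =
      Coalgebra.counit (R := k) y • DrinfeldAux.nu (k := k) R := by
    intro y
    rw [← DrinfeldAux.nuA, hR.intertwine y,
      show DeltaT k H y = TensorProduct.comm k H H (Coalgebra.comul y) from rfl,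
      DrinfeldAux.nuB, HopfAlgebra.mul_antipode_rTensor_comul_apply]
    rw [show (algebraMap k H (Coalgebra.counit (R := k) y)) ⊗ₜ[k] (1 : H) =
        Coalgebra.counit (R := k) y • (1 : H ⊗[k] H) by
      rw [Algebra.TensorProduct.one_def, Algebra.algebraMap_eq_smul_one, smul_tmul']]
    rw [smul_mul_assoc, one_mul, map_smul]
  set u : H := DrinfeldAux.nu (k := k) R with hu'
  have rx : Coalgebra.Repr k x (H × H) := Coalgebra.Repr.arbitrary k x
  have rx1 : ∀ i, Coalgebra.Repr k (rx.left i) (H × H) := fun i => Coalgebra.Repr.arbitrary k _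
  have rx2 : ∀ i, Coalgebra.Repr k (rx.right i) (H × H) := fun i => Coalgebra.Repr.arbitrary k _
  set Y : H := ∑ i ∈ rx.index, ∑ j ∈ (rx2 i).index,
      DrinfeldAux.theta (k := k) u
        (rx.left i ⊗ₜ[k] ((rx2 i).left j ⊗ₜ[k] (rx2 i).right j)) with hY
  have hY1 : Y = u * x := by
    calc Y = ∑ i ∈ rx.index,
          (HopfAlgebra.antipode (R := k)
            (∑ j ∈ (rx2 i).index, (rx2 i).left j *
              HopfAlgebra.antipode (R := k) ((rx2 i).right j)) * u) * rx.left i := by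
          rw [hY]
          refine Finset.sum_congr rfl fun i _ => ?_
          rw [map_sum, Finset.sum_mul, Finset.sum_mul]
          exact Finset.sum_congr rfl fun j _ => DrinfeldAux.theta_apply u _ _ _
      _ = ∑ i ∈ rx.index,
          Coalgebra.counit (R := k) (rx.right i) • (u * rx.left i) := by
        refine Finset.sum_congr rfl fun i _ => ?_
        rw [HopfAlgebra.sum_mul_antipode_eq_algebraMap_counit (rx2 i), DrinfeldAux.antipode_algebraMap,
          ← Algebra.smul_def, smul_mul_assoc]
      _ = u * x := by
        have h : (∑ i ∈ rx.index, Coalgebra.counit (R := k) (rx.right i) • (u * rx.left i))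
            = u * ∑ i ∈ rx.index, Coalgebra.counit (R := k) (rx.right i) • rx.left i := by
          rw [Finset.mul_sum]
          exact Finset.sum_congr rfl fun i _ => (mul_smul_comm _ _ _).symm
        rw [h, DrinfeldAux.sum_counit_right_smul rx]
  have hY2 : Y = HopfAlgebra.antipode (R := k) (HopfAlgebra.antipode (R := k) x) * u := by
    calc Y = ∑ i ∈ rx.index, ∑ j ∈ (rx1 i).index,
          DrinfeldAux.theta (k := k) u
            ((rx1 i).left j ⊗ₜ[k] ((rx1 i).right j ⊗ₜ[k] rx.right i)) := by
          rw [hY]; exact DrinfeldAux.transport _ rx rx1 rx2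
      _ = ∑ i ∈ rx.index, ∑ j ∈ (rx1 i).index,
          HopfAlgebra.antipode (R := k) (HopfAlgebra.antipode (R := k) (rx.right i)) *
            (HopfAlgebra.antipode (R := k) ((rx1 i).right j) * (u * (rx1 i).left j)) := by
        simp only [DrinfeldAux.theta_apply, DrinfeldAux.antipode_mul, mul_assoc]
      _ = ∑ i ∈ rx.index,
          HopfAlgebra.antipode (R := k) (HopfAlgebra.antipode (R := k) (rx.right i)) *
            (Coalgebra.counit (R := k) (rx.left i) • u) := by
        refine Finset.sum_congr rfl fun i _ => ?_
        rw [← Finset.mul_sum]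
        congr 1
        have hexp : DrinfeldAux.nu (k := k) ((u ⊗ₜ[k] (1 : H)) * Coalgebra.comul (rx.left i))
            = ∑ j ∈ (rx1 i).index, HopfAlgebra.antipode (R := k) ((rx1 i).right j) *
                (u * (rx1 i).left j) := by
          rw [← (rx1 i).eq, Finset.mul_sum, map_sum]
          refine Finset.sum_congr rfl fun j _ => ?_
          rw [Algebra.TensorProduct.tmul_mul_tmul, DrinfeldAux.nu_tmul, one_mul]
        rw [← hexp]
        exact hstar (rx.left i)
      _ = (∑ i ∈ rx.index, Coalgebra.counit (R := k) (rx.left i) •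
            HopfAlgebra.antipode (R := k) (HopfAlgebra.antipode (R := k) (rx.right i))) * u := by
        rw [Finset.sum_mul]
        refine Finset.sum_congr rfl fun i _ => ?_
        rw [mul_smul_comm, smul_mul_assoc]
      _ = HopfAlgebra.antipode (R := k) (HopfAlgebra.antipode (R := k) x) * u := by
        congr 1
        calc ∑ i ∈ rx.index, Coalgebra.counit (R := k) (rx.left i) •
              HopfAlgebra.antipode (R := k) (HopfAlgebra.antipode (R := k) (rx.right i))
            = ∑ i ∈ rx.index, HopfAlgebra.antipode (R := k)
                (Coalgebra.counit (R := k) (rx.left i) •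
                  HopfAlgebra.antipode (R := k) (rx.right i)) :=
              Finset.sum_congr rfl fun i _ => (map_smul _ _ _).symm
          _ = HopfAlgebra.antipode (R := k)
                (∑ i ∈ rx.index, Coalgebra.counit (R := k) (rx.left i) •
                  HopfAlgebra.antipode (R := k) (rx.right i)) := (map_sum _ _ _).symm
          _ = _ := by rw [DrinfeldAux.sum_counit_left_smul_antipode rx]
  rw [hu]
  exact hY2.symm.trans hY1
end
end

section
/- Let R be a universal R-matrix for H with Drinfeld u-operator u. Then u is invertible in H, with inverse u⁻¹ = m((S⁻¹⊗id)(τ(R⁻¹))) (writing R⁻¹ = Σᵢ cᵢ⊗dᵢ, u⁻¹ = Σᵢ S⁻¹(dᵢ)cᵢ). -/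
open TensorProduct

noncomputable section
set_option maxHeartbeats 1000000
set_option synthInstance.maxHeartbeats 400000
set_option linter.unusedSectionVars false

variable (k H : Type*) [CommRing k] [Ring H] [HopfAlgebra k H]

namespace RMx

open Coalgebra HopfAlgebra LinearMap

@[simp] lemma tau_tmul (a b : H) : tau k H (a ⊗ₜ[k] b) = b ⊗ₜ[k] a := rfl

lemma tau_tau (w : H ⊗[k] H) : tau k H (tau k H w) = w := by
  induction w using TensorProduct.induction_on with
  | zero => simp
  | tmul a b => simp
  | add x y hx hy => simp only [map_add, hx, hy]

/-! ### A (universe-polymorphic) coalgebra instance on `H ⊗ H`. -/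

/-- shuffle `((x₁⊗x₂)⊗x₃)⊗((y₁⊗y₂)⊗y₃) ↦ (x₁⊗y₁)⊗((x₂⊗y₂)⊗(x₃⊗y₃))`. -/
def A1 : (((H ⊗[k] H) ⊗[k] H) ⊗[k] ((H ⊗[k] H) ⊗[k] H)) →ₗ[k]
    ((H ⊗[k] H) ⊗[k] ((H ⊗[k] H) ⊗[k] (H ⊗[k] H))) :=
  (TensorProduct.assoc k (H ⊗[k] H) (H ⊗[k] H) (H ⊗[k] H)).toLinearMap ∘ₗ
    ((tensorTensorTensorComm k H H H H).toLinearMap.rTensor (H ⊗[k] H)) ∘ₗ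
    (tensorTensorTensorComm k (H ⊗[k] H) H (H ⊗[k] H) H).toLinearMap

/-- shuffle `(x₁⊗(x₂⊗x₃))⊗(y₁⊗(y₂⊗y₃)) ↦ (x₁⊗y₁)⊗((x₂⊗y₂)⊗(x₃⊗y₃))`. -/
def A2 : ((H ⊗[k] (H ⊗[k] H)) ⊗[k] (H ⊗[k] (H ⊗[k] H))) →ₗ[k]
    ((H ⊗[k] H) ⊗[k] ((H ⊗[k] H) ⊗[k] (H ⊗[k] H))) :=
  ((tensorTensorTensorComm k H H H H).toLinearMap.lTensor (H ⊗[k] H)) ∘ₗ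
    (tensorTensorTensorComm k H (H ⊗[k] H) H (H ⊗[k] H)).toLinearMap

@[simp] lemma A1_tmul (x₁ x₂ x₃ y₁ y₂ y₃ : H) :
    A1 k H (((x₁ ⊗ₜ x₂) ⊗ₜ x₃) ⊗ₜ ((y₁ ⊗ₜ y₂) ⊗ₜ y₃)) =
      (x₁ ⊗ₜ y₁) ⊗ₜ ((x₂ ⊗ₜ y₂) ⊗ₜ (x₃ ⊗ₜ y₃)) := by
  simp [A1]

@[simp] lemma A2_tmul (x₁ x₂ x₃ y₁ y₂ y₃ : H) :
    A2 k H ((x₁ ⊗ₜ (x₂ ⊗ₜ x₃)) ⊗ₜ (y₁ ⊗ₜ (y₂ ⊗ₜ y₃))) =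
      (x₁ ⊗ₜ y₁) ⊗ₜ ((x₂ ⊗ₜ y₂) ⊗ₜ (x₃ ⊗ₜ y₃)) := by
  simp [A2]

lemma coassoc_inner (w w' : H ⊗[k] H) (p q : H) :
    (TensorProduct.assoc k (H ⊗[k] H) (H ⊗[k] H) (H ⊗[k] H))
      ((tensorTensorTensorComm k H H H H (w ⊗ₜ w')) ⊗ₜ (p ⊗ₜ q)) =
    A1 k H ((w ⊗ₜ p) ⊗ₜ (w' ⊗ₜ q)) := by
  induction w using TensorProduct.induction_on with
  | zero => simp
  | add x y hx hy =>
    simp only [add_tmul, tmul_add, map_add] at hx hy ⊢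
    rw [hx, hy]
  | tmul a₁ a₂ =>
    induction w' using TensorProduct.induction_on with
    | zero => simp
    | add x y hx hy =>
      simp only [add_tmul, tmul_add, map_add] at hx hy ⊢
      rw [hx, hy]
    | tmul b₁ b₂ => simp

lemma coassoc_key1 (u v : H ⊗[k] H) :
    (TensorProduct.assoc k (H ⊗[k] H) (H ⊗[k] H) (H ⊗[k] H))
      ((Coalgebra.comul (R := k) (A := H ⊗[k] H)).rTensor (H ⊗[k] H)
        (tensorTensorTensorComm k H H H H (u ⊗ₜ v))) =
    A1 k H (((Coalgebra.comul (R := k) (A := H)).rTensor H u) ⊗ₜ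
            ((Coalgebra.comul (R := k) (A := H)).rTensor H v)) := by
  induction u using TensorProduct.induction_on with
  | zero => simp
  | add x y hx hy =>
    simp only [add_tmul, tmul_add, map_add] at hx hy ⊢
    rw [hx, hy]
  | tmul a₁ a₂ =>
    induction v using TensorProduct.induction_on with
    | zero => simp
    | add x y hx hy =>
      simp only [add_tmul, tmul_add, map_add] at hx hy ⊢
      rw [hx, hy]
    | tmul b₁ b₂ =>
      simp only [tensorTensorTensorComm_tmul, rTensor_tmul,
        TensorProduct.comul_tmul, AlgebraTensorModule.tensorTensorTensorComm_eq, LinearMap.coe_comp,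
        LinearEquiv.coe_coe, Function.comp_apply, map_tmul]
      exact coassoc_inner k H _ _ _ _

lemma coassoc_key2 (u v : H ⊗[k] H) :
    (Coalgebra.comul (R := k) (A := H ⊗[k] H)).lTensor (H ⊗[k] H)
        (tensorTensorTensorComm k H H H H (u ⊗ₜ v)) =
    A2 k H (((Coalgebra.comul (R := k) (A := H)).lTensor H u) ⊗ₜ
            ((Coalgebra.comul (R := k) (A := H)).lTensor H v)) := by
  induction u using TensorProduct.induction_on with
  | zero => simp
  | add x y hx hy =>
    simp only [add_tmul, tmul_add, map_add] at hx hy ⊢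
    rw [hx, hy]
  | tmul a₁ a₂ =>
    induction v using TensorProduct.induction_on with
    | zero => simp
    | add x y hx hy =>
      simp only [add_tmul, tmul_add, map_add] at hx hy ⊢
      rw [hx, hy]
    | tmul b₁ b₂ =>
      simp [A2, TensorProduct.comul_tmul, AlgebraTensorModule.tensorTensorTensorComm_eq]

lemma coassoc_key3 (u v : H ⊗[k] (H ⊗[k] H)) :
    A1 k H (((TensorProduct.assoc k H H H).symm u) ⊗ₜ
            ((TensorProduct.assoc k H H H).symm v)) = A2 k H (u ⊗ₜ v) := by
  induction u using TensorProduct.induction_on with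
  | zero => simp
  | add x y hx hy => simp only [map_add, add_tmul] at hx hy ⊢; rw [hx, hy]
  | tmul x w =>
    induction v using TensorProduct.induction_on with
    | zero => simp
    | add x' y' hx hy => simp only [map_add, tmul_add] at hx hy ⊢; rw [hx, hy]
    | tmul x' w' =>
      induction w using TensorProduct.induction_on with
      | zero => simp
      | add p q hp hq =>
        simp only [map_add, tmul_add, add_tmul] at hp hq ⊢; rw [hp, hq]
      | tmul y z =>
        induction w' using TensorProduct.induction_on with
        | zero => simp
        | add p q hp hq =>
          simp only [map_add, tmul_add, add_tmul] at hp hq ⊢; rw [hp, hq]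
        | tmul y' z' => simp

def ThetaR : ((k ⊗[k] H) ⊗[k] (k ⊗[k] H)) →ₗ[k] (k ⊗[k] (H ⊗[k] H)) :=
  ((LinearMap.mul' k k).rTensor (H ⊗[k] H)) ∘ₗ
    (tensorTensorTensorComm k k H k H).toLinearMap

def ThetaL : ((H ⊗[k] k) ⊗[k] (H ⊗[k] k)) →ₗ[k] ((H ⊗[k] H) ⊗[k] k) :=
  ((LinearMap.mul' k k).lTensor (H ⊗[k] H)) ∘ₗ
    (tensorTensorTensorComm k H k H k).toLinearMap

lemma counit_key1 (u v : H ⊗[k] H) :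
    (Coalgebra.counit (R := k) (A := H ⊗[k] H)).rTensor (H ⊗[k] H)
        (tensorTensorTensorComm k H H H H (u ⊗ₜ v)) =
    ThetaR k H (((Coalgebra.counit (R := k) (A := H)).rTensor H u) ⊗ₜ
                ((Coalgebra.counit (R := k) (A := H)).rTensor H v)) := by
  induction u using TensorProduct.induction_on with
  | zero => simp
  | add x y hx hy =>
    simp only [add_tmul, tmul_add, map_add] at hx hy ⊢
    rw [hx, hy]
  | tmul a₁ a₂ =>
    induction v using TensorProduct.induction_on with
    | zero => simp
    | add x y hx hy =>
      simp only [add_tmul, tmul_add, map_add] at hx hy ⊢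
      rw [hx, hy]
    | tmul b₁ b₂ =>
      simp [ThetaR, TensorProduct.counit_tmul, mul_comm]

lemma counit_key2 (u v : H ⊗[k] H) :
    (Coalgebra.counit (R := k) (A := H ⊗[k] H)).lTensor (H ⊗[k] H)
        (tensorTensorTensorComm k H H H H (u ⊗ₜ v)) =
    ThetaL k H (((Coalgebra.counit (R := k) (A := H)).lTensor H u) ⊗ₜ
                ((Coalgebra.counit (R := k) (A := H)).lTensor H v)) := by
  induction u using TensorProduct.induction_on with
  | zero => simp
  | add x y hx hy =>
    simp only [add_tmul, tmul_add, map_add] at hx hy ⊢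
    rw [hx, hy]
  | tmul a₁ a₂ =>
    induction v using TensorProduct.induction_on with
    | zero => simp
    | add x y hx hy =>
      simp only [add_tmul, tmul_add, map_add] at hx hy ⊢
      rw [hx, hy]
    | tmul b₁ b₂ =>
      simp [ThetaL, TensorProduct.counit_tmul, mul_comm]

instance instCoalgebraHH : Coalgebra k (H ⊗[k] H) :=
  { (inferInstance : CoalgebraStruct k (H ⊗[k] H)) with
    coassoc := by
      apply TensorProduct.ext'
      intro a b
      have hc : Coalgebra.comul (R := k) (a ⊗ₜ[k] b) =
          tensorTensorTensorComm k H H H H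
            ((Coalgebra.comul (R := k) a) ⊗ₜ (Coalgebra.comul (R := k) b)) := by
        simp [TensorProduct.comul_tmul, AlgebraTensorModule.tensorTensorTensorComm_eq]
      simp only [LinearMap.coe_comp, LinearEquiv.coe_coe, Function.comp_apply, hc]
      rw [coassoc_key1, coassoc_key2, ← Coalgebra.coassoc_symm_apply (R := k) a,
        ← Coalgebra.coassoc_symm_apply (R := k) b, coassoc_key3]
    rTensor_counit_comp_comul := by
      apply TensorProduct.ext'
      intro a b
      have hc : Coalgebra.comul (R := k) (a ⊗ₜ[k] b) =
          tensorTensorTensorComm k H H H H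
            ((Coalgebra.comul (R := k) a) ⊗ₜ (Coalgebra.comul (R := k) b)) := by
        simp [TensorProduct.comul_tmul, AlgebraTensorModule.tensorTensorTensorComm_eq]
      simp only [LinearMap.coe_comp, Function.comp_apply, hc]
      rw [counit_key1, Coalgebra.rTensor_counit_comul (R := k) a,
        Coalgebra.rTensor_counit_comul (R := k) b]
      simp [ThetaR]
    lTensor_counit_comp_comul := by
      apply TensorProduct.ext'
      intro a b
      have hc : Coalgebra.comul (R := k) (a ⊗ₜ[k] b) =
          tensorTensorTensorComm k H H H H
            ((Coalgebra.comul (R := k) a) ⊗ₜ (Coalgebra.comul (R := k) b)) := by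
        simp [TensorProduct.comul_tmul, AlgebraTensorModule.tensorTensorTensorComm_eq]
      simp only [LinearMap.coe_comp, Function.comp_apply, hc]
      rw [counit_key2, Coalgebra.lTensor_counit_comul (R := k) a,
        Coalgebra.lTensor_counit_comul (R := k) b]
      simp [ThetaL] }

end RMx

namespace RMx

open Coalgebra HopfAlgebra LinearMap

/-! ### Convolution -/

section Conv

variable {C : Type*} [AddCommGroup C] [Module k C] [Coalgebra k C]

/-- Convolution product on `Hom_k(C, H)`. -/
def conv (f g : C →ₗ[k] H) : C →ₗ[k] H :=
  LinearMap.mul' k H ∘ₗ TensorProduct.map f g ∘ₗ Coalgebra.comul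

lemma conv_repr (f g : C →ₗ[k] H) (c : C) {ι : Type*} (r : Coalgebra.Repr k c ι) :
    conv k H f g c = ∑ i ∈ r.index, f (r.left i) * g (r.right i) := by
  simp [conv, ← r.eq, map_sum]

/-- The convolution unit. -/
def convUnit : C →ₗ[k] H := (Algebra.linearMap k H) ∘ₗ Coalgebra.counit

lemma conv_unit_left (f : C →ₗ[k] H) : conv k H (convUnit k H) f = f := by
  ext c
  rw [conv_repr k H _ _ c (ℛ k c)]
  have h : (∑ i ∈ (ℛ k c).index,
      Coalgebra.counit (R := k) ((ℛ k c).left i) ⊗ₜ[k] f ((ℛ k c).right i)) = 1 ⊗ₜ[k] f c :=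
    Coalgebra.sum_counit_tmul_map_eq (R := k) f c
  have h2 := congrArg (TensorProduct.lid k H) h
  simp only [map_sum, TensorProduct.lid_tmul, one_smul] at h2
  rw [← h2]
  refine Finset.sum_congr rfl fun i _ => ?_
  simp [convUnit, Algebra.smul_def]

lemma conv_unit_right (f : C →ₗ[k] H) : conv k H f (convUnit k H) = f := by
  ext c
  rw [conv_repr k H _ _ c (ℛ k c)]
  have h : (∑ i ∈ (ℛ k c).index,
      f ((ℛ k c).left i) ⊗ₜ[k] Coalgebra.counit (R := k) ((ℛ k c).right i)) = f c ⊗ₜ[k] 1 :=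
    Coalgebra.sum_map_tmul_counit_eq (R := k) f c
  have h2 := congrArg (TensorProduct.rid k H) h
  simp only [map_sum, TensorProduct.rid_tmul, one_smul] at h2
  rw [← h2]
  refine Finset.sum_congr rfl fun i _ => ?_
  rw [convUnit]
  simp only [LinearMap.coe_comp, Function.comp_apply, Algebra.linearMap_apply]
  rw [← Algebra.commutes, ← Algebra.smul_def]

lemma conv_assoc (f g h : C →ₗ[k] H) :
    conv k H (conv k H f g) h = conv k H f (conv k H g h) := by
  ext c
  set r := ℛ k c with hr
  set r₁ : ∀ i : r.ι, Coalgebra.Repr k (r.left i) (C × C) := fun i => ℛ k (r.left i) with hr₁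
  set r₂ : ∀ i : r.ι, Coalgebra.Repr k (r.right i) (C × C) := fun i => ℛ k (r.right i) with hr₂
  have key := Coalgebra.sum_map_tmul_tmul_eq (R := k) f g h c (repr := r)
    (a₁ := r₁) (a₂ := r₂)
  apply_fun (LinearMap.mul' k H ∘ₗ (LinearMap.mul' k H).lTensor H) at key
  simp only [map_sum, LinearMap.coe_comp, Function.comp_apply, LinearMap.lTensor_tmul,
    LinearMap.mul'_apply] at key
  rw [conv_repr k H _ _ c r, conv_repr k H _ _ c r]
  calc ∑ i ∈ r.index, conv k H f g (r.left i) * h (r.right i)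
      = ∑ i ∈ r.index, ∑ j ∈ (r₁ i).index,
          f ((r₁ i).left j) * ((g ((r₁ i).right j)) * h (r.right i)) := by
        refine Finset.sum_congr rfl fun i _ => ?_
        rw [conv_repr k H _ _ _ (r₁ i), Finset.sum_mul]
        simp [mul_assoc]
    _ = ∑ i ∈ r.index, ∑ j ∈ (r₂ i).index,
          f (r.left i) * (g ((r₂ i).left j) * h ((r₂ i).right j)) := key.symm
    _ = ∑ i ∈ r.index, f (r.left i) * conv k H g h (r.right i) := by
        refine Finset.sum_congr rfl fun i _ => ?_
        rw [conv_repr k H _ _ _ (r₂ i), Finset.mul_sum]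

end Conv

end RMx

namespace RMx

open Coalgebra HopfAlgebra LinearMap

/-! ### The antipode is an anti-homomorphism -/

lemma antipode_one : antipode (R := k) (A := H) 1 = 1 := by
  have h := mul_antipode_rTensor_comul_apply (R := k) (a := (1 : H))
  rw [Bialgebra.comul_one, Algebra.TensorProduct.one_def] at h
  simpa using h

lemma comulHH (a b : H) :
    Coalgebra.comul (R := k) (a ⊗ₜ[k] b) =
      tensorTensorTensorComm k H H H H
        ((Coalgebra.comul (R := k) a) ⊗ₜ (Coalgebra.comul (R := k) b)) := rfl

lemma counitHH (a b : H) :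
    Coalgebra.counit (R := k) (a ⊗ₜ[k] b) =
      Coalgebra.counit (R := k) a * Coalgebra.counit (R := k) b := by
  rw [TensorProduct.counit_tmul, smul_eq_mul, mul_comm]

/-- `S ∘ m`. -/
def Fm : H ⊗[k] H →ₗ[k] H := antipode (R := k) ∘ₗ LinearMap.mul' k H

/-- `m ∘ (S ⊗ S) ∘ τ`. -/
def Gm : H ⊗[k] H →ₗ[k] H :=
  LinearMap.mul' k H ∘ₗ TensorProduct.map (antipode (R := k)) (antipode (R := k)) ∘ₗ tau k H

lemma L1 (u v : H ⊗[k] H) :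
    LinearMap.mul' k H (TensorProduct.map (Fm k H) (LinearMap.mul' k H)
        (tensorTensorTensorComm k H H H H (u ⊗ₜ v))) =
    LinearMap.mul' k H ((antipode (R := k)).rTensor H (u * v)) := by
  induction u using TensorProduct.induction_on with
  | zero => simp
  | add x y hx hy =>
    simp only [add_tmul, tmul_add, map_add, add_mul] at hx hy ⊢
    rw [hx, hy]
  | tmul a₁ a₂ =>
    induction v using TensorProduct.induction_on with
    | zero => simp
    | add x y hx hy =>
      simp only [add_tmul, tmul_add, map_add, mul_add] at hx hy ⊢
      rw [hx, hy]
    | tmul b₁ b₂ => simp [Fm, Algebra.TensorProduct.tmul_mul_tmul]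

lemma lem1 : conv k H (Fm k H) (LinearMap.mul' k H) = convUnit k H := by
  apply TensorProduct.ext'
  intro a b
  rw [conv]
  simp only [LinearMap.coe_comp, Function.comp_apply]
  rw [comulHH, L1, ← Bialgebra.comul_mul, mul_antipode_rTensor_comul_apply,
    Bialgebra.counit_mul]
  rw [convUnit]
  simp only [LinearMap.coe_comp, Function.comp_apply, Algebra.linearMap_apply]
  rw [counitHH]

lemma L2a (p q : H) (v : H ⊗[k] H) :
    LinearMap.mul' k H (TensorProduct.map (LinearMap.mul' k H) (Gm k H)
        (tensorTensorTensorComm k H H H H ((p ⊗ₜ q) ⊗ₜ v))) =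
    p * (LinearMap.mul' k H ((antipode (R := k)).lTensor H v)) * antipode (R := k) q := by
  induction v using TensorProduct.induction_on with
  | zero => simp
  | add x y hx hy =>
    simp only [tmul_add, map_add, mul_add, add_mul] at hx hy ⊢
    rw [hx, hy]
  | tmul b₁ b₂ => simp [Gm, mul_assoc]

lemma L2b (u : H ⊗[k] H) (b : H) :
    LinearMap.mul' k H (TensorProduct.map (LinearMap.mul' k H) (Gm k H)
        (tensorTensorTensorComm k H H H H (u ⊗ₜ Coalgebra.comul (R := k) b))) =
    Coalgebra.counit (R := k) b • LinearMap.mul' k H ((antipode (R := k)).lTensor H u) := by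
  induction u using TensorProduct.induction_on with
  | zero => simp
  | add x y hx hy =>
    simp only [add_tmul, map_add, smul_add] at hx hy ⊢
    rw [hx, hy]
  | tmul p q =>
    rw [L2a, mul_antipode_lTensor_comul_apply, ← Algebra.commutes, mul_assoc,
      ← Algebra.smul_def]
    simp

lemma lem2 : conv k H (LinearMap.mul' k H) (Gm k H) = convUnit k H := by
  apply TensorProduct.ext'
  intro a b
  rw [conv]
  simp only [LinearMap.coe_comp, Function.comp_apply]
  rw [comulHH, L2b, mul_antipode_lTensor_comul_apply]
  rw [convUnit]
  simp only [LinearMap.coe_comp, Function.comp_apply, Algebra.linearMap_apply]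
  rw [counitHH, Algebra.smul_def, ← map_mul, mul_comm]

lemma antipode_mul (a b : H) :
    antipode (R := k) (a * b) = antipode (R := k) b * antipode (R := k) a := by
  have hFG : Fm k H = Gm k H := by
    calc Fm k H = conv k H (Fm k H) (convUnit k H) := (conv_unit_right k H _).symm
      _ = conv k H (Fm k H) (conv k H (LinearMap.mul' k H) (Gm k H)) := by rw [lem2]
      _ = conv k H (conv k H (Fm k H) (LinearMap.mul' k H)) (Gm k H) :=
          (conv_assoc k H _ _ _).symm
      _ = conv k H (convUnit k H) (Gm k H) := by rw [lem1]
      _ = Gm k H := conv_unit_left k H _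
  have := congrArg (fun f : H ⊗[k] H →ₗ[k] H => f (a ⊗ₜ[k] b)) hFG
  simpa [Fm, Gm] using this

lemma antipode_mul'' (v : H ⊗[k] H) :
    antipode (R := k) (LinearMap.mul' k H v) =
      LinearMap.mul' k H (TensorProduct.map (antipode (R := k)) (antipode (R := k))
        (tau k H v)) := by
  induction v using TensorProduct.induction_on with
  | zero => simp
  | add x y hx hy => simp only [map_add]; rw [hx, hy]
  | tmul a b => simp [antipode_mul]

end RMx

namespace RMx

open Coalgebra HopfAlgebra LinearMap

/-! ### The generic claim: `u x = T (T x) u` -/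

/-- `φ_T(c ⊗ d) = T d * c`. -/
def phiT (T : H →ₗ[k] H) : H ⊗[k] H →ₗ[k] H :=
  LinearMap.mul' k H ∘ₗ TensorProduct.map T LinearMap.id ∘ₗ tau k H

@[simp] lemma phiT_tmul (T : H →ₗ[k] H) (c d : H) :
    phiT k H T (c ⊗ₜ[k] d) = T d * c := by
  simp [phiT]

/-- `Λ(c ⊗ d) = T d * u * c` where `u = φ_T ρ`. -/
def LamT (T : H →ₗ[k] H) (ρ : H ⊗[k] H) : H ⊗[k] H →ₗ[k] H :=
  LinearMap.mul' k H ∘ₗ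
    TensorProduct.map ((LinearMap.mulRight k (phiT k H T ρ)) ∘ₗ T) LinearMap.id ∘ₗ tau k H

@[simp] lemma LamT_tmul (T : H →ₗ[k] H) (ρ : H ⊗[k] H) (c d : H) :
    LamT k H T ρ (c ⊗ₜ[k] d) = T d * phiT k H T ρ * c := by
  simp [LamT]

lemma lemE (T : H →ₗ[k] H) (hTm : ∀ a b : H, T (a * b) = T b * T a)
    (w : H ⊗[k] H) (a b : H) :
    phiT k H T (w * (a ⊗ₜ[k] b)) = T b * phiT k H T w * a := by
  induction w using TensorProduct.induction_on with
  | zero => simp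
  | add x y hx hy =>
    simp only [add_mul, map_add, mul_add] at hx hy ⊢
    rw [hx, hy]
  | tmul c d =>
    rw [Algebra.TensorProduct.tmul_mul_tmul]
    simp [hTm, mul_assoc]

lemma lemB (T : H →ₗ[k] H) (ρ : H ⊗[k] H) (hTm : ∀ a b : H, T (a * b) = T b * T a)
    (w : H ⊗[k] H) :
    phiT k H T (ρ * w) = LamT k H T ρ w := by
  induction w using TensorProduct.induction_on with
  | zero => simp
  | add x y hx hy =>
    simp only [mul_add, map_add] at hx hy ⊢
    rw [hx, hy]
  | tmul c d => rw [lemE k H T hTm, LamT_tmul]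

lemma lemD (T : H →ₗ[k] H) (δ : H →ₗ[k] H ⊗[k] H)
    (hTm : ∀ a b : H, T (a * b) = T b * T a)
    (hanti1 : ∀ x : H, LinearMap.mul' k H (T.rTensor H (δ x)) =
      algebraMap k H (Coalgebra.counit (R := k) x))
    (y : H) (r : H ⊗[k] H) :
    phiT k H T ((tau k H (δ y)) * r) = Coalgebra.counit (R := k) y • phiT k H T r := by
  have h0 : phiT k H T (tau k H (δ y)) = algebraMap k H (Coalgebra.counit (R := k) y) := by
    rw [phiT]
    simp only [LinearMap.coe_comp, Function.comp_apply]
    rw [tau_tau]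
    exact hanti1 y
  induction r using TensorProduct.induction_on with
  | zero => simp
  | add x y hx hy =>
    simp only [mul_add, map_add, smul_add] at hx hy ⊢
    rw [hx, hy]
  | tmul a b =>
    rw [lemE k H T hTm, h0, ← Algebra.commutes, mul_assoc, ← Algebra.smul_def, phiT_tmul]

lemma key1 (T : H →ₗ[k] H) (δ : H →ₗ[k] H ⊗[k] H) (ρ : H ⊗[k] H)
    (hTm : ∀ a b : H, T (a * b) = T b * T a)
    (hanti1 : ∀ x : H, LinearMap.mul' k H (T.rTensor H (δ x)) =
      algebraMap k H (Coalgebra.counit (R := k) x))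
    (hint : ∀ y : H, ρ * δ y = (tau k H (δ y)) * ρ) (y : H) :
    LamT k H T ρ (δ y) = Coalgebra.counit (R := k) y • phiT k H T ρ := by
  rw [← lemB k H T ρ hTm (δ y), hint y, lemD k H T δ hTm hanti1]

lemma claimA (T : H →ₗ[k] H) (δ : H →ₗ[k] H ⊗[k] H) (ρ : H ⊗[k] H)
    (hT1 : T 1 = 1)
    (hTm : ∀ a b : H, T (a * b) = T b * T a)
    (hco : ∀ x : H, TensorProduct.assoc k H H H (δ.rTensor H (δ x)) = δ.lTensor H (δ x))
    (hcu1 : ∀ x : H, (Coalgebra.counit (R := k) (A := H)).rTensor H (δ x) = (1 : k) ⊗ₜ x)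
    (hcu2 : ∀ x : H, (Coalgebra.counit (R := k) (A := H)).lTensor H (δ x) = x ⊗ₜ (1 : k))
    (hanti1 : ∀ x : H, LinearMap.mul' k H (T.rTensor H (δ x)) =
      algebraMap k H (Coalgebra.counit (R := k) x))
    (hanti2 : ∀ x : H, LinearMap.mul' k H (T.lTensor H (δ x)) =
      algebraMap k H (Coalgebra.counit (R := k) x))
    (hint : ∀ y : H, ρ * δ y = (tau k H (δ y)) * ρ)
    (x : H) :
    phiT k H T ρ * x = T (T x) * phiT k H T ρ := by
  set u := phiT k H T ρ with hu
  have hKey : ∀ y : H, LamT k H T ρ (δ y) = Coalgebra.counit (R := k) y • u :=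
    key1 k H T δ ρ hTm hanti1 hint
  -- evaluation (b)
  have hb : ∀ w : H ⊗[k] H,
      LinearMap.mul' k H (TensorProduct.map (T ∘ₗ T) (LamT k H T ρ ∘ₗ δ) (tau k H w)) =
      T (T (TensorProduct.lid k H ((Coalgebra.counit (R := k) (A := H)).rTensor H w))) * u := by
    intro w
    induction w using TensorProduct.induction_on with
    | zero => simp
    | add x y hx hy =>
      simp only [map_add, add_mul] at hx hy ⊢
      rw [hx, hy]
    | tmul y z =>
      simp only [tau_tmul, TensorProduct.map_tmul, LinearMap.coe_comp, Function.comp_apply,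
        LinearMap.mul'_apply, LinearMap.rTensor_tmul, TensorProduct.lid_tmul]
      rw [hKey y]
      simp [mul_smul_comm, smul_mul_assoc]
  have hb' :
      LinearMap.mul' k H (TensorProduct.map (T ∘ₗ T) (LamT k H T ρ ∘ₗ δ) (tau k H (δ x))) =
      T (T x) * u := by
    rw [hb (δ x), hcu1 x]
    simp
  -- evaluation (a)
  set G1 : (H ⊗[k] H) ⊗[k] H →ₗ[k] H :=
    LinearMap.mul' k H ∘ₗ TensorProduct.map (T ∘ₗ T) (LamT k H T ρ) ∘ₗ
      (TensorProduct.comm k (H ⊗[k] H) H).toLinearMap with hG1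
  have ha1 : ∀ w : H ⊗[k] H,
      LinearMap.mul' k H (TensorProduct.map (T ∘ₗ T) (LamT k H T ρ ∘ₗ δ) (tau k H w)) =
      G1 (δ.rTensor H w) := by
    intro w
    induction w using TensorProduct.induction_on with
    | zero => simp
    | add x y hx hy =>
      simp only [map_add] at hx hy ⊢
      rw [hx, hy]
    | tmul y z => simp [hG1]
  have ha3 : ∀ (p : H) (v : H ⊗[k] H),
      G1 ((TensorProduct.assoc k H H H).symm (p ⊗ₜ v)) =
      (LinearMap.mul' k H (tau k H (TensorProduct.map T (T ∘ₗ T) v))) * (u * p) := by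
    intro p v
    induction v using TensorProduct.induction_on with
    | zero => simp
    | add x y hx hy =>
      simp only [tmul_add, map_add, add_mul] at hx hy ⊢
      rw [hx, hy]
    | tmul q₁ q₂ =>
      simp [hG1, mul_assoc, hu]
  have ha4 : ∀ v : H ⊗[k] H,
      LinearMap.mul' k H (tau k H (TensorProduct.map T (T ∘ₗ T) v)) =
      T (LinearMap.mul' k H (T.lTensor H v)) := by
    intro v
    induction v using TensorProduct.induction_on with
    | zero => simp
    | add x y hx hy =>
      simp only [map_add] at hx hy ⊢
      rw [hx, hy]
    | tmul q₁ q₂ => simp [hTm]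
  have ha5 : ∀ w : H ⊗[k] H,
      G1 ((TensorProduct.assoc k H H H).symm (δ.lTensor H w)) =
      u * (TensorProduct.rid k H ((Coalgebra.counit (R := k) (A := H)).lTensor H w)) := by
    intro w
    induction w using TensorProduct.induction_on with
    | zero => simp
    | add x y hx hy =>
      simp only [map_add, mul_add] at hx hy ⊢
      rw [hx, hy]
    | tmul p q =>
      simp only [LinearMap.lTensor_tmul]
      rw [ha3 p (δ q), ha4 (δ q), hanti2 q]
      have hT1' : T (algebraMap k H (Coalgebra.counit (R := k) q)) =
          algebraMap k H (Coalgebra.counit (R := k) q) := by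
        rw [Algebra.algebraMap_eq_smul_one, map_smul, hT1]
      rw [hT1', ← Algebra.smul_def]
      simp [mul_smul_comm]
  calc u * x
      = u * (TensorProduct.rid k H ((Coalgebra.counit (R := k) (A := H)).lTensor H (δ x))) := by
        rw [hcu2 x]; simp
    _ = G1 ((TensorProduct.assoc k H H H).symm (δ.lTensor H (δ x))) := (ha5 (δ x)).symm
    _ = G1 (δ.rTensor H (δ x)) := by rw [← hco x, LinearEquiv.symm_apply_apply]
    _ = T (T x) * u := by rw [← ha1 (δ x), hb']

end RMx

namespace RMx

open Coalgebra HopfAlgebra LinearMap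

section Inst2

variable (Sinv : H →ₗ[k] H)
  (hS1 : ∀ a : H, Sinv (HopfAlgebra.antipode (R := k) a) = a)
  (hS2 : ∀ a : H, HopfAlgebra.antipode (R := k) (Sinv a) = a)

include hS1 hS2

lemma Sinv_one : Sinv 1 = 1 := by
  have h := hS1 1
  rwa [antipode_one k H] at h

lemma Sinv_mul (a b : H) : Sinv (a * b) = Sinv b * Sinv a := by
  have h : a * b = antipode (R := k) (Sinv b * Sinv a) := by
    rw [antipode_mul k H, hS2, hS2]
  rw [h, hS1]

lemma antipode_inj : Function.Injective (antipode (R := k) (A := H)) := by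
  intro a b h
  have := congrArg Sinv h
  rwa [hS1, hS1] at this

end Inst2

/-! ### Facts about the opposite comultiplication `δᵀ = τ ∘ Δ`. -/

lemma hcoT (x : H) :
    TensorProduct.assoc k H H H
      (((tau k H ∘ₗ Coalgebra.comul (R := k))).rTensor H
        ((tau k H ∘ₗ Coalgebra.comul (R := k)) x)) =
    ((tau k H ∘ₗ Coalgebra.comul (R := k))).lTensor H
      ((tau k H ∘ₗ Coalgebra.comul (R := k)) x) := by
  set δT : H →ₗ[k] H ⊗[k] H := tau k H ∘ₗ Coalgebra.comul (R := k) with hδT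
  set E1 : H ⊗[k] (H ⊗[k] H) →ₗ[k] (H ⊗[k] H) ⊗[k] H :=
    (tau k H).rTensor H ∘ₗ (TensorProduct.comm k H (H ⊗[k] H)).toLinearMap with hE1
  set E2 : (H ⊗[k] H) ⊗[k] H →ₗ[k] H ⊗[k] (H ⊗[k] H) :=
    (tau k H).lTensor H ∘ₗ (TensorProduct.comm k (H ⊗[k] H) H).toLinearMap with hE2
  have e1 : ∀ w : H ⊗[k] H,
      δT.rTensor H (tau k H w) = E1 ((Coalgebra.comul (R := k)).lTensor H w) := by
    intro w
    induction w using TensorProduct.induction_on with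
    | zero => simp
    | add x y hx hy => simp only [map_add] at hx hy ⊢; rw [hx, hy]
    | tmul p q => simp [hδT, hE1]
  have e2 : ∀ w : H ⊗[k] H,
      δT.lTensor H (tau k H w) = E2 ((Coalgebra.comul (R := k)).rTensor H w) := by
    intro w
    induction w using TensorProduct.induction_on with
    | zero => simp
    | add x y hx hy => simp only [map_add] at hx hy ⊢; rw [hx, hy]
    | tmul p q => simp [hδT, hE2]
  have e3 : ∀ U : (H ⊗[k] H) ⊗[k] H,
      TensorProduct.assoc k H H H (E1 (TensorProduct.assoc k H H H U)) = E2 U := by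
    intro U
    induction U using TensorProduct.induction_on with
    | zero => simp
    | add x y hx hy => simp only [map_add] at hx hy ⊢; rw [hx, hy]
    | tmul w z =>
      induction w using TensorProduct.induction_on with
      | zero => simp
      | add p q hp hq => simp only [map_add, add_tmul] at hp hq ⊢; rw [hp, hq]
      | tmul p q => simp [hE1, hE2]
  have hstep : δT x = tau k H (Coalgebra.comul (R := k) x) := rfl
  rw [hstep, e1, e2, ← Coalgebra.coassoc_apply (R := k) x, e3]

lemma hcu1T (x : H) :
    (Coalgebra.counit (R := k) (A := H)).rTensor H
      ((tau k H ∘ₗ Coalgebra.comul (R := k)) x) = (1 : k) ⊗ₜ x := by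
  have e : ∀ w : H ⊗[k] H,
      (Coalgebra.counit (R := k) (A := H)).rTensor H (tau k H w) =
        TensorProduct.comm k H k ((Coalgebra.counit (R := k) (A := H)).lTensor H w) := by
    intro w
    induction w using TensorProduct.induction_on with
    | zero => simp
    | add x y hx hy => simp only [map_add] at hx hy ⊢; rw [hx, hy]
    | tmul p q => simp
  have hstep : (tau k H ∘ₗ Coalgebra.comul (R := k)) x =
      tau k H (Coalgebra.comul (R := k) x) := rfl
  rw [hstep, e, Coalgebra.lTensor_counit_comul (R := k) x]
  simp

lemma hcu2T (x : H) :
    (Coalgebra.counit (R := k) (A := H)).lTensor H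
      ((tau k H ∘ₗ Coalgebra.comul (R := k)) x) = x ⊗ₜ (1 : k) := by
  have e : ∀ w : H ⊗[k] H,
      (Coalgebra.counit (R := k) (A := H)).lTensor H (tau k H w) =
        TensorProduct.comm k k H ((Coalgebra.counit (R := k) (A := H)).rTensor H w) := by
    intro w
    induction w using TensorProduct.induction_on with
    | zero => simp
    | add x y hx hy => simp only [map_add] at hx hy ⊢; rw [hx, hy]
    | tmul p q => simp
  have hstep : (tau k H ∘ₗ Coalgebra.comul (R := k)) x =
      tau k H (Coalgebra.comul (R := k) x) := rfl
  rw [hstep, e, Coalgebra.rTensor_counit_comul (R := k) x]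
  simp

section anti

variable (Sinv : H →ₗ[k] H)
  (hS1 : ∀ a : H, Sinv (HopfAlgebra.antipode (R := k) a) = a)
  (hS2 : ∀ a : H, HopfAlgebra.antipode (R := k) (Sinv a) = a)

include hS1 hS2

lemma hanti1T (x : H) :
    LinearMap.mul' k H (Sinv.rTensor H ((tau k H ∘ₗ Coalgebra.comul (R := k)) x)) =
      algebraMap k H (Coalgebra.counit (R := k) x) := by
  apply antipode_inj k H Sinv hS1 hS2
  have e : ∀ w : H ⊗[k] H,
      antipode (R := k) (LinearMap.mul' k H (Sinv.rTensor H (tau k H w))) =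
        LinearMap.mul' k H ((antipode (R := k) (A := H)).rTensor H w) := by
    intro w
    induction w using TensorProduct.induction_on with
    | zero => simp
    | add x y hx hy => simp only [map_add] at hx hy ⊢; rw [hx, hy]
    | tmul p q => simp [antipode_mul k H, hS2]
  have hstep : (tau k H ∘ₗ Coalgebra.comul (R := k)) x =
      tau k H (Coalgebra.comul (R := k) x) := rfl
  rw [hstep, e, mul_antipode_rTensor_comul_apply]
  rw [Algebra.algebraMap_eq_smul_one, map_smul, antipode_one k H]

lemma hanti2T (x : H) :
    LinearMap.mul' k H (Sinv.lTensor H ((tau k H ∘ₗ Coalgebra.comul (R := k)) x)) =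
      algebraMap k H (Coalgebra.counit (R := k) x) := by
  apply antipode_inj k H Sinv hS1 hS2
  have e : ∀ w : H ⊗[k] H,
      antipode (R := k) (LinearMap.mul' k H (Sinv.lTensor H (tau k H w))) =
        LinearMap.mul' k H ((antipode (R := k) (A := H)).lTensor H w) := by
    intro w
    induction w using TensorProduct.induction_on with
    | zero => simp
    | add x y hx hy => simp only [map_add] at hx hy ⊢; rw [hx, hy]
    | tmul p q => simp [antipode_mul k H, hS2]
  have hstep : (tau k H ∘ₗ Coalgebra.comul (R := k)) x =
      tau k H (Coalgebra.comul (R := k) x) := rfl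
  rw [hstep, e, mul_antipode_lTensor_comul_apply]
  rw [Algebra.algebraMap_eq_smul_one, map_smul, antipode_one k H]

end anti

end RMx

namespace RMx

open Coalgebra HopfAlgebra LinearMap

section Final

variable (R R' : H ⊗[k] H)
  (Sinv : H →ₗ[k] H)
  (hS1 : ∀ a : H, Sinv (HopfAlgebra.antipode (R := k) a) = a)
  (hS2 : ∀ a : H, HopfAlgebra.antipode (R := k) (Sinv a) = a)

lemma main_one (hRR' : R * R' = 1) (hR'R : R' * R = 1)
    (hint : ∀ y : H, R * Coalgebra.comul (R := k) y =
      tau k H (Coalgebra.comul (R := k) y) * R) :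
    (∀ a : H, Sinv (HopfAlgebra.antipode (R := k) a) = a) →
    (∀ a : H, HopfAlgebra.antipode (R := k) (Sinv a) = a) →
    phiT k H (HopfAlgebra.antipode (R := k)) R * phiT k H Sinv R' = 1 ∧
    phiT k H Sinv R' * phiT k H (HopfAlgebra.antipode (R := k)) R = 1 := by
  intro hS1 hS2
  set u := phiT k H (HopfAlgebra.antipode (R := k)) R with hu
  set v := phiT k H Sinv R' with hv
  -- Claim A, first instantiation
  have cA : ∀ x : H, u * x = antipode (R := k) (antipode (R := k) x) * u :=
    claimA k H (antipode (R := k)) (Coalgebra.comul (R := k)) R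
      (antipode_one k H) (antipode_mul k H)
      (fun x => Coalgebra.coassoc_apply (R := k) x)
      (fun x => Coalgebra.rTensor_counit_comul (R := k) x)
      (fun x => Coalgebra.lTensor_counit_comul (R := k) x)
      (fun x => mul_antipode_rTensor_comul_apply (R := k) x)
      (fun x => mul_antipode_lTensor_comul_apply (R := k) x)
      hint
  -- Claim A, second instantiation
  have hint2 : ∀ y : H, R' * (tau k H ∘ₗ Coalgebra.comul (R := k)) y =
      tau k H ((tau k H ∘ₗ Coalgebra.comul (R := k)) y) * R' := by
    intro y
    have hy := hint y
    have hstep : (tau k H ∘ₗ Coalgebra.comul (R := k)) y =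
        tau k H (Coalgebra.comul (R := k) y) := rfl
    rw [hstep, tau_tau]
    calc R' * tau k H (Coalgebra.comul (R := k) y)
        = R' * tau k H (Coalgebra.comul (R := k) y) * (R * R') := by
          rw [hRR', mul_one]
      _ = R' * (tau k H (Coalgebra.comul (R := k) y) * R) * R' := by
          simp only [mul_assoc]
      _ = R' * (R * Coalgebra.comul (R := k) y) * R' := by rw [hy]
      _ = R' * R * (Coalgebra.comul (R := k) y * R') := by
          simp only [mul_assoc]
      _ = Coalgebra.comul (R := k) y * R' := by rw [hR'R, one_mul]
  have cA' : ∀ x : H, v * x = Sinv (Sinv x) * v :=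
    claimA k H Sinv (tau k H ∘ₗ Coalgebra.comul (R := k)) R'
      (Sinv_one k H Sinv hS1 hS2) (Sinv_mul k H Sinv hS1 hS2)
      (hcoT k H) (hcu1T k H) (hcu2T k H)
      (hanti1T k H Sinv hS1 hS2) (hanti2T k H Sinv hS1 hS2)
      hint2
  constructor
  · -- u * v = 1
    have f1 : ∀ w : H ⊗[k] H,
        u * phiT k H Sinv w = phiT k H (antipode (R := k)) (R * w) := by
      intro w
      induction w using TensorProduct.induction_on with
      | zero => simp
      | add x y hx hy =>
        simp only [map_add, mul_add] at hx hy ⊢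
        rw [hx, hy]
      | tmul c d =>
        rw [phiT_tmul, lemE k H _ (antipode_mul k H) R c d, ← mul_assoc, cA (Sinv d),
          hS2 d, ← hu]
    have h := f1 R'
    rw [hRR', ← hv] at h
    rw [h, Algebra.TensorProduct.one_def, phiT_tmul, antipode_one k H, one_mul]
  · -- v * u = 1
    have f2 : ∀ w : H ⊗[k] H,
        v * phiT k H (antipode (R := k)) w = phiT k H Sinv (R' * w) := by
      intro w
      induction w using TensorProduct.induction_on with
      | zero => simp
      | add x y hx hy =>
        simp only [map_add, mul_add] at hx hy ⊢
        rw [hx, hy]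
      | tmul c d =>
        rw [phiT_tmul, lemE k H Sinv (Sinv_mul k H Sinv hS1 hS2) R' c d, ← mul_assoc,
          cA' (antipode (R := k) d), hS1 d, ← hv]
    have h := f2 R
    rw [hR'R, ← hu] at h
    rw [h, Algebra.TensorProduct.one_def, phiT_tmul, Sinv_one k H Sinv hS1 hS2, one_mul]

end Final

end RMx

/-- The Drinfeld u-operator is invertible, with inverse `m ((S⁻¹ ⊗ id) (τ (R⁻¹)))`. -/
theorem uOp_invertible (R R' : H ⊗[k] H) (hR : IsUniversalRMatrix k H R)
    (hRR' : R * R' = 1) (hR'R : R' * R = 1)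
    (Sinv : H →ₗ[k] H)
    (hS1 : ∀ a : H, Sinv (HopfAlgebra.antipode (R := k) a) = a)
    (hS2 : ∀ a : H, HopfAlgebra.antipode (R := k) (Sinv a) = a) :
    uOp k H R *
        LinearMap.mul' k H (TensorProduct.map Sinv LinearMap.id (tau k H R')) = 1 ∧
    LinearMap.mul' k H (TensorProduct.map Sinv LinearMap.id (tau k H R')) *
        uOp k H R = 1 := by
  have hint : ∀ y : H, R * Coalgebra.comul (R := k) y =
      tau k H (Coalgebra.comul (R := k) y) * R := by
    intro y
    have h := hR.intertwine y
    simp only [DeltaT, LinearMap.comp_apply] at h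
    exact h
  have main := RMx.main_one k H R R' Sinv hRR' hR'R hint hS1 hS2
  have e1 : uOp k H R = RMx.phiT k H (HopfAlgebra.antipode (R := k)) R := rfl
  have e2 : LinearMap.mul' k H (TensorProduct.map Sinv LinearMap.id (tau k H R')) =
      RMx.phiT k H Sinv R' := rfl
  rw [e1, e2]
  exact main
end
end

section
/- Let R be a universal R-matrix for H with Drinfeld u-operator u. Then u is invertible and the square of the antipode is conjugation by u: S²(a) = u·a·u⁻¹ for every a ∈ H. -/
open TensorProduct

noncomputable section

section DrinfeldAux
open TensorProduct LinearMap Coalgebra HopfAlgebra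
variable {k H : Type*} [CommRing k] [Ring H] [HopfAlgebra k H]





theorem ttc_nat {R : Type*} [CommSemiring R]
    {M₁ M₂ M₃ M₄ N₁ N₂ N₃ N₄ : Type*}
    [AddCommMonoid M₁] [AddCommMonoid M₂] [AddCommMonoid M₃] [AddCommMonoid M₄]
    [AddCommMonoid N₁] [AddCommMonoid N₂] [AddCommMonoid N₃] [AddCommMonoid N₄]
    [Module R M₁] [Module R M₂] [Module R M₃] [Module R M₄]
    [Module R N₁] [Module R N₂] [Module R N₃] [Module R N₄]
    (f : M₁ →ₗ[R] N₁) (g : M₂ →ₗ[R] N₂) (h : M₃ →ₗ[R] N₃) (i : M₄ →ₗ[R] N₄) :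
    (tensorTensorTensorComm R N₁ N₂ N₃ N₄).toLinearMap ∘ₗ map (map f g) (map h i)
      = map (map f h) (map g i) ∘ₗ (tensorTensorTensorComm R M₁ M₂ M₃ M₄).toLinearMap := by
  ext m₁ m₂ m₃ m₄
  simp

def D2 : H ⊗[k] H →ₗ[k] (H ⊗[k] H) ⊗[k] (H ⊗[k] H) :=
  (tensorTensorTensorComm k H H H H).toLinearMap ∘ₗ map comul comul

def e2 : H ⊗[k] H →ₗ[k] H :=
  Algebra.linearMap k H ∘ₗ mul' k k ∘ₗ map counit counit

def conv (f g : H ⊗[k] H →ₗ[k] H) : H ⊗[k] H →ₗ[k] H :=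
  mul' k H ∘ₗ map f g ∘ₗ D2

def cL : H ⊗[k] H →ₗ[k] H := (TensorProduct.lid k H).toLinearMap ∘ₗ counit.rTensor H

def cR : H ⊗[k] H →ₗ[k] H := (TensorProduct.rid k H).toLinearMap ∘ₗ counit.lTensor H

theorem cL_comul : (cL ∘ₗ comul : H →ₗ[k] H) = LinearMap.id := by
  apply LinearMap.ext; intro x; simp [cL]

theorem cR_comul : (cR ∘ₗ comul : H →ₗ[k] H) = LinearMap.id := by
  apply LinearMap.ext; intro x; simp [cR]

theorem conv_one_left (f : H ⊗[k] H →ₗ[k] H) : conv (e2 (k := k)) f = f := by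
  have key : (mul' k H ∘ₗ map (e2 (k := k) (H := H)) f) ∘ₗ
      (tensorTensorTensorComm k H H H H).toLinearMap
      = f ∘ₗ map (cL (k := k)) (cL (k := k)) := by
    ext x₁ x₂ y₁ y₂
    simp [e2, cL]
    rw [← smul_tmul']
    simp only [map_smul]
    rw [smul_smul, ← map_mul, ← Algebra.smul_def, mul_comm (counit x₁)]
  rw [conv, D2]
  simp only [← comp_assoc]
  rw [key, comp_assoc, ← map_comp, cL_comul, map_id, comp_id]

theorem conv_one_right (f : H ⊗[k] H →ₗ[k] H) : conv f (e2 (k := k)) = f := by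
  have key : (mul' k H ∘ₗ map f (e2 (k := k) (H := H))) ∘ₗ
      (tensorTensorTensorComm k H H H H).toLinearMap
      = f ∘ₗ map (cR (k := k)) (cR (k := k)) := by
    ext x₁ x₂ y₁ y₂
    simp [e2, cR]
    rw [← smul_tmul']
    simp only [map_smul]
    rw [smul_smul, ← map_mul, ← Algebra.commutes, ← Algebra.smul_def, mul_comm (counit x₂)]
  rw [conv, D2]
  simp only [← comp_assoc]
  rw [key, comp_assoc, ← map_comp, cR_comul, map_id, comp_id]



theorem conv_assoc (f g h : H ⊗[k] H →ₗ[k] H) :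
    conv (conv f g) h = conv f (conv g h) := by
  have E1 : mul' k H ∘ₗ map (conv f g) h ∘ₗ (tensorTensorTensorComm k H H H H).toLinearMap
      = mul' k H ∘ₗ map (mul' k H ∘ₗ map f g) h ∘ₗ
          map (tensorTensorTensorComm k H H H H).toLinearMap LinearMap.id ∘ₗ
          (tensorTensorTensorComm k (H ⊗[k] H) H (H ⊗[k] H) H).toLinearMap ∘ₗ
          map (comul.rTensor H) (comul.rTensor H) := by
    ext x₁ x₂ y₁ y₂
    simp [conv, D2]
  have E2 : mul' k H ∘ₗ map f (conv g h) ∘ₗ (tensorTensorTensorComm k H H H H).toLinearMap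
      = mul' k H ∘ₗ map f (mul' k H ∘ₗ map g h) ∘ₗ
          map LinearMap.id (tensorTensorTensorComm k H H H H).toLinearMap ∘ₗ
          (tensorTensorTensorComm k H (H ⊗[k] H) H (H ⊗[k] H)).toLinearMap ∘ₗ
          map (comul.lTensor H) (comul.lTensor H) := by
    ext x₁ x₂ y₁ y₂
    simp [conv, D2]
  have E3 : mul' k H ∘ₗ map f (mul' k H ∘ₗ map g h) ∘ₗ
          map LinearMap.id (tensorTensorTensorComm k H H H H).toLinearMap ∘ₗ
          (tensorTensorTensorComm k H (H ⊗[k] H) H (H ⊗[k] H)).toLinearMap ∘ₗ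
          map (TensorProduct.assoc k H H H).toLinearMap (TensorProduct.assoc k H H H).toLinearMap
      = mul' k H ∘ₗ map (mul' k H ∘ₗ map f g) h ∘ₗ
          map (tensorTensorTensorComm k H H H H).toLinearMap LinearMap.id ∘ₗ
          (tensorTensorTensorComm k (H ⊗[k] H) H (H ⊗[k] H) H).toLinearMap := by
    ext a₁ a₂ a₃ b₁ b₂ b₃
    simp [mul_assoc]
  apply TensorProduct.ext'
  intro a b
  have l1 : conv (conv f g) h (a ⊗ₜ[k] b)
      = (mul' k H ∘ₗ map (conv f g) h ∘ₗ (tensorTensorTensorComm k H H H H).toLinearMap)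
          (comul a ⊗ₜ[k] comul b) := by
    simp [conv, D2]
  have r1 : conv f (conv g h) (a ⊗ₜ[k] b)
      = (mul' k H ∘ₗ map f (conv g h) ∘ₗ (tensorTensorTensorComm k H H H H).toLinearMap)
          (comul a ⊗ₜ[k] comul b) := by
    simp [conv, D2]
  rw [l1, r1, E1, E2]
  simp only [comp_apply, map_tmul, LinearMap.id_coe, id_eq]
  rw [← Coalgebra.coassoc_apply a, ← Coalgebra.coassoc_apply b]
  have keyfun := LinearMap.congr_fun E3
    ((rTensor H comul) (comul a) ⊗ₜ[k] (rTensor H comul) (comul b))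
  simp only [comp_apply, map_tmul, LinearMap.id_coe, id_eq, LinearEquiv.coe_coe] at keyfun
  exact keyfun.symm

theorem antipode_one' : antipode (R := k) (1 : H) = 1 := by
  have := mul_antipode_rTensor_comul_apply (R := k) (1 : H)
  rwa [Bialgebra.comul_one, Algebra.TensorProduct.one_def, rTensor_tmul, mul'_apply,
    mul_one, Bialgebra.counit_one, RingHom.map_one] at this

theorem convFnu : conv ((antipode k : H →ₗ[k] H) ∘ₗ mul' k H) (mul' k H) = e2 (k := k) := by
  apply TensorProduct.ext'
  intro a b
  have key : ∀ X Y : H ⊗[k] H,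
      (mul' k H) ((map ((antipode k : H →ₗ[k] H) ∘ₗ mul' k H) (mul' k H))
        ((tensorTensorTensorComm k H H H H) (X ⊗ₜ[k] Y)))
      = (mul' k H) ((rTensor H (antipode k : H →ₗ[k] H)) (X * Y)) := by
    intro X Y
    induction X using TensorProduct.induction_on with
    | zero => simp
    | tmul x₁ x₂ =>
      induction Y using TensorProduct.induction_on with
      | zero => simp
      | tmul y₁ y₂ => simp [Algebra.TensorProduct.tmul_mul_tmul]
      | add Y₁ Y₂ h₁ h₂ => simp [mul_add, tmul_add, h₁, h₂]
    | add X₁ X₂ h₁ h₂ => simp [add_mul, add_tmul, h₁, h₂]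
  have : conv ((antipode k : H →ₗ[k] H) ∘ₗ mul' k H) (mul' k H) (a ⊗ₜ[k] b)
      = (mul' k H) ((map ((antipode k : H →ₗ[k] H) ∘ₗ mul' k H) (mul' k H))
        ((tensorTensorTensorComm k H H H H) (comul a ⊗ₜ[k] comul b))) := by
    simp [conv, D2]
  rw [this, key, ← Bialgebra.comul_mul, mul_antipode_rTensor_comul_apply]
  simp [e2]

theorem convnuG :
    conv (mul' k H)
      (mul' k H ∘ₗ map (antipode k : H →ₗ[k] H) (antipode k : H →ₗ[k] H) ∘ₗ
        (TensorProduct.comm k H H).toLinearMap) = e2 (k := k) := by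
  apply TensorProduct.ext'
  intro a b
  have key : ∀ X Y : H ⊗[k] H,
      (mul' k H) ((map (mul' k H)
          (mul' k H ∘ₗ map (antipode k : H →ₗ[k] H) (antipode k : H →ₗ[k] H) ∘ₗ
            (TensorProduct.comm k H H).toLinearMap))
        ((tensorTensorTensorComm k H H H H) (X ⊗ₜ[k] Y)))
      = (mul' k H) ((map LinearMap.id
          (LinearMap.mulLeft k ((mul' k H) ((lTensor H (antipode k : H →ₗ[k] H)) Y)) ∘ₗ
            (antipode k : H →ₗ[k] H))) X) := by
    intro X Y
    induction X using TensorProduct.induction_on with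
    | zero => simp
    | tmul x₁ x₂ =>
      induction Y using TensorProduct.induction_on with
      | zero => simp
      | tmul y₁ y₂ => simp [mul_assoc]
      | add Y₁ Y₂ h₁ h₂ => simp [mul_add, add_mul, tmul_add, add_tmul, h₁, h₂]
    | add X₁ X₂ h₁ h₂ => simp [add_mul, add_tmul, h₁, h₂]
  have l1 : conv (mul' k H)
      (mul' k H ∘ₗ map (antipode k : H →ₗ[k] H) (antipode k : H →ₗ[k] H) ∘ₗ
        (TensorProduct.comm k H H).toLinearMap) (a ⊗ₜ[k] b)
      = (mul' k H) ((map (mul' k H)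
          (mul' k H ∘ₗ map (antipode k : H →ₗ[k] H) (antipode k : H →ₗ[k] H) ∘ₗ
            (TensorProduct.comm k H H).toLinearMap))
        ((tensorTensorTensorComm k H H H H) (comul a ⊗ₜ[k] comul b))) := by
    simp [conv, D2]
  rw [l1, key, mul_antipode_lTensor_comul_apply]
  have scal : ∀ (r : k) (X : H ⊗[k] H),
      (mul' k H) ((map LinearMap.id
          (LinearMap.mulLeft k (algebraMap k H r) ∘ₗ (antipode k : H →ₗ[k] H))) X)
      = r • (mul' k H) ((lTensor H (antipode k : H →ₗ[k] H)) X) := by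
    intro r X
    induction X using TensorProduct.induction_on with
    | zero => simp
    | tmul x y =>
        simp only [map_tmul, LinearMap.id_coe, id_eq, comp_apply, mulLeft_apply, mul'_apply,
          lTensor_tmul, Algebra.smul_def]
        rw [← mul_assoc, ← Algebra.commutes, mul_assoc]
    | add X₁ X₂ h₁ h₂ => simp [h₁, h₂, tmul_add, add_tmul]
  rw [scal, mul_antipode_lTensor_comul_apply, Algebra.smul_def, ← map_mul]
  simp [e2, mul_comm]
theorem antipode_mul' (a b : H) :
    antipode (R := k) (a * b) = antipode (R := k) b * antipode (R := k) a := by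
  have hFG : ((antipode k : H →ₗ[k] H) ∘ₗ mul' k H)
      = mul' k H ∘ₗ map (antipode k : H →ₗ[k] H) (antipode k : H →ₗ[k] H) ∘ₗ
          (TensorProduct.comm k H H).toLinearMap := by
    calc (antipode k : H →ₗ[k] H) ∘ₗ mul' k H
        = conv ((antipode k : H →ₗ[k] H) ∘ₗ mul' k H) (e2 (k := k)) := (conv_one_right _).symm
      _ = conv ((antipode k : H →ₗ[k] H) ∘ₗ mul' k H)
            (conv (mul' k H)
              (mul' k H ∘ₗ map (antipode k : H →ₗ[k] H) (antipode k : H →ₗ[k] H) ∘ₗ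
                (TensorProduct.comm k H H).toLinearMap)) := by rw [convnuG]
      _ = conv (conv ((antipode k : H →ₗ[k] H) ∘ₗ mul' k H) (mul' k H))
            (mul' k H ∘ₗ map (antipode k : H →ₗ[k] H) (antipode k : H →ₗ[k] H) ∘ₗ
              (TensorProduct.comm k H H).toLinearMap) := (conv_assoc _ _ _).symm
      _ = conv (e2 (k := k))
            (mul' k H ∘ₗ map (antipode k : H →ₗ[k] H) (antipode k : H →ₗ[k] H) ∘ₗ
              (TensorProduct.comm k H H).toLinearMap) := by rw [convFnu]
      _ = mul' k H ∘ₗ map (antipode k : H →ₗ[k] H) (antipode k : H →ₗ[k] H) ∘ₗ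
            (TensorProduct.comm k H H).toLinearMap := conv_one_left _
  have := LinearMap.congr_fun hFG (a ⊗ₜ[k] b)
  simpa using this

theorem antipode_algebraMap' (r : k) :
    antipode (R := k) (algebraMap k H r) = algebraMap k H r := by
  rw [Algebra.algebraMap_eq_smul_one, map_smul, antipode_one']

noncomputable def uop : H ⊗[k] H →ₗ[k] H :=
  mul' k H ∘ₗ map (antipode k : H →ₗ[k] H) LinearMap.id ∘ₗ (TensorProduct.comm k H H).toLinearMap

@[simp] theorem uop_tmul (p q : H) : uop (p ⊗ₜ[k] q) = antipode (R := k) q * p := by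
  simp [uop]

noncomputable def G3 : (H ⊗[k] H) ⊗[k] H →ₗ[k] H :=
  mul' k H ∘ₗ (TensorProduct.comm k H H).toLinearMap ∘ₗ
    map uop ((antipode k : H →ₗ[k] H) ∘ₗ (antipode k : H →ₗ[k] H))

theorem lemA (T : H ⊗[k] H) (x : H) :
    G3 (((LinearMap.mulLeft k T ∘ₗ comul).rTensor H) (comul x)) = uop T * x := by
  induction T using TensorProduct.induction_on with
  | zero =>
    have : LinearMap.mulLeft k (0 : H ⊗[k] H) = 0 := by ext z; simp
    simp [this]
  | add T₁ T₂ h₁ h₂ =>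
    have : LinearMap.mulLeft k (T₁ + T₂) = LinearMap.mulLeft k T₁ + LinearMap.mulLeft k T₂ := by
      ext z; simp [add_mul]
    rw [this, add_comp, rTensor_add, LinearMap.add_apply, map_add, h₁, h₂, map_add, add_mul]
  | tmul a b =>
    set c := antipode (R := k) b * a with hc
    set θ : H ⊗[k] H →ₗ[k] H :=
      (antipode k : H →ₗ[k] H) ∘ₗ mul' k H ∘ₗ lTensor H (antipode k : H →ₗ[k] H) with hθdef
    have hM1 : (G3 ∘ₗ (LinearMap.mulLeft k (a ⊗ₜ[k] b)).rTensor H ∘ₗ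
          (TensorProduct.assoc k H H H).symm.toLinearMap : H ⊗[k] (H ⊗[k] H) →ₗ[k] H)
        = mul' k H ∘ₗ (TensorProduct.comm k H H).toLinearMap ∘ₗ
            map (LinearMap.mulLeft k c) θ := by
      ext p q r
      simp [G3, hθdef, antipode_mul', Algebra.TensorProduct.tmul_mul_tmul, hc, mul_assoc]
    have h1 : map (LinearMap.mulLeft k c) θ ∘ₗ comul.lTensor H
        = map (LinearMap.mulLeft k c) (Algebra.linearMap k H) ∘ₗ counit.lTensor H := by
      apply TensorProduct.ext'
      intro u v
      simp [hθdef, mul_antipode_lTensor_comul_apply, antipode_algebraMap']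
    have step1 : ((LinearMap.mulLeft k (a ⊗ₜ[k] b) ∘ₗ comul).rTensor H) (comul x)
        = ((LinearMap.mulLeft k (a ⊗ₜ[k] b)).rTensor H)
            ((TensorProduct.assoc k H H H).symm ((comul.lTensor H) (comul x))) := by
      rw [rTensor_comp, comp_apply, coassoc_symm_apply]
    rw [step1]
    have := LinearMap.congr_fun hM1 ((comul.lTensor H) (comul x))
    simp only [comp_apply, LinearEquiv.coe_coe] at this
    rw [this, ← comp_apply, h1, comp_apply, lTensor_counit_comul]
    simp [hc, mul_assoc]

noncomputable def dT : H →ₗ[k] H ⊗[k] H := (TensorProduct.comm k H H).toLinearMap ∘ₗ comul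

theorem lemB (T : H ⊗[k] H) (x : H) :
    G3 (((LinearMap.mulRight k T ∘ₗ dT).rTensor H) (comul x))
      = antipode (R := k) (antipode (R := k) x) * uop T := by
  induction T using TensorProduct.induction_on with
  | zero =>
    have : LinearMap.mulRight k (0 : H ⊗[k] H) = 0 := by ext z; simp
    simp [this]
  | add T₁ T₂ h₁ h₂ =>
    have : LinearMap.mulRight k (T₁ + T₂) = LinearMap.mulRight k T₁ + LinearMap.mulRight k T₂ := by
      ext z; simp [mul_add]
    rw [this, add_comp, rTensor_add, LinearMap.add_apply, map_add, h₁, h₂, map_add, mul_add]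
  | tmul a b =>
    set c₀ := antipode (R := k) b * a with hc₀
    set Bm : H ⊗[k] H →ₗ[k] H :=
      LinearMap.mulLeft k (antipode (R := k) b) ∘ₗ LinearMap.mulRight k a ∘ₗ
        (mul' k H ∘ₗ rTensor H (antipode k : H →ₗ[k] H)) with hBm
    have hM2 : (G3 ∘ₗ (LinearMap.mulRight k (a ⊗ₜ[k] b)).rTensor H ∘ₗ
          ((TensorProduct.comm k H H).toLinearMap).rTensor H :
            (H ⊗[k] H) ⊗[k] H →ₗ[k] H)
        = mul' k H ∘ₗ (TensorProduct.comm k H H).toLinearMap ∘ₗ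
            map Bm ((antipode k : H →ₗ[k] H) ∘ₗ (antipode k : H →ₗ[k] H)) := by
      ext m n r
      simp [G3, hBm, antipode_mul', Algebra.TensorProduct.tmul_mul_tmul, mul_assoc]
    have h1b : map Bm ((antipode k : H →ₗ[k] H) ∘ₗ (antipode k : H →ₗ[k] H)) ∘ₗ comul.rTensor H
        = map (LinearMap.mulLeft k (antipode (R := k) b) ∘ₗ LinearMap.mulRight k a ∘ₗ
            Algebra.linearMap k H ∘ₗ counit)
            ((antipode k : H →ₗ[k] H) ∘ₗ (antipode k : H →ₗ[k] H)) := by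
      apply TensorProduct.ext'
      intro u v
      simp [hBm, mul_antipode_rTensor_comul_apply]
    have hfin : (mul' k H ∘ₗ (TensorProduct.comm k H H).toLinearMap ∘ₗ
          map (LinearMap.mulLeft k (antipode (R := k) b) ∘ₗ LinearMap.mulRight k a ∘ₗ
            Algebra.linearMap k H ∘ₗ counit)
            ((antipode k : H →ₗ[k] H) ∘ₗ (antipode k : H →ₗ[k] H)) : H ⊗[k] H →ₗ[k] H)
        = LinearMap.mulRight k c₀ ∘ₗ ((antipode k : H →ₗ[k] H) ∘ₗ (antipode k : H →ₗ[k] H)) ∘ₗ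
            (TensorProduct.lid k H).toLinearMap ∘ₗ counit.rTensor H := by
      apply TensorProduct.ext'
      intro u v
      simp only [comp_apply, map_tmul, mul'_apply, LinearEquiv.coe_coe, comm_tmul,
        mulLeft_apply, mulRight_apply, Algebra.linearMap_apply, rTensor_tmul, lid_tmul,
        map_smul, smul_mul_assoc, hc₀]
      rw [← Algebra.smul_def]
      simp [mul_smul_comm, mul_assoc]
    have step1 : ((LinearMap.mulRight k (a ⊗ₜ[k] b) ∘ₗ dT).rTensor H) (comul x)
        = ((LinearMap.mulRight k (a ⊗ₜ[k] b)).rTensor H)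
            ((((TensorProduct.comm k H H).toLinearMap).rTensor H)
              ((comul.rTensor H) (comul x))) := by
      rw [dT, ← comp_assoc, rTensor_comp, rTensor_comp]
      simp [comp_apply]
    rw [step1]
    have hm := LinearMap.congr_fun hM2 ((comul.rTensor H) (comul x))
    simp only [comp_apply] at hm
    rw [hm]
    have h1b' := LinearMap.congr_fun h1b (comul x)
    simp only [comp_apply] at h1b'
    rw [h1b']
    have hfin' := LinearMap.congr_fun hfin (comul x)
    simp only [comp_apply] at hfin'
    rw [hfin', rTensor_counit_comul]
    simp [hc₀, mul_assoc]
theorem lemD (c d : H) (X : H ⊗[k] H) :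
    uop (X * (c ⊗ₜ[k] d)) = antipode (R := k) d * (uop X * c) := by
  induction X using TensorProduct.induction_on with
  | zero => simp
  | tmul p q => simp [Algebra.TensorProduct.tmul_mul_tmul, antipode_mul', mul_assoc]
  | add X₁ X₂ h₁ h₂ => simp [add_mul, mul_add, h₁, h₂]

noncomputable def kmap : H ⊗[k] H →ₗ[k] H :=
  mul' k H ∘ₗ map (antipode k : H →ₗ[k] H) ((antipode k : H →ₗ[k] H) ∘ₗ (antipode k : H →ₗ[k] H)) ∘ₗ
    (TensorProduct.comm k H H).toLinearMap

@[simp] theorem kmap_tmul (c d : H) :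
    kmap (c ⊗ₜ[k] d) = antipode (R := k) d * antipode (R := k) (antipode (R := k) c) := by
  simp [kmap]

theorem claim1 (R : H ⊗[k] H) (hint : ∀ a : H, R * comul a = dT a * R) (x : H) :
    uop R * x = antipode (R := k) (antipode (R := k) x) * uop R := by
  have hfg : (LinearMap.mulLeft k R ∘ₗ comul : H →ₗ[k] H ⊗[k] H)
      = LinearMap.mulRight k R ∘ₗ dT := by
    apply LinearMap.ext; intro y
    simpa [dT] using hint y
  rw [← lemA R x, hfg, lemB]

theorem lemC (R : H ⊗[k] H) (hint : ∀ a : H, R * comul a = dT a * R) (Y : H ⊗[k] H) :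
    uop (R * Y) = kmap Y * uop R := by
  induction Y using TensorProduct.induction_on with
  | zero => simp
  | tmul c d =>
    rw [lemD, claim1 R hint c, kmap_tmul, mul_assoc]
  | add Y₁ Y₂ h₁ h₂ => simp [mul_add, add_mul, h₁, h₂]

end DrinfeldAux

variable (k H : Type*) [CommRing k] [Ring H] [HopfAlgebra k H]
/-- The u-operator is invertible and `S²` is conjugation by `u`: `S²(a) = u·a·u⁻¹`. -/
theorem antipode_sq_eq_conj_uOp (R : H ⊗[k] H) (hR : IsUniversalRMatrix k H R)
    (Sinv : H →ₗ[k] H)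
    (hS1 : ∀ a : H, Sinv (HopfAlgebra.antipode (R := k) a) = a)
    (hS2 : ∀ a : H, HopfAlgebra.antipode (R := k) (Sinv a) = a) :
    ∃ v : H, uOp k H R * v = 1 ∧ v * uOp k H R = 1 ∧
      ∀ a : H,
        HopfAlgebra.antipode (R := k) (HopfAlgebra.antipode (R := k) a) =
          uOp k H R * a * v := by
  have hu : uOp k H R = uop R := rfl
  have hint : ∀ a : H, R * Coalgebra.comul a = dT a * R := fun a => hR.intertwine a
  have hc1 : ∀ x : H, uop R * x
      = HopfAlgebra.antipode (R := k) (HopfAlgebra.antipode (R := k) x) * uop R :=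
    claim1 R hint
  obtain ⟨Ru, hRu⟩ := hR.isUnit
  have hR1 : R * (↑Ru⁻¹ : H ⊗[k] H) = 1 := by rw [← hRu]; exact Ru.mul_inv
  set v : H := kmap (↑Ru⁻¹ : H ⊗[k] H) with hv
  have hvu : v * uop R = 1 := by
    have h := lemC R hint (↑Ru⁻¹ : H ⊗[k] H)
    rw [hR1] at h
    have h1 : uop (1 : H ⊗[k] H) = 1 := by
      rw [Algebra.TensorProduct.one_def]
      simp [antipode_one']
    rw [h1] at h
    exact h.symm
  have huv : uop R * Sinv (Sinv v) = 1 := by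
    rw [hc1, hS2 (Sinv v), hS2 v, hvu]
  have hfix : Sinv (Sinv v) = v := by
    have h2 : v * (uop R * Sinv (Sinv v)) = v * 1 := by rw [huv]
    rw [← mul_assoc, hvu, one_mul, mul_one] at h2
    exact h2
  have huv2 : uop R * v = 1 := by rw [← hfix]; exact huv
  refine ⟨v, ?_, ?_, ?_⟩
  · rw [hu]; exact huv2
  · rw [hu]; exact hvu
  · intro a
    rw [hu, hc1 a, mul_assoc, huv2, mul_one]
end
end

section
/- (Theorem 1.) Let R be a universal R-matrix for H with Drinfeld u-operator u. Then Δ(u)·(τ(R)·R) = u⊗u in the algebra H⊗H; equivalently, Δ(u) = (u⊗u)·(RᵀR)⁻¹ where Rᵀ := τ(R). -/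
open TensorProduct

noncomputable section
set_option synthInstance.maxHeartbeats 400000
set_option maxHeartbeats 1600000

variable (k H : Type*) [CommRing k] [Ring H] [HopfAlgebra k H]

namespace Drinfeld

open Coalgebra HopfAlgebra

abbrev sA : H →ₗ[k] H := HopfAlgebra.antipode (R := k)
abbrev cm : H →ₗ[k] H ⊗[k] H := Coalgebra.comul
abbrev cu : H →ₗ[k] k := Coalgebra.counit

variable {k H}

@[simp] lemma tau_tmul (a b : H) : tau k H (a ⊗ₜ[k] b) = b ⊗ₜ[k] a := rfl

@[simp] lemma tau_tau (t : H ⊗[k] H) : tau k H (tau k H t) = t := by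
  induction t using TensorProduct.induction_on with
  | zero => simp
  | tmul a b => rfl
  | add x y hx hy => simp [map_add, hx, hy]

lemma tau_mul (s t : H ⊗[k] H) : tau k H (s * t) = tau k H s * tau k H t := by
  induction s using TensorProduct.induction_on with
  | zero => simp
  | tmul a b =>
    induction t using TensorProduct.induction_on with
    | zero => simp
    | tmul c d => simp [Algebra.TensorProduct.tmul_mul_tmul]
    | add x y hx hy => simp only [mul_add, map_add, hx, hy]
  | add x y hx hy => simp only [add_mul, map_add, hx, hy]

@[simp] lemma tau_one : tau k H (1 : H ⊗[k] H) = 1 := by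
  rw [Algebra.TensorProduct.one_def]; rfl

/-- `∑ ε(x₍₁₎) • x₍₂₎ = x`. -/
lemma sum_counit_left {ι : Type*} {x : H} (r : Coalgebra.Repr k x ι) :
    ∑ i ∈ r.index, cu k H (r.left i) • r.right i = x := by
  have h := Coalgebra.sum_counit_tmul_eq (R := k) r
  have := congrArg (TensorProduct.lid k H) h
  simp only [map_sum, TensorProduct.lid_tmul, one_smul] at this
  exact this

/-- `∑ ε(x₍₂₎) • x₍₁₎ = x`. -/
lemma sum_counit_right {ι : Type*} {x : H} (r : Coalgebra.Repr k x ι) :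
    ∑ i ∈ r.index, cu k H (r.right i) • r.left i = x := by
  have h := Coalgebra.sum_tmul_counit_eq (R := k) r
  have := congrArg (TensorProduct.rid k H) h
  simp only [map_sum, TensorProduct.rid_tmul, one_smul] at this
  exact this

@[simp] lemma antipode_one : sA k H 1 = 1 := by
  have h := HopfAlgebra.mul_antipode_rTensor_comul_apply (R := k) (A := H) (a := 1)
  simpa [Algebra.TensorProduct.one_def] using h

/-- Product of two representations, representing `comul (x*y)`. -/
def mulRepr {ι κ : Type*} {x y : H} (rx : Coalgebra.Repr k x ι) (ry : Coalgebra.Repr k y κ) :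
    Coalgebra.Repr k (x * y) (ι × κ) where
  index := rx.index ×ˢ ry.index
  left := fun p => rx.left p.1 * ry.left p.2
  right := fun p => rx.right p.1 * ry.right p.2
  eq := by
    rw [Finset.sum_product]
    calc ∑ i ∈ rx.index, ∑ j ∈ ry.index,
          (rx.left i * ry.left j) ⊗ₜ[k] (rx.right i * ry.right j)
        = (∑ i ∈ rx.index, rx.left i ⊗ₜ[k] rx.right i) *
            (∑ j ∈ ry.index, ry.left j ⊗ₜ[k] ry.right j) := by
          rw [Finset.sum_mul_sum]
          simp [Algebra.TensorProduct.tmul_mul_tmul]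
      _ = CoalgebraStruct.comul (x * y) := by
          rw [rx.eq, ry.eq]; exact (Bialgebra.comul_mul x y).symm

end Drinfeld

namespace Drinfeld
variable {k H : Type*} [CommRing k] [Ring H] [HopfAlgebra k H]
open Coalgebra HopfAlgebra

lemma repr_antipode_mul {ι : Type*} {a : H} (r : Coalgebra.Repr k a ι) :
    ∑ i ∈ r.index, sA k H (r.left i) * r.right i = cu k H a • 1 :=
  HopfAlgebra.sum_antipode_mul_eq_smul r

lemma repr_mul_antipode {ι : Type*} {a : H} (r : Coalgebra.Repr k a ι) :
    ∑ i ∈ r.index, r.left i * sA k H (r.right i) = cu k H a • 1 :=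
  HopfAlgebra.sum_mul_antipode_eq_smul r

/-- `∑ S(x₍₁₎) x₍₂₎ ⊗ x₍₃₎ = 1 ⊗ x`. -/
lemma antipode_collapse {ι κ : Type*} (x : H) (r : Coalgebra.Repr k x ι)
    (rr : ∀ i, Coalgebra.Repr k (r.right i) κ) :
    ∑ i ∈ r.index, ∑ j ∈ (rr i).index,
      (sA k H (r.left i) * (rr i).left j) ⊗ₜ[k] (rr i).right j = (1:H) ⊗ₜ[k] x := by
  have key := Coalgebra.sum_tmul_tmul_eq (R := k) r (fun i => ℛ k (r.left i)) rr
  set Λ : H ⊗[k] (H ⊗[k] H) →ₗ[k] H ⊗[k] H :=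
    (TensorProduct.map ((LinearMap.mul' k H) ∘ₗ TensorProduct.map (sA k H) LinearMap.id)
      LinearMap.id) ∘ₗ (TensorProduct.assoc k H H H).symm.toLinearMap with hΛ
  have hΛt : ∀ a b c : H, Λ (a ⊗ₜ (b ⊗ₜ c)) = (sA k H a * b) ⊗ₜ c := by
    intros; simp [hΛ]
  have key2 := congrArg Λ key
  simp only [map_sum, hΛt] at key2
  rw [← key2]
  calc ∑ i ∈ r.index, ∑ j ∈ (ℛ k (r.left i)).index,
        (sA k H ((ℛ k (r.left i)).left j) * (ℛ k (r.left i)).right j) ⊗ₜ[k] r.right i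
      = ∑ i ∈ r.index, (1:H) ⊗ₜ[k] (cu k H (r.left i) • r.right i) := by
        refine Finset.sum_congr rfl fun i _ => ?_
        rw [← TensorProduct.sum_tmul, repr_antipode_mul (ℛ k (r.left i)),
          TensorProduct.smul_tmul]
    _ = (1:H) ⊗ₜ[k] x := by rw [← TensorProduct.tmul_sum, sum_counit_left r]

lemma antipode_smul_collapse {ι : Type*} {z : H} (rz : Coalgebra.Repr k z ι) :
    ∑ i ∈ rz.index, cu k H (rz.right i) • sA k H (rz.left i) = sA k H z := by
  simp only [← map_smul]
  rw [← map_sum, sum_counit_right rz]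


/-- Auxiliary contraction `t ⊗ s ↦ a * ((t * b) * S (s * c))`. -/
def phiAux (a b c : H) : H ⊗[k] H →ₗ[k] H :=
  (LinearMap.mulLeft k a) ∘ₗ (LinearMap.mul' k H) ∘ₗ
    (TensorProduct.map (LinearMap.mulRight k b) (sA k H ∘ₗ LinearMap.mulRight k c))

@[simp] lemma phiAux_tmul (a b c t s : H) :
    phiAux a b c (t ⊗ₜ[k] s) = a * ((t * b) * sA k H (s * c)) := by
  simp [phiAux]

/-- Auxiliary contraction `t ⊗ s ↦ t * S (x * s)`. -/
def psiAux (x : H) : H ⊗[k] H →ₗ[k] H :=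
  (LinearMap.mul' k H) ∘ₗ (TensorProduct.map LinearMap.id (sA k H ∘ₗ LinearMap.mulLeft k x))

@[simp] lemma psiAux_tmul (x t s : H) :
    psiAux x (t ⊗ₜ[k] s) = t * sA k H (x * s) := by
  simp [psiAux]

theorem antipode_mul (x y : H) : sA k H (x * y) = sA k H y * sA k H x := by
  classical
  set rx := ℛ k x with hrx
  set ry := ℛ k y with hry
  set rrx : ∀ i, Coalgebra.Repr k (rx.right i) (H × H) := fun i => ℛ k (rx.right i) with hrrx
  set rry : ∀ p, Coalgebra.Repr k (ry.right p) (H × H) := fun p => ℛ k (ry.right p) with hrry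
  have step1 :
      ∑ i ∈ rx.index, ∑ p ∈ ry.index, ∑ j ∈ (rrx i).index, ∑ q ∈ (rry p).index,
        sA k H (ry.left p) * sA k H (rx.left i) * ((rrx i).left j * (rry p).left q) *
          sA k H ((rrx i).right j * (rry p).right q)
      = sA k H y * sA k H x := by
    have inner : ∀ i ∈ rx.index, ∀ p ∈ ry.index,
        ∑ j ∈ (rrx i).index, ∑ q ∈ (rry p).index,
          sA k H (ry.left p) * sA k H (rx.left i) * ((rrx i).left j * (rry p).left q) *
            sA k H ((rrx i).right j * (rry p).right q)
        = (cu k H (rx.right i) * cu k H (ry.right p)) •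
            (sA k H (ry.left p) * sA k H (rx.left i)) := by
      intro i _ p _
      have hm := repr_mul_antipode (mulRepr (rrx i) (rry p))
      simp only [mulRepr] at hm
      rw [Finset.sum_product] at hm
      calc ∑ j ∈ (rrx i).index, ∑ q ∈ (rry p).index,
            sA k H (ry.left p) * sA k H (rx.left i) * ((rrx i).left j * (rry p).left q) *
              sA k H ((rrx i).right j * (rry p).right q)
          = ∑ j ∈ (rrx i).index, ∑ q ∈ (rry p).index,
              (sA k H (ry.left p) * sA k H (rx.left i)) *
                (((rrx i).left j * (rry p).left q) *
                  sA k H ((rrx i).right j * (rry p).right q)) := by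
            refine Finset.sum_congr rfl fun j _ => Finset.sum_congr rfl fun q _ => ?_
            rw [mul_assoc]
        _ = (sA k H (ry.left p) * sA k H (rx.left i)) *
              ∑ j ∈ (rrx i).index, ∑ q ∈ (rry p).index,
                ((rrx i).left j * (rry p).left q) *
                  sA k H ((rrx i).right j * (rry p).right q) := by
            simp only [← Finset.mul_sum]
        _ = (cu k H (rx.right i) * cu k H (ry.right p)) •
              (sA k H (ry.left p) * sA k H (rx.left i)) := by
            rw [hm, Bialgebra.counit_mul]
            rw [mul_smul_comm, mul_one]
    calc ∑ i ∈ rx.index, ∑ p ∈ ry.index, ∑ j ∈ (rrx i).index, ∑ q ∈ (rry p).index,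
          sA k H (ry.left p) * sA k H (rx.left i) * ((rrx i).left j * (rry p).left q) *
            sA k H ((rrx i).right j * (rry p).right q)
        = ∑ i ∈ rx.index, ∑ p ∈ ry.index,
            (cu k H (rx.right i) * cu k H (ry.right p)) •
              (sA k H (ry.left p) * sA k H (rx.left i)) := by
          exact Finset.sum_congr rfl fun i hi => Finset.sum_congr rfl fun p hp => inner i hi p hp
      _ = (∑ p ∈ ry.index, cu k H (ry.right p) • sA k H (ry.left p)) *
            (∑ i ∈ rx.index, cu k H (rx.right i) • sA k H (rx.left i)) := by
          rw [Finset.sum_mul_sum, Finset.sum_comm]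
          refine Finset.sum_congr rfl fun i _ => Finset.sum_congr rfl fun p _ => ?_
          rw [smul_mul_smul_comm, mul_comm (cu k H (ry.right i)) (cu k H (rx.right p))]
      _ = sA k H y * sA k H x := by
          rw [antipode_smul_collapse ry, antipode_smul_collapse rx]
  have step2 :
      ∑ i ∈ rx.index, ∑ p ∈ ry.index, ∑ j ∈ (rrx i).index, ∑ q ∈ (rry p).index,
        sA k H (ry.left p) * sA k H (rx.left i) * ((rrx i).left j * (rry p).left q) *
          sA k H ((rrx i).right j * (rry p).right q)
      = sA k H (x * y) := by
    have hx := antipode_collapse x rx rrx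
    have hy := antipode_collapse y ry rry
    calc ∑ i ∈ rx.index, ∑ p ∈ ry.index, ∑ j ∈ (rrx i).index, ∑ q ∈ (rry p).index,
          sA k H (ry.left p) * sA k H (rx.left i) * ((rrx i).left j * (rry p).left q) *
            sA k H ((rrx i).right j * (rry p).right q)
        = ∑ p ∈ ry.index, ∑ i ∈ rx.index, ∑ j ∈ (rrx i).index, ∑ q ∈ (rry p).index,
            sA k H (ry.left p) * sA k H (rx.left i) * ((rrx i).left j * (rry p).left q) *
              sA k H ((rrx i).right j * (rry p).right q) := Finset.sum_comm
      _ = ∑ p ∈ ry.index, ∑ i ∈ rx.index, ∑ q ∈ (rry p).index, ∑ j ∈ (rrx i).index,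
            sA k H (ry.left p) * sA k H (rx.left i) * ((rrx i).left j * (rry p).left q) *
              sA k H ((rrx i).right j * (rry p).right q) := by
          exact Finset.sum_congr rfl fun p _ => Finset.sum_congr rfl fun i _ =>
            Finset.sum_comm
      _ = ∑ p ∈ ry.index, ∑ q ∈ (rry p).index, ∑ i ∈ rx.index, ∑ j ∈ (rrx i).index,
            sA k H (ry.left p) * sA k H (rx.left i) * ((rrx i).left j * (rry p).left q) *
              sA k H ((rrx i).right j * (rry p).right q) := by
          exact Finset.sum_congr rfl fun p _ => Finset.sum_comm
      _ = ∑ p ∈ ry.index, ∑ q ∈ (rry p).index,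
            sA k H (ry.left p) * ((1 * (rry p).left q) * sA k H (x * (rry p).right q)) := by
          refine Finset.sum_congr rfl fun p _ => Finset.sum_congr rfl fun q _ => ?_
          have hphi := congrArg
            (phiAux (sA k H (ry.left p)) ((rry p).left q) ((rry p).right q)) hx
          simp only [map_sum, phiAux_tmul] at hphi
          rw [← hphi]
          refine Finset.sum_congr rfl fun i _ => Finset.sum_congr rfl fun j _ => ?_
          simp only [mul_assoc]
      _ = ∑ p ∈ ry.index, ∑ q ∈ (rry p).index,
            psiAux x ((sA k H (ry.left p) * (rry p).left q) ⊗ₜ[k] (rry p).right q) := by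
          refine Finset.sum_congr rfl fun p _ => Finset.sum_congr rfl fun q _ => ?_
          simp only [psiAux_tmul, one_mul, mul_assoc]
      _ = psiAux x ((1:H) ⊗ₜ[k] y) := by
          have hpsi := congrArg (psiAux x) hy
          simp only [map_sum] at hpsi
          exact hpsi
      _ = sA k H (x * y) := by simp
  rw [← step2, step1]

end Drinfeld

namespace Drinfeld
variable {k H : Type*} [CommRing k] [Ring H] [HopfAlgebra k H]
open Coalgebra HopfAlgebra

section Conv
variable {A : Type*} [Ring A] [Algebra k A]

/-- Convolution product on `Hom(H, A)`. -/
def conv (f g : H →ₗ[k] A) : H →ₗ[k] A :=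
  LinearMap.mul' k A ∘ₗ (TensorProduct.map f g) ∘ₗ cm k H

/-- Convolution unit. -/
def convUnit : H →ₗ[k] A := Algebra.linearMap k A ∘ₗ cu k H

lemma conv_repr {ι : Type*} (f g : H →ₗ[k] A) {x : H} (r : Coalgebra.Repr k x ι) :
    conv f g x = ∑ i ∈ r.index, f (r.left i) * g (r.right i) := by
  have : cm k H x = ∑ i ∈ r.index, r.left i ⊗ₜ[k] r.right i := r.eq.symm
  simp [conv, this, map_sum]

lemma conv_unit_left (f : H →ₗ[k] A) : conv convUnit f = f := by
  apply LinearMap.ext; intro x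
  rw [conv_repr _ _ (ℛ k x)]
  calc ∑ i ∈ (ℛ k x).index, convUnit ((ℛ k x).left i) * f ((ℛ k x).right i)
      = ∑ i ∈ (ℛ k x).index, cu k H ((ℛ k x).left i) • f ((ℛ k x).right i) := by
        refine Finset.sum_congr rfl fun i _ => ?_
        simp [convUnit, Algebra.smul_def]
    _ = f x := by
        simp only [← map_smul]
        rw [← map_sum, sum_counit_left (ℛ k x)]

lemma conv_unit_right (f : H →ₗ[k] A) : conv f convUnit = f := by
  apply LinearMap.ext; intro x
  rw [conv_repr _ _ (ℛ k x)]
  calc ∑ i ∈ (ℛ k x).index, f ((ℛ k x).left i) * convUnit ((ℛ k x).right i)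
      = ∑ i ∈ (ℛ k x).index, cu k H ((ℛ k x).right i) • f ((ℛ k x).left i) := by
        refine Finset.sum_congr rfl fun i _ => ?_
        simp only [convUnit, LinearMap.comp_apply, Algebra.linearMap_apply]
        rw [← Algebra.commutes, Algebra.smul_def]
    _ = f x := by
        simp only [← map_smul]
        rw [← map_sum, sum_counit_right (ℛ k x)]

lemma conv_assoc (f g h : H →ₗ[k] A) : conv (conv f g) h = conv f (conv g h) := by
  apply LinearMap.ext; intro x
  set r := ℛ k x with hr
  set a₁ : ∀ i, Coalgebra.Repr k (r.left i) (H × H) := fun i => ℛ k (r.left i) with ha₁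
  set a₂ : ∀ i, Coalgebra.Repr k (r.right i) (H × H) := fun i => ℛ k (r.right i) with ha₂
  have key := Coalgebra.sum_map_tmul_tmul_eq (R := k) f g h x (repr := r) (a₁ := a₁) (a₂ := a₂)
  have key2 := congrArg (LinearMap.mul' k A ∘ₗ LinearMap.lTensor A (LinearMap.mul' k A)) key
  simp only [map_sum, LinearMap.coe_comp, Function.comp_apply, LinearMap.lTensor_tmul,
    LinearMap.mul'_apply] at key2
  rw [conv_repr (conv f g) h r, conv_repr f (conv g h) r]
  calc ∑ i ∈ r.index, conv f g (r.left i) * h (r.right i)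
      = ∑ i ∈ r.index, ∑ j ∈ (a₁ i).index,
          f ((a₁ i).left j) * g ((a₁ i).right j) * h (r.right i) := by
        refine Finset.sum_congr rfl fun i _ => ?_
        rw [conv_repr f g (a₁ i), Finset.sum_mul]
    _ = ∑ i ∈ r.index, ∑ j ∈ (a₁ i).index,
          f ((a₁ i).left j) * (g ((a₁ i).right j) * h (r.right i)) := by
        simp only [mul_assoc]
    _ = ∑ i ∈ r.index, ∑ j ∈ (a₂ i).index,
          f (r.left i) * (g ((a₂ i).left j) * h ((a₂ i).right j)) := key2.symm
    _ = ∑ i ∈ r.index, f (r.left i) * conv g h (r.right i) := by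
        refine Finset.sum_congr rfl fun i _ => ?_
        rw [conv_repr g h (a₂ i), Finset.mul_sum]

lemma conv_inv_unique {f g h : H →ₗ[k] A} (h1 : conv f g = convUnit)
    (h2 : conv g h = convUnit) : f = h :=
  calc f = conv f convUnit := (conv_unit_right f).symm
    _ = conv f (conv g h) := by rw [h2]
    _ = conv (conv f g) h := (conv_assoc f g h).symm
    _ = conv convUnit h := by rw [h1]
    _ = h := conv_unit_left h

end Conv

lemma tau_map_map (t : H ⊗[k] H) :
    tau k H ((TensorProduct.map (sA k H) (sA k H)) t)
      = (TensorProduct.map (sA k H) (sA k H)) (tau k H t) := by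
  induction t using TensorProduct.induction_on with
  | zero => simp
  | tmul a b => rfl
  | add s t hs ht => simp only [map_add, hs, ht]

theorem comul_antipode_linmap :
    cm k H ∘ₗ sA k H =
      tau k H ∘ₗ (TensorProduct.map (sA k H) (sA k H)) ∘ₗ cm k H := by
  set h3 : H →ₗ[k] H ⊗[k] H :=
    tau k H ∘ₗ (TensorProduct.map (sA k H) (sA k H)) ∘ₗ cm k H with hh3
  have h3apply : ∀ (z : H) (rz : Coalgebra.Repr k z (H × H)),
      h3 z = ∑ p ∈ rz.index, sA k H (rz.right p) ⊗ₜ[k] sA k H (rz.left p) := by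
    intro z rz
    have : cm k H z = ∑ p ∈ rz.index, rz.left p ⊗ₜ[k] rz.right p := rz.eq.symm
    simp [hh3, this, map_sum]
  apply conv_inv_unique (g := cm k H)
  · -- conv (Δ ∘ S) Δ = unit
    apply LinearMap.ext; intro x
    rw [conv_repr _ _ (ℛ k x)]
    calc ∑ i ∈ (ℛ k x).index, (cm k H ∘ₗ sA k H) ((ℛ k x).left i) * cm k H ((ℛ k x).right i)
        = cm k H (∑ i ∈ (ℛ k x).index, sA k H ((ℛ k x).left i) * (ℛ k x).right i) := by
          rw [map_sum]
          refine Finset.sum_congr rfl fun i _ => ?_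
          rw [LinearMap.comp_apply]
          exact (Bialgebra.comul_mul _ _).symm
      _ = convUnit x := by
          rw [repr_antipode_mul (ℛ k x)]
          simp [convUnit, Algebra.smul_def]
  · -- conv Δ (τ ∘ (S⊗S) ∘ Δ) = unit : the hard direction
    apply LinearMap.ext; intro x
    set r := ℛ k x with hrdef
    set rr : ∀ i, Coalgebra.Repr k (r.right i) (H × H) := fun i => ℛ k (r.right i) with hrr
    rw [conv_repr _ _ r]
    -- Step B (generic): ∑ⱼ (a ⊗ yl j) * h3 (yr j) = (a * S y) ⊗ 1
    have stepB : ∀ (a y : H) (ry : Coalgebra.Repr k y (H × H)),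
        ∑ j ∈ ry.index, (a ⊗ₜ[k] ry.left j) * h3 (ry.right j)
          = (a * sA k H y) ⊗ₜ[k] (1:H) := by
      intro a y ry
      set rt : ∀ j, Coalgebra.Repr k (ry.right j) (H × H) := fun j => ℛ k (ry.right j) with hrt
      have key2 := Coalgebra.sum_tmul_tmul_eq (R := k) ry (fun j => ℛ k (ry.left j)) rt
      set Λ' : H ⊗[k] (H ⊗[k] H) →ₗ[k] H ⊗[k] H :=
        (TensorProduct.comm k H H).toLinearMap ∘ₗ
          (TensorProduct.map (LinearMap.mul' k H) (LinearMap.mulLeft k a)) ∘ₗ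
          (TensorProduct.assoc k H H H).symm.toLinearMap ∘ₗ
          (LinearMap.lTensor H (TensorProduct.map (sA k H) (sA k H))) with hΛ'
      have hΛ't : ∀ p q t : H,
          Λ' (p ⊗ₜ (q ⊗ₜ t)) = (a * sA k H t) ⊗ₜ[k] (p * sA k H q) := by
        intros; simp [hΛ']
      have key2' := congrArg Λ' key2
      simp only [map_sum, hΛ't] at key2'
      calc ∑ j ∈ ry.index, (a ⊗ₜ[k] ry.left j) * h3 (ry.right j)
          = ∑ j ∈ ry.index, ∑ p ∈ (rt j).index,
              (a * sA k H ((rt j).right p)) ⊗ₜ[k] (ry.left j * sA k H ((rt j).left p)) := by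
            refine Finset.sum_congr rfl fun j _ => ?_
            rw [h3apply _ (rt j), Finset.mul_sum]
            refine Finset.sum_congr rfl fun p _ => ?_
            rw [Algebra.TensorProduct.tmul_mul_tmul]
        _ = ∑ j ∈ ry.index, ∑ p ∈ (ℛ k (ry.left j)).index,
              (a * sA k H (ry.right j)) ⊗ₜ[k]
                ((ℛ k (ry.left j)).left p * sA k H ((ℛ k (ry.left j)).right p)) := key2'.symm
        _ = ∑ j ∈ ry.index, cu k H (ry.left j) • ((a * sA k H (ry.right j)) ⊗ₜ[k] (1:H)) := by
            refine Finset.sum_congr rfl fun j _ => ?_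
            rw [← TensorProduct.tmul_sum, repr_mul_antipode (ℛ k (ry.left j)),
              TensorProduct.tmul_smul]
        _ = (a * sA k H y) ⊗ₜ[k] (1:H) := by
            have : ∀ j ∈ ry.index, cu k H (ry.left j) • ((a * sA k H (ry.right j)) ⊗ₜ[k] (1:H))
                = (a * (cu k H (ry.left j) • sA k H (ry.right j))) ⊗ₜ[k] (1:H) := by
              intro j _
              rw [Algebra.mul_smul_comm, TensorProduct.smul_tmul']
            rw [Finset.sum_congr rfl this, ← TensorProduct.sum_tmul, ← Finset.mul_sum]
            congr 2
            simp only [← map_smul]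
            rw [← map_sum, sum_counit_left ry]
    -- assemble
    have key1 := Coalgebra.sum_tmul_tmul_eq (R := k) r (fun i => ℛ k (r.left i)) rr
    set Λ : H ⊗[k] (H ⊗[k] H) →ₗ[k] H ⊗[k] H :=
      (LinearMap.mul' k (H ⊗[k] H)) ∘ₗ
        (TensorProduct.map LinearMap.id h3) ∘ₗ
        (TensorProduct.assoc k H H H).symm.toLinearMap with hΛ
    have hΛt : ∀ a b c : H, Λ (a ⊗ₜ (b ⊗ₜ c)) = (a ⊗ₜ[k] b) * h3 c := by
      intros; simp [hΛ]
    have key1' := congrArg Λ key1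
    simp only [map_sum, hΛt] at key1'
    calc ∑ i ∈ r.index, cm k H (r.left i) * h3 (r.right i)
        = ∑ i ∈ r.index, ∑ j ∈ (ℛ k (r.left i)).index,
            ((ℛ k (r.left i)).left j ⊗ₜ[k] (ℛ k (r.left i)).right j) * h3 (r.right i) := by
          refine Finset.sum_congr rfl fun i _ => ?_
          rw [← Finset.sum_mul]
          congr 1
          exact ((ℛ k (r.left i)).eq).symm
      _ = ∑ i ∈ r.index, ∑ j ∈ (rr i).index,
            (r.left i ⊗ₜ[k] (rr i).left j) * h3 ((rr i).right j) := key1'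
      _ = ∑ i ∈ r.index, (r.left i * sA k H (r.right i)) ⊗ₜ[k] (1:H) := by
          refine Finset.sum_congr rfl fun i _ => ?_
          exact stepB (r.left i) (r.right i) (rr i)
      _ = convUnit x := by
          rw [← TensorProduct.sum_tmul, repr_mul_antipode r]
          simp [convUnit, Algebra.smul_def, Algebra.TensorProduct.one_def,
            TensorProduct.smul_tmul']

theorem comul_antipode (b : H) :
    cm k H (sA k H b)
      = (TensorProduct.map (sA k H) (sA k H)) (tau k H (cm k H b)) := by
  have h := LinearMap.congr_fun (comul_antipode_linmap (k := k) (H := H)) b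
  simp only [LinearMap.comp_apply] at h
  rw [h, tau_map_map]

end Drinfeld



namespace Drinfeld
variable {k H : Type*} [CommRing k] [Ring H] [HopfAlgebra k H]
open Coalgebra HopfAlgebra

/-- `x ↦ x ⊗ 1`. -/
def incl1 : H →ₗ[k] H ⊗[k] H := (TensorProduct.mk k H H).flip 1
/-- `x ↦ 1 ⊗ x`. -/
def incl2 : H →ₗ[k] H ⊗[k] H := TensorProduct.mk k H H 1

@[simp] lemma incl1_apply (x : H) : (incl1 : H →ₗ[k] H ⊗[k] H) x = x ⊗ₜ[k] 1 := rfl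
@[simp] lemma incl2_apply (x : H) : (incl2 : H →ₗ[k] H ⊗[k] H) x = (1:H) ⊗ₜ[k] x := rfl

/-- Counit applied in the first slot: `a ⊗ b ↦ ε(a) • b`. -/
def epsL : H ⊗[k] H →ₐ[k] H :=
  Algebra.TensorProduct.lift ((Algebra.ofId k H).comp (Bialgebra.counitAlgHom k H))
    (AlgHom.id k H) (fun x y => Algebra.commutes _ _)

/-- Counit applied in the second slot: `a ⊗ b ↦ ε(b) • a`. -/
def epsR : H ⊗[k] H →ₐ[k] H :=
  Algebra.TensorProduct.lift (AlgHom.id k H)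
    ((Algebra.ofId k H).comp (Bialgebra.counitAlgHom k H))
    (fun x y => (Algebra.commutes _ _).symm)

@[simp] lemma epsL_tmul (a b : H) : (epsL (a ⊗ₜ[k] b) : H) = cu k H a • b := by
  rw [Algebra.smul_def]; rfl

@[simp] lemma epsR_tmul (a b : H) : (epsR (a ⊗ₜ[k] b) : H) = cu k H b • a := by
  simp only [epsR, Algebra.TensorProduct.lift_tmul, AlgHom.coe_comp, AlgHom.coe_id,
    Function.comp_apply, id_eq, Bialgebra.counitAlgHom_apply, Algebra.ofId_apply]
  rw [Algebra.smul_def]; exact (Algebra.commutes (cu k H b) a).symm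

lemma epsL_comul (z : H) : (epsL (cm k H z) : H) = z := by
  have : cm k H z = ∑ i ∈ (ℛ k z).index, (ℛ k z).left i ⊗ₜ[k] (ℛ k z).right i :=
    ((ℛ k z).eq).symm
  rw [this, map_sum]
  simp only [epsL_tmul]
  exact sum_counit_left (ℛ k z)

lemma epsR_comul (z : H) : (epsR (cm k H z) : H) = z := by
  have : cm k H z = ∑ i ∈ (ℛ k z).index, (ℛ k z).left i ⊗ₜ[k] (ℛ k z).right i :=
    ((ℛ k z).eq).symm
  rw [this, map_sum]
  simp only [epsR_tmul]
  exact sum_counit_right (ℛ k z)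

end Drinfeld

namespace Drinfeld
variable {k H : Type*} [CommRing k] [Ring H] [HopfAlgebra k H]
open Coalgebra HopfAlgebra

/-- `ε` in slot 1 of `H ⊗ (H ⊗ H)`. -/
def epsT1 : H ⊗[k] (H ⊗[k] H) →ₐ[k] H ⊗[k] H :=
  Algebra.TensorProduct.lift ((Algebra.ofId k (H ⊗[k] H)).comp (Bialgebra.counitAlgHom k H))
    (AlgHom.id k (H ⊗[k] H)) (fun x y => by
      simp only [AlgHom.coe_comp, Function.comp_apply, Algebra.ofId_apply, AlgHom.coe_id, id_eq]
      exact Commute.symm (Algebra.commute_algebraMap_right _ _))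

@[simp] lemma epsT1_tmul (x : H) (w : H ⊗[k] H) : epsT1 (x ⊗ₜ[k] w) = cu k H x • w := by
  simp [epsT1, Algebra.TensorProduct.lift_tmul, Algebra.smul_def, Algebra.ofId_apply]

/-- `ε` in slot 3 of `H ⊗ (H ⊗ H)`. -/
def epsT3 : H ⊗[k] (H ⊗[k] H) →ₐ[k] H ⊗[k] H :=
  Algebra.TensorProduct.map (AlgHom.id k H) epsR

@[simp] lemma epsT3_tmul (x : H) (w : H ⊗[k] H) : epsT3 (x ⊗ₜ[k] w) = x ⊗ₜ[k] (epsR w : H) :=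
  rfl

lemma epsT1_DeltaId (W : H ⊗[k] H) : epsT1 (DeltaId k H W) = W := by
  have base : ∀ (t : H ⊗[k] H) (c : H),
      epsT1 ((TensorProduct.assoc k H H H) (t ⊗ₜ[k] c)) = (epsL t : H) ⊗ₜ[k] c := by
    intro t c
    induction t using TensorProduct.induction_on with
    | zero => simp
    | tmul a b => simp [TensorProduct.smul_tmul']
    | add s t hs ht => simp only [TensorProduct.add_tmul, map_add, hs, ht]
  induction W using TensorProduct.induction_on with
  | zero => simp [DeltaId]
  | tmul a b =>
    have : DeltaId k H (a ⊗ₜ[k] b)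
        = (TensorProduct.assoc k H H H) ((cm k H a) ⊗ₜ[k] b) := rfl
    rw [this, base, epsL_comul]
  | add s t hs ht => simp only [map_add, hs, ht]

lemma epsT1_emb13 (W : H ⊗[k] H) : epsT1 (emb13 k H W) = incl2 (epsL W : H) := by
  induction W using TensorProduct.induction_on with
  | zero => simp
  | tmul a b =>
    have : emb13 k H (a ⊗ₜ[k] b) = a ⊗ₜ[k] ((1:H) ⊗ₜ[k] b) := rfl
    rw [this, epsT1_tmul]
    simp [TensorProduct.tmul_smul, TensorProduct.smul_tmul']
  | add s t hs ht => simp only [map_add, hs, ht]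

lemma epsT1_emb23 (W : H ⊗[k] H) : epsT1 (emb23 k H W) = W := by
  induction W using TensorProduct.induction_on with
  | zero => simp
  | tmul a b =>
    have : emb23 k H (a ⊗ₜ[k] b) = (1:H) ⊗ₜ[k] (a ⊗ₜ[k] b) := rfl
    rw [this, epsT1_tmul]
    simp
  | add s t hs ht => simp only [map_add, hs, ht]

lemma epsT3_IdDelta (W : H ⊗[k] H) : epsT3 (IdDelta k H W) = W := by
  induction W using TensorProduct.induction_on with
  | zero => simp [IdDelta]
  | tmul a b =>
    have : IdDelta k H (a ⊗ₜ[k] b) = a ⊗ₜ[k] (cm k H b) := rfl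
    rw [this, epsT3_tmul, epsR_comul]
  | add s t hs ht => simp only [map_add, hs, ht]

lemma epsT3_emb13 (W : H ⊗[k] H) : epsT3 (emb13 k H W) = incl1 (epsR W : H) := by
  induction W using TensorProduct.induction_on with
  | zero => simp
  | tmul a b =>
    have : emb13 k H (a ⊗ₜ[k] b) = a ⊗ₜ[k] ((1:H) ⊗ₜ[k] b) := rfl
    rw [this, epsT3_tmul]
    simp [TensorProduct.smul_tmul', TensorProduct.tmul_smul]
  | add s t hs ht => simp only [map_add, hs, ht]

lemma epsT3_emb12 (W : H ⊗[k] H) : epsT3 (emb12 k H W) = W := by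
  induction W using TensorProduct.induction_on with
  | zero => simp
  | tmul a b =>
    have : emb12 k H (a ⊗ₜ[k] b) = a ⊗ₜ[k] (b ⊗ₜ[k] (1:H)) := rfl
    rw [this, epsT3_tmul]
    simp
  | add s t hs ht => simp only [map_add, hs, ht]

variable {R : H ⊗[k] H}

lemma counitL_R (hR : IsUniversalRMatrix k H R) : (epsL R : H) = 1 := by
  have h := congrArg epsT1 hR.hexagon1
  rw [epsT1_DeltaId, map_mul, epsT1_emb13, epsT1_emb23] at h
  -- h : R = incl2 (epsL R) * R
  have h2 : incl2 (epsL R : H) = (1 : H ⊗[k] H) := by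
    have : (1 : H ⊗[k] H) * R = incl2 (epsL R : H) * R := by rw [one_mul, ← h]
    exact (hR.isUnit.mul_right_cancel this).symm
  have := congrArg (fun t => (epsL t : H)) h2
  simpa using this

lemma counitR_R (hR : IsUniversalRMatrix k H R) : (epsR R : H) = 1 := by
  have h := congrArg epsT3 hR.hexagon2
  rw [epsT3_IdDelta, map_mul, epsT3_emb13, epsT3_emb12] at h
  have h2 : incl1 (epsR R : H) = (1 : H ⊗[k] H) := by
    have : (1 : H ⊗[k] H) * R = incl1 (epsR R : H) * R := by rw [one_mul, ← h]
    exact (hR.isUnit.mul_right_cancel this).symm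
  have := congrArg (fun t => (epsR t : H)) h2
  simpa using this

end Drinfeld


namespace Drinfeld
variable {k H : Type*} [CommRing k] [Ring H] [HopfAlgebra k H]
open Coalgebra HopfAlgebra

lemma mulS_comul (a : H) :
    LinearMap.mul' k H ((TensorProduct.map (sA k H) LinearMap.id) (cm k H a))
      = algebraMap k H (cu k H a) :=
  HopfAlgebra.mul_antipode_rTensor_comul_apply a

lemma mulSl_comul (a : H) :
    LinearMap.mul' k H ((TensorProduct.map LinearMap.id (sA k H)) (cm k H a))
      = algebraMap k H (cu k H a) :=
  HopfAlgebra.mul_antipode_lTensor_comul_apply a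

/-- `x ⊗ w ↦ (S x ⊗ 1) * w`. -/
def W3 : H ⊗[k] (H ⊗[k] H) →ₗ[k] H ⊗[k] H :=
  LinearMap.mul' k (H ⊗[k] H) ∘ₗ TensorProduct.map (incl1 ∘ₗ sA k H) LinearMap.id

@[simp] lemma W3_tmul (x : H) (w : H ⊗[k] H) :
    (W3 (x ⊗ₜ[k] w) : H ⊗[k] H) = (sA k H x ⊗ₜ[k] (1:H)) * w := by
  simp [W3]

lemma W3_DeltaId (W : H ⊗[k] H) : W3 (DeltaId k H W) = incl2 (epsL W : H) := by
  have base : ∀ (t : H ⊗[k] H) (c : H),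
      W3 ((TensorProduct.assoc k H H H) (t ⊗ₜ[k] c))
        = (LinearMap.mul' k H ((TensorProduct.map (sA k H) LinearMap.id) t)) ⊗ₜ[k] c := by
    intro t c
    induction t using TensorProduct.induction_on with
    | zero =>
      rw [TensorProduct.zero_tmul, LinearEquiv.map_zero, map_zero, map_zero, map_zero,
        TensorProduct.zero_tmul]
    | tmul a b =>
      simp [Algebra.TensorProduct.tmul_mul_tmul]
    | add s t hs ht =>
      rw [TensorProduct.add_tmul, LinearEquiv.map_add, map_add, hs, ht, map_add, map_add,
        TensorProduct.add_tmul]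
  induction W using TensorProduct.induction_on with
  | zero => simp [DeltaId]
  | tmul a b =>
    have h0 : DeltaId k H (a ⊗ₜ[k] b)
        = (TensorProduct.assoc k H H H) ((cm k H a) ⊗ₜ[k] b) := rfl
    rw [h0, base, mulS_comul, Algebra.algebraMap_eq_smul_one, TensorProduct.smul_tmul]
    simp [TensorProduct.tmul_smul]
  | add s t hs ht => simp only [map_add, hs, ht]

lemma W3_emb13_mul_emb23 (W W' : H ⊗[k] H) :
    W3 (emb13 k H W * emb23 k H W')
      = (TensorProduct.map (sA k H) LinearMap.id) W * W' := by
  induction W using TensorProduct.induction_on with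
  | zero => simp
  | tmul a b =>
    induction W' using TensorProduct.induction_on with
    | zero => simp
    | tmul c d =>
      have h1 : emb13 k H (a ⊗ₜ[k] b) = a ⊗ₜ[k] ((1:H) ⊗ₜ[k] b) := rfl
      have h2 : emb23 k H (c ⊗ₜ[k] d) = (1:H) ⊗ₜ[k] (c ⊗ₜ[k] d) := rfl
      rw [h1, h2, Algebra.TensorProduct.tmul_mul_tmul, Algebra.TensorProduct.tmul_mul_tmul]
      rw [W3_tmul, TensorProduct.map_tmul, Algebra.TensorProduct.tmul_mul_tmul,
        Algebra.TensorProduct.tmul_mul_tmul]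
      simp
    | add w w' hw hw' => simp only [mul_add, map_add, hw, hw']
  | add w w' hw hw' => simp only [add_mul, map_add, hw, hw']

variable {R : H ⊗[k] H}

lemma Rinv_mul_R (hR : IsUniversalRMatrix k H R) :
    (TensorProduct.map (sA k H) LinearMap.id) R * R = 1 := by
  have h := congrArg W3 hR.hexagon1
  rw [W3_DeltaId, W3_emb13_mul_emb23, counitL_R hR] at h
  rw [← h]
  simp [Algebra.TensorProduct.one_def]

lemma R_mul_Rinv (hR : IsUniversalRMatrix k H R) :
    R * (TensorProduct.map (sA k H) LinearMap.id) R = 1 := by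
  obtain ⟨u, hu⟩ := hR.isUnit
  have hRu : R * ↑u⁻¹ = 1 := by rw [← hu]; exact_mod_cast u.mul_inv
  have hinv : (TensorProduct.map (sA k H) LinearMap.id) R = (↑u⁻¹ : H ⊗[k] H) := by
    calc (TensorProduct.map (sA k H) LinearMap.id) R
        = (TensorProduct.map (sA k H) LinearMap.id) R * (R * ↑u⁻¹) := by rw [hRu, mul_one]
      _ = ((TensorProduct.map (sA k H) LinearMap.id) R * R) * ↑u⁻¹ := (mul_assoc _ _ _).symm
      _ = ↑u⁻¹ := by rw [Rinv_mul_R hR, one_mul]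
  rw [hinv]; exact hRu

/-- `id ⊗ Δ` as an algebra hom. -/
def ID2 : H ⊗[k] H →ₐ[k] H ⊗[k] (H ⊗[k] H) :=
  Algebra.TensorProduct.map (AlgHom.id k H) (Bialgebra.comulAlgHom k H)

lemma ID2_eq (W : H ⊗[k] H) : ID2 W = IdDelta k H W := by
  induction W using TensorProduct.induction_on with
  | zero => simp [IdDelta]
  | tmul a b => rfl
  | add s t hs ht => simp only [map_add, hs, ht]

lemma IdDelta_Rinv (hR : IsUniversalRMatrix k H R) :
    IdDelta k H ((TensorProduct.map (sA k H) LinearMap.id) R)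
      = emb12 k H ((TensorProduct.map (sA k H) LinearMap.id) R) *
        emb13 k H ((TensorProduct.map (sA k H) LinearMap.id) R) := by
  set Ri := (TensorProduct.map (sA k H) LinearMap.id) R with hRi
  have e1 : IdDelta k H Ri * IdDelta k H R = 1 := by
    rw [← ID2_eq, ← ID2_eq, ← map_mul, Rinv_mul_R hR, map_one]
  have e3 : IdDelta k H R * (emb12 k H Ri * emb13 k H Ri) = 1 := by
    rw [hR.hexagon2, mul_assoc, ← mul_assoc (emb12 k H R) (emb12 k H Ri) (emb13 k H Ri),
      ← map_mul, R_mul_Rinv hR, map_one, one_mul, ← map_mul, R_mul_Rinv hR, map_one]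
  calc IdDelta k H Ri = IdDelta k H Ri * 1 := (mul_one _).symm
    _ = IdDelta k H Ri * (IdDelta k H R * (emb12 k H Ri * emb13 k H Ri)) := by rw [e3]
    _ = (IdDelta k H Ri * IdDelta k H R) * (emb12 k H Ri * emb13 k H Ri) :=
        (mul_assoc _ _ _).symm
    _ = emb12 k H Ri * emb13 k H Ri := by rw [e1, one_mul]

/-- `x ⊗ (y ⊗ z) ↦ x ⊗ (y * S z)`. -/
def W4 : H ⊗[k] (H ⊗[k] H) →ₗ[k] H ⊗[k] H :=
  TensorProduct.map LinearMap.id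
    (LinearMap.mul' k H ∘ₗ TensorProduct.map LinearMap.id (sA k H))

@[simp] lemma W4_tmul (x : H) (w : H ⊗[k] H) :
    W4 (x ⊗ₜ[k] w)
      = x ⊗ₜ[k] (LinearMap.mul' k H ((TensorProduct.map LinearMap.id (sA k H)) w)) := by
  simp [W4]

lemma W4_IdDelta (W : H ⊗[k] H) : W4 (IdDelta k H W) = incl1 (epsR W : H) := by
  induction W using TensorProduct.induction_on with
  | zero => simp [IdDelta]
  | tmul a b =>
    have h0 : IdDelta k H (a ⊗ₜ[k] b) = a ⊗ₜ[k] (cm k H b) := rfl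
    rw [h0, W4_tmul, mulSl_comul, Algebra.algebraMap_eq_smul_one, TensorProduct.tmul_smul]
    simp [TensorProduct.smul_tmul']
  | add s t hs ht => simp only [map_add, hs, ht]

lemma W4_emb12_mul_emb13 (W W' : H ⊗[k] H) :
    W4 (emb12 k H W * emb13 k H W')
      = W * (TensorProduct.map LinearMap.id (sA k H)) W' := by
  induction W using TensorProduct.induction_on with
  | zero => simp
  | tmul a b =>
    induction W' using TensorProduct.induction_on with
    | zero => simp
    | tmul c d =>
      have h1 : emb12 k H (a ⊗ₜ[k] b) = a ⊗ₜ[k] (b ⊗ₜ[k] (1:H)) := rfl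
      have h2 : emb13 k H (c ⊗ₜ[k] d) = c ⊗ₜ[k] ((1:H) ⊗ₜ[k] d) := rfl
      rw [h1, h2]
      simp [Algebra.TensorProduct.tmul_mul_tmul]
    | add w w' hw hw' => simp only [mul_add, map_add, hw, hw']
  | add w w' hw hw' => simp only [add_mul, map_add, hw, hw']

lemma idS_Rinv (hR : IsUniversalRMatrix k H R) :
    (TensorProduct.map LinearMap.id (sA k H)) ((TensorProduct.map (sA k H) LinearMap.id) R)
      = R := by
  set Ri := (TensorProduct.map (sA k H) LinearMap.id) R with hRi
  have h := congrArg W4 (IdDelta_Rinv hR)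
  rw [W4_IdDelta, W4_emb12_mul_emb13] at h
  have hc : (epsR Ri : H) = 1 := by
    have h2 : (epsR Ri : H) * (epsR R : H) = 1 := by
      rw [← map_mul, Rinv_mul_R hR, map_one]
    rw [counitR_R hR, mul_one] at h2; exact h2
  rw [hc] at h
  have h' : (1 : H ⊗[k] H) = Ri * (TensorProduct.map LinearMap.id (sA k H)) Ri := by
    rw [← h]; simp [Algebra.TensorProduct.one_def]
  calc (TensorProduct.map LinearMap.id (sA k H)) Ri
      = (R * Ri) * (TensorProduct.map LinearMap.id (sA k H)) Ri := by
        rw [R_mul_Rinv hR, one_mul]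
    _ = R * (Ri * (TensorProduct.map LinearMap.id (sA k H)) Ri) := mul_assoc _ _ _
    _ = R := by rw [← h', mul_one]

lemma mapSS_R (hR : IsUniversalRMatrix k H R) :
    (TensorProduct.map (sA k H) (sA k H)) R = R := by
  have hcomp : TensorProduct.map (sA k H) (sA k H)
      = (TensorProduct.map LinearMap.id (sA k H)) ∘ₗ
          (TensorProduct.map (sA k H) LinearMap.id) := by
    rw [← TensorProduct.map_comp]; simp
  rw [hcomp, LinearMap.comp_apply, idS_Rinv hR]

lemma mapSS_mul (Z W : H ⊗[k] H) :
    (TensorProduct.map (sA k H) (sA k H)) (Z * W)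
      = (TensorProduct.map (sA k H) (sA k H)) W * (TensorProduct.map (sA k H) (sA k H)) Z := by
  induction Z using TensorProduct.induction_on with
  | zero => simp
  | tmul a b =>
    induction W using TensorProduct.induction_on with
    | zero => simp
    | tmul c d =>
      simp only [Algebra.TensorProduct.tmul_mul_tmul, TensorProduct.map_tmul]
      rw [antipode_mul, antipode_mul]
    | add w w' hw hw' => simp only [mul_add, map_add, hw, hw', add_mul]
  | add z z' hz hz' => simp only [add_mul, map_add, hz, hz', mul_add]

@[simp] lemma mapSS_one : (TensorProduct.map (sA k H) (sA k H)) (1 : H ⊗[k] H) = 1 := by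
  rw [Algebra.TensorProduct.one_def]
  simp

lemma mapSS_Rinv (hR : IsUniversalRMatrix k H R) :
    (TensorProduct.map (sA k H) (sA k H)) ((TensorProduct.map (sA k H) LinearMap.id) R)
      = (TensorProduct.map (sA k H) LinearMap.id) R := by
  set Ri := (TensorProduct.map (sA k H) LinearMap.id) R with hRi
  have h1 : R * (TensorProduct.map (sA k H) (sA k H)) Ri = 1 := by
    have := congrArg (TensorProduct.map (sA k H) (sA k H)) (Rinv_mul_R hR)
    rw [mapSS_mul, mapSS_R hR, mapSS_one] at this
    exact this
  calc (TensorProduct.map (sA k H) (sA k H)) Ri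
      = (Ri * R) * (TensorProduct.map (sA k H) (sA k H)) Ri := by
        rw [Rinv_mul_R hR, one_mul]
    _ = Ri * (R * (TensorProduct.map (sA k H) (sA k H)) Ri) := mul_assoc _ _ _
    _ = Ri := by rw [h1, mul_one]

@[simp] lemma DeltaT_apply (a : H) : DeltaT k H a = tau k H (cm k H a) := rfl

lemma tau_comm_DeltaT (hR : IsUniversalRMatrix k H R) (a : H) :
    tau k H R * DeltaT k H a = cm k H a * tau k H R := by
  have h := congrArg (tau k H) (hR.intertwine a)
  rw [tau_mul, tau_mul, DeltaT_apply, tau_tau] at h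
  exact h

lemma Q_comm (hR : IsUniversalRMatrix k H R) (a : H) :
    (tau k H R * R) * cm k H a = cm k H a * (tau k H R * R) := by
  rw [mul_assoc, hR.intertwine a, ← mul_assoc, tau_comm_DeltaT hR a, mul_assoc]

lemma P_comm (hR : IsUniversalRMatrix k H R) (a : H) :
    (R * tau k H R) * DeltaT k H a = DeltaT k H a * (R * tau k H R) := by
  rw [mul_assoc, tau_comm_DeltaT hR a, ← mul_assoc, hR.intertwine a, mul_assoc]

end Drinfeld


namespace Drinfeld
variable {k H : Type*} [CommRing k] [Ring H] [HopfAlgebra k H]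
open Coalgebra HopfAlgebra

/-- `y ⊗ z ↦ S(z) y`. -/
def kappa : H ⊗[k] H →ₗ[k] H :=
  LinearMap.mul' k H ∘ₗ TensorProduct.map (sA k H) LinearMap.id ∘ₗ tau k H

@[simp] lemma kappa_tmul (y z : H) : (kappa (y ⊗ₜ[k] z) : H) = sA k H z * y := by
  simp [kappa]

lemma uOp_eq_kappa (R : H ⊗[k] H) : uOp k H R = kappa R := rfl

/-- `y ⊗ z ↦ S(z) (c y)`. -/
def zeta (c : H) : H ⊗[k] H →ₗ[k] H :=
  LinearMap.mul' k H ∘ₗ TensorProduct.map (sA k H) (LinearMap.mulLeft k c) ∘ₗ tau k H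

@[simp] lemma zeta_tmul (c y z : H) : (zeta c (y ⊗ₜ[k] z) : H) = sA k H z * (c * y) := by
  simp [zeta]

lemma zeta_add (c c' : H) (t : H ⊗[k] H) : zeta (c + c') t = zeta c t + zeta c' t := by
  induction t using TensorProduct.induction_on with
  | zero => simp
  | tmul y z => simp [add_mul, mul_add]
  | add s t hs ht => simp only [map_add, hs, ht]; abel

lemma zeta_zero (t : H ⊗[k] H) : zeta 0 t = 0 := by
  induction t using TensorProduct.induction_on with
  | zero => simp
  | tmul y z => simp
  | add s t hs ht => simp only [map_add, hs, ht, add_zero]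

lemma kappa_mul (W V : H ⊗[k] H) : kappa (W * V) = zeta (kappa W) V := by
  induction W using TensorProduct.induction_on with
  | zero =>
    rw [zero_mul, map_zero, zeta_zero]
  | tmul m n =>
    induction V using TensorProduct.induction_on with
    | zero => simp
    | tmul y z =>
      rw [Algebra.TensorProduct.tmul_mul_tmul, kappa_tmul, kappa_tmul, zeta_tmul,
        antipode_mul]
      simp only [mul_assoc]
    | add s t hs ht => simp only [mul_add, map_add, hs, ht]
  | add W W' hW hW' =>
    rw [add_mul, map_add, map_add, hW, hW', zeta_add]

lemma kappa_DeltaT_mul (x : H) (W : H ⊗[k] H) :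
    kappa (DeltaT k H x * W) = cu k H x • kappa W := by
  induction W using TensorProduct.induction_on with
  | zero => simp
  | tmul m n =>
    have hD : DeltaT k H x
        = ∑ i ∈ (ℛ k x).index, (ℛ k x).right i ⊗ₜ[k] (ℛ k x).left i := by
      rw [DeltaT_apply]
      have : cm k H x = ∑ i ∈ (ℛ k x).index, (ℛ k x).left i ⊗ₜ[k] (ℛ k x).right i :=
        ((ℛ k x).eq).symm
      rw [this, map_sum]
      simp
    rw [hD, Finset.sum_mul, map_sum]
    calc ∑ i ∈ (ℛ k x).index,
          kappa ((((ℛ k x).right i) ⊗ₜ[k] ((ℛ k x).left i)) * (m ⊗ₜ[k] n))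
        = ∑ i ∈ (ℛ k x).index,
            sA k H n * ((sA k H ((ℛ k x).left i) * (ℛ k x).right i) * m) := by
          refine Finset.sum_congr rfl fun i _ => ?_
          rw [Algebra.TensorProduct.tmul_mul_tmul, kappa_tmul, antipode_mul]
          simp only [mul_assoc]
      _ = sA k H n * ((∑ i ∈ (ℛ k x).index,
            sA k H ((ℛ k x).left i) * (ℛ k x).right i) * m) := by
          rw [Finset.sum_mul, Finset.mul_sum]
      _ = cu k H x • kappa (m ⊗ₜ[k] n) := by
          rw [repr_antipode_mul (ℛ k x), kappa_tmul]
          rw [smul_mul_assoc, one_mul, mul_smul_comm]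
  | add s t hs ht => simp only [mul_add, map_add, hs, ht, smul_add]

variable {R : H ⊗[k] H}

lemma zeta_u_comul (hR : IsUniversalRMatrix k H R) (x : H) :
    zeta (uOp k H R) (cm k H x) = cu k H x • uOp k H R := by
  rw [uOp_eq_kappa, ← kappa_mul, hR.intertwine x, kappa_DeltaT_mul]

theorem u_mul_eq (hR : IsUniversalRMatrix k H R) (x : H) :
    uOp k H R * x = sA k H (sA k H x) * uOp k H R := by
  set u := uOp k H R with hu
  set rx := ℛ k x with hrx
  set rr : ∀ i, Coalgebra.Repr k (rx.right i) (H × H) := fun i => ℛ k (rx.right i) with hrr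
  set F : H ⊗[k] (H ⊗[k] H) →ₗ[k] H :=
    LinearMap.mul' k H ∘ₗ
      (TensorProduct.map (sA k H ∘ₗ sA k H) (zeta u)) ∘ₗ
      (TensorProduct.comm k (H ⊗[k] H) H).toLinearMap ∘ₗ
      (TensorProduct.assoc k H H H).symm.toLinearMap with hF
  have hFt : ∀ p q t : H, F (p ⊗ₜ (q ⊗ₜ t)) = sA k H (sA k H t) * zeta u (p ⊗ₜ[k] q) := by
    intros; simp [hF]
  have key := Coalgebra.sum_tmul_tmul_eq (R := k) rx (fun i => ℛ k (rx.left i)) rr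
  have key' := congrArg F key
  simp only [map_sum, hFt] at key'
  have claimB : ∑ i ∈ rx.index, ∑ j ∈ (ℛ k (rx.left i)).index,
      sA k H (sA k H (rx.right i)) *
        zeta u ((ℛ k (rx.left i)).left j ⊗ₜ[k] (ℛ k (rx.left i)).right j)
      = sA k H (sA k H x) * u := by
    calc ∑ i ∈ rx.index, ∑ j ∈ (ℛ k (rx.left i)).index,
          sA k H (sA k H (rx.right i)) *
            zeta u ((ℛ k (rx.left i)).left j ⊗ₜ[k] (ℛ k (rx.left i)).right j)
        = ∑ i ∈ rx.index, sA k H (sA k H (rx.right i)) * (cu k H (rx.left i) • u) := by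
          refine Finset.sum_congr rfl fun i _ => ?_
          rw [← Finset.mul_sum, ← map_sum]
          have : ∑ j ∈ (ℛ k (rx.left i)).index,
              (ℛ k (rx.left i)).left j ⊗ₜ[k] (ℛ k (rx.left i)).right j
              = cm k H (rx.left i) := (ℛ k (rx.left i)).eq
          rw [this, zeta_u_comul hR]
      _ = (∑ i ∈ rx.index, cu k H (rx.left i) • sA k H (sA k H (rx.right i))) * u := by
          rw [Finset.sum_mul]
          refine Finset.sum_congr rfl fun i _ => ?_
          rw [mul_smul_comm, smul_mul_assoc]
      _ = sA k H (sA k H x) * u := by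
          congr 1
          simp only [← map_smul]
          rw [← map_sum, ← map_sum, sum_counit_left rx]
  have claimA : ∑ i ∈ rx.index, ∑ j ∈ (rr i).index,
      sA k H (sA k H ((rr i).right j)) *
        zeta u (rx.left i ⊗ₜ[k] (rr i).left j)
      = u * x := by
    calc ∑ i ∈ rx.index, ∑ j ∈ (rr i).index,
          sA k H (sA k H ((rr i).right j)) * zeta u (rx.left i ⊗ₜ[k] (rr i).left j)
        = ∑ i ∈ rx.index, ∑ j ∈ (rr i).index,
            ((sA k H (sA k H ((rr i).right j)) * sA k H ((rr i).left j)) * (u * rx.left i)) := by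
          refine Finset.sum_congr rfl fun i _ => Finset.sum_congr rfl fun j _ => ?_
          rw [zeta_tmul]
          simp only [mul_assoc]
      _ = ∑ i ∈ rx.index,
            (∑ j ∈ (rr i).index, sA k H ((rr i).left j * sA k H ((rr i).right j)))
              * (u * rx.left i) := by
          refine Finset.sum_congr rfl fun i _ => ?_
          rw [Finset.sum_mul]
          refine Finset.sum_congr rfl fun j _ => ?_
          rw [antipode_mul]
      _ = ∑ i ∈ rx.index, cu k H (rx.right i) • (u * rx.left i) := by
          refine Finset.sum_congr rfl fun i _ => ?_
          rw [← map_sum, repr_mul_antipode (rr i), map_smul, antipode_one]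
          rw [smul_mul_assoc, one_mul]
      _ = u * x := by
          have h : ∀ i ∈ rx.index, cu k H (rx.right i) • (u * rx.left i)
              = u * (cu k H (rx.right i) • rx.left i) :=
            fun i _ => (mul_smul_comm _ _ _).symm
          rw [Finset.sum_congr rfl h, ← Finset.mul_sum, sum_counit_right rx]
  rw [← claimA, ← key', claimB]

end Drinfeld


namespace Drinfeld
variable {k H : Type*} [CommRing k] [Ring H] [HopfAlgebra k H]
open Coalgebra HopfAlgebra

/-- `x ↦ x ⊗ 1` as an algebra hom. -/
def jL : H →ₐ[k] H ⊗[k] H := Algebra.TensorProduct.includeLeft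
/-- `x ↦ 1 ⊗ x` as an algebra hom. -/
def jR : H →ₐ[k] H ⊗[k] H := Algebra.TensorProduct.includeRight

/-- Slot embeddings `H ⊗ H → (H ⊗ H) ⊗ (H ⊗ H)`. -/
def e13 : H ⊗[k] H →ₐ[k] (H ⊗[k] H) ⊗[k] (H ⊗[k] H) := Algebra.TensorProduct.map jL jL
def e14 : H ⊗[k] H →ₐ[k] (H ⊗[k] H) ⊗[k] (H ⊗[k] H) := Algebra.TensorProduct.map jL jR
def e23 : H ⊗[k] H →ₐ[k] (H ⊗[k] H) ⊗[k] (H ⊗[k] H) := Algebra.TensorProduct.map jR jL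
def e24 : H ⊗[k] H →ₐ[k] (H ⊗[k] H) ⊗[k] (H ⊗[k] H) := Algebra.TensorProduct.map jR jR

@[simp] lemma e13_tmul (a b : H) :
    (e13 (a ⊗ₜ[k] b) : (H ⊗[k] H) ⊗[k] (H ⊗[k] H))
      = (a ⊗ₜ[k] (1:H)) ⊗ₜ[k] (b ⊗ₜ[k] (1:H)) := rfl
@[simp] lemma e14_tmul (a b : H) :
    (e14 (a ⊗ₜ[k] b) : (H ⊗[k] H) ⊗[k] (H ⊗[k] H))
      = (a ⊗ₜ[k] (1:H)) ⊗ₜ[k] ((1:H) ⊗ₜ[k] b) := rfl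
@[simp] lemma e23_tmul (a b : H) :
    (e23 (a ⊗ₜ[k] b) : (H ⊗[k] H) ⊗[k] (H ⊗[k] H))
      = ((1:H) ⊗ₜ[k] a) ⊗ₜ[k] (b ⊗ₜ[k] (1:H)) := rfl
@[simp] lemma e24_tmul (a b : H) :
    (e24 (a ⊗ₜ[k] b) : (H ⊗[k] H) ⊗[k] (H ⊗[k] H))
      = ((1:H) ⊗ₜ[k] a) ⊗ₜ[k] ((1:H) ⊗ₜ[k] b) := rfl

/-- `x ↦ (1 ⊗ x) ⊗ 1`. -/
def fAux : H →ₐ[k] (H ⊗[k] H) ⊗[k] (H ⊗[k] H) :=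
  (Algebra.TensorProduct.includeLeft : (H ⊗[k] H) →ₐ[k] _).comp jR

lemma fAux_apply (x : H) :
    (fAux x : (H ⊗[k] H) ⊗[k] (H ⊗[k] H)) = ((1:H) ⊗ₜ[k] x) ⊗ₜ[k] (1 : H ⊗[k] H) := rfl

lemma fAux_comm_e13 (x : H) (w : H ⊗[k] H) : Commute (fAux x) (e13 w) := by
  induction w using TensorProduct.induction_on with
  | zero => rw [map_zero]; exact Commute.zero_right _
  | tmul a b =>
    show fAux x * e13 (a ⊗ₜ[k] b) = e13 (a ⊗ₜ[k] b) * fAux x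
    rw [fAux_apply, e13_tmul, Algebra.TensorProduct.one_def,
      Algebra.TensorProduct.tmul_mul_tmul, Algebra.TensorProduct.tmul_mul_tmul,
      Algebra.TensorProduct.tmul_mul_tmul, Algebra.TensorProduct.tmul_mul_tmul]
    simp
  | add s t hs ht => rw [map_add]; exact Commute.add_right hs ht

lemma fAux_comm_e14 (x : H) (w : H ⊗[k] H) : Commute (fAux x) (e14 w) := by
  induction w using TensorProduct.induction_on with
  | zero => rw [map_zero]; exact Commute.zero_right _
  | tmul a b =>
    show fAux x * e14 (a ⊗ₜ[k] b) = e14 (a ⊗ₜ[k] b) * fAux x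
    rw [fAux_apply, e14_tmul, Algebra.TensorProduct.one_def,
      Algebra.TensorProduct.tmul_mul_tmul, Algebra.TensorProduct.tmul_mul_tmul,
      Algebra.TensorProduct.tmul_mul_tmul, Algebra.TensorProduct.tmul_mul_tmul]
    simp
  | add s t hs ht => rw [map_add]; exact Commute.add_right hs ht

/-- `x ⊗ (y ⊗ z) ↦ (y ⊗ x) ⊗ (z ⊗ 1)`. -/
def sigma1 : H ⊗[k] (H ⊗[k] H) →ₐ[k] (H ⊗[k] H) ⊗[k] (H ⊗[k] H) :=
  Algebra.TensorProduct.lift fAux e13 fAux_comm_e13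

/-- `x ⊗ (y ⊗ z) ↦ (y ⊗ x) ⊗ (1 ⊗ z)`. -/
def sigma2 : H ⊗[k] (H ⊗[k] H) →ₐ[k] (H ⊗[k] H) ⊗[k] (H ⊗[k] H) :=
  Algebra.TensorProduct.lift fAux e14 fAux_comm_e14

@[simp] lemma sigma1_tmul (x y z : H) :
    sigma1 (x ⊗ₜ[k] (y ⊗ₜ[k] z)) = (y ⊗ₜ[k] x) ⊗ₜ[k] (z ⊗ₜ[k] (1:H)) := by
  show fAux x * e13 (y ⊗ₜ[k] z) = _
  rw [fAux_apply, e13_tmul, Algebra.TensorProduct.tmul_mul_tmul,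
    Algebra.TensorProduct.tmul_mul_tmul]
  simp

@[simp] lemma sigma2_tmul (x y z : H) :
    sigma2 (x ⊗ₜ[k] (y ⊗ₜ[k] z)) = (y ⊗ₜ[k] x) ⊗ₜ[k] ((1:H) ⊗ₜ[k] z) := by
  show fAux x * e14 (y ⊗ₜ[k] z) = _
  rw [fAux_apply, e14_tmul, Algebra.TensorProduct.tmul_mul_tmul,
    Algebra.TensorProduct.tmul_mul_tmul]
  simp

lemma sigma1_DeltaId (W : H ⊗[k] H) :
    sigma1 (DeltaId k H W) = (TensorProduct.map (DeltaT k H) incl1) W := by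
  have base : ∀ (t : H ⊗[k] H) (c : H),
      sigma1 ((TensorProduct.assoc k H H H) (t ⊗ₜ[k] c))
        = (tau k H t) ⊗ₜ[k] (c ⊗ₜ[k] (1:H)) := by
    intro t c
    induction t using TensorProduct.induction_on with
    | zero =>
      rw [TensorProduct.zero_tmul, LinearEquiv.map_zero, map_zero, map_zero,
        TensorProduct.zero_tmul]
    | tmul a b => simp
    | add s t hs ht =>
      rw [TensorProduct.add_tmul, LinearEquiv.map_add, map_add, hs, ht, map_add,
        TensorProduct.add_tmul]
  induction W using TensorProduct.induction_on with
  | zero => simp [DeltaId]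
  | tmul a b =>
    have h0 : DeltaId k H (a ⊗ₜ[k] b)
        = (TensorProduct.assoc k H H H) ((cm k H a) ⊗ₜ[k] b) := rfl
    rw [h0, base, TensorProduct.map_tmul, DeltaT_apply, incl1_apply]
  | add s t hs ht => simp only [map_add, hs, ht]

lemma sigma2_DeltaId (W : H ⊗[k] H) :
    sigma2 (DeltaId k H W) = (TensorProduct.map (DeltaT k H) incl2) W := by
  have base : ∀ (t : H ⊗[k] H) (c : H),
      sigma2 ((TensorProduct.assoc k H H H) (t ⊗ₜ[k] c))
        = (tau k H t) ⊗ₜ[k] ((1:H) ⊗ₜ[k] c) := by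
    intro t c
    induction t using TensorProduct.induction_on with
    | zero =>
      rw [TensorProduct.zero_tmul, LinearEquiv.map_zero, map_zero, map_zero,
        TensorProduct.zero_tmul]
    | tmul a b => simp
    | add s t hs ht =>
      rw [TensorProduct.add_tmul, LinearEquiv.map_add, map_add, hs, ht, map_add,
        TensorProduct.add_tmul]
  induction W using TensorProduct.induction_on with
  | zero => simp [DeltaId]
  | tmul a b =>
    have h0 : DeltaId k H (a ⊗ₜ[k] b)
        = (TensorProduct.assoc k H H H) ((cm k H a) ⊗ₜ[k] b) := rfl
    rw [h0, base, TensorProduct.map_tmul, DeltaT_apply, incl2_apply]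
  | add s t hs ht => simp only [map_add, hs, ht]

lemma sigma1_emb13 (W : H ⊗[k] H) : sigma1 (emb13 k H W) = e23 W := by
  induction W using TensorProduct.induction_on with
  | zero => simp
  | tmul a b =>
    have h0 : emb13 k H (a ⊗ₜ[k] b) = a ⊗ₜ[k] ((1:H) ⊗ₜ[k] b) := rfl
    rw [h0, sigma1_tmul, e23_tmul]
  | add s t hs ht => simp only [map_add, hs, ht]

lemma sigma1_emb23 (W : H ⊗[k] H) : sigma1 (emb23 k H W) = e13 W := by
  induction W using TensorProduct.induction_on with
  | zero => simp
  | tmul a b =>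
    have h0 : emb23 k H (a ⊗ₜ[k] b) = (1:H) ⊗ₜ[k] (a ⊗ₜ[k] b) := rfl
    rw [h0, sigma1_tmul, e13_tmul]
  | add s t hs ht => simp only [map_add, hs, ht]

lemma sigma2_emb13 (W : H ⊗[k] H) : sigma2 (emb13 k H W) = e24 W := by
  induction W using TensorProduct.induction_on with
  | zero => simp
  | tmul a b =>
    have h0 : emb13 k H (a ⊗ₜ[k] b) = a ⊗ₜ[k] ((1:H) ⊗ₜ[k] b) := rfl
    rw [h0, sigma2_tmul, e24_tmul]
  | add s t hs ht => simp only [map_add, hs, ht]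

lemma sigma2_emb23 (W : H ⊗[k] H) : sigma2 (emb23 k H W) = e14 W := by
  induction W using TensorProduct.induction_on with
  | zero => simp
  | tmul a b =>
    have h0 : emb23 k H (a ⊗ₜ[k] b) = (1:H) ⊗ₜ[k] (a ⊗ₜ[k] b) := rfl
    rw [h0, sigma2_tmul, e14_tmul]
  | add s t hs ht => simp only [map_add, hs, ht]

/-- `Δᵀ` as an algebra hom. -/
def DeltaTA : H →ₐ[k] H ⊗[k] H :=
  (Algebra.TensorProduct.comm k H H).toAlgHom.comp (Bialgebra.comulAlgHom k H)

lemma tauA_eq (t : H ⊗[k] H) : (Algebra.TensorProduct.comm k H H) t = tau k H t := by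
  induction t using TensorProduct.induction_on with
  | zero => simp
  | tmul a b => rfl
  | add s t hs ht => simp only [map_add, hs, ht]

lemma DeltaTA_eq (a : H) : (DeltaTA a : H ⊗[k] H) = DeltaT k H a := by
  show (Algebra.TensorProduct.comm k H H) (cm k H a) = _
  rw [tauA_eq, DeltaT_apply]

/-- `Δᵀ ⊗ id` as an algebra hom. -/
def PhiT : H ⊗[k] (H ⊗[k] H) →ₐ[k] (H ⊗[k] H) ⊗[k] (H ⊗[k] H) :=
  Algebra.TensorProduct.map DeltaTA (AlgHom.id k (H ⊗[k] H))

lemma PhiT_eq (t : H ⊗[k] (H ⊗[k] H)) :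
    PhiT t = (TensorProduct.map (DeltaT k H) LinearMap.id) t := by
  induction t using TensorProduct.induction_on with
  | zero => simp
  | tmul x w =>
    show (DeltaTA x) ⊗ₜ[k] w = _
    rw [DeltaTA_eq, TensorProduct.map_tmul, LinearMap.id_apply]
  | add s t hs ht => simp only [map_add, hs, ht]

/-- `id ⊗ τ` as an algebra hom on `H ⊗ (H ⊗ H)`. -/
def Jmap : H ⊗[k] (H ⊗[k] H) →ₐ[k] H ⊗[k] (H ⊗[k] H) :=
  Algebra.TensorProduct.map (AlgHom.id k H) (Algebra.TensorProduct.comm k H H).toAlgHom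

lemma Jmap_IdDelta (W : H ⊗[k] H) :
    Jmap (IdDelta k H W) = (TensorProduct.map LinearMap.id (DeltaT k H)) W := by
  induction W using TensorProduct.induction_on with
  | zero => simp [IdDelta]
  | tmul a b =>
    have h0 : IdDelta k H (a ⊗ₜ[k] b) = a ⊗ₜ[k] (cm k H b) := rfl
    rw [h0]
    show a ⊗ₜ[k] ((Algebra.TensorProduct.comm k H H) (cm k H b)) = _
    rw [tauA_eq, TensorProduct.map_tmul, LinearMap.id_apply, DeltaT_apply]
  | add s t hs ht => simp only [map_add, hs, ht]

lemma Jmap_emb13 (W : H ⊗[k] H) : Jmap (emb13 k H W) = emb12 k H W := by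
  induction W using TensorProduct.induction_on with
  | zero => simp
  | tmul a b => rfl
  | add s t hs ht => simp only [map_add, hs, ht]

lemma Jmap_emb12 (W : H ⊗[k] H) : Jmap (emb12 k H W) = emb13 k H W := by
  induction W using TensorProduct.induction_on with
  | zero => simp
  | tmul a b => rfl
  | add s t hs ht => simp only [map_add, hs, ht]

variable {R : H ⊗[k] H}

/-- τ-twisted hexagon 2 : `(id ⊗ Δᵀ) R = R₁₂ R₁₃`. -/
lemma hexagon2T (hR : IsUniversalRMatrix k H R) :
    (TensorProduct.map LinearMap.id (DeltaT k H)) R = emb12 k H R * emb13 k H R := by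
  have h := congrArg Jmap hR.hexagon2
  rw [Jmap_IdDelta, map_mul, Jmap_emb13, Jmap_emb12] at h
  exact h

lemma PhiT_emb12_R (hR : IsUniversalRMatrix k H R) :
    PhiT (emb12 k H R) = e23 R * e13 R := by
  have h1 : ∀ W : H ⊗[k] H, PhiT (emb12 k H W) = sigma1 (DeltaId k H W) := by
    intro W
    rw [sigma1_DeltaId]
    induction W using TensorProduct.induction_on with
    | zero => simp
    | tmul a b =>
      have h0 : emb12 k H (a ⊗ₜ[k] b) = a ⊗ₜ[k] (b ⊗ₜ[k] (1:H)) := rfl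
      rw [h0]
      show (DeltaTA a) ⊗ₜ[k] (b ⊗ₜ[k] (1:H)) = _
      rw [DeltaTA_eq, TensorProduct.map_tmul, incl1_apply]
    | add s t hs ht => simp only [map_add, hs, ht]
  rw [h1, hR.hexagon1, map_mul, sigma1_emb13, sigma1_emb23]

lemma PhiT_emb13_R (hR : IsUniversalRMatrix k H R) :
    PhiT (emb13 k H R) = e24 R * e14 R := by
  have h1 : ∀ W : H ⊗[k] H, PhiT (emb13 k H W) = sigma2 (DeltaId k H W) := by
    intro W
    rw [sigma2_DeltaId]
    induction W using TensorProduct.induction_on with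
    | zero => simp
    | tmul a b =>
      have h0 : emb13 k H (a ⊗ₜ[k] b) = a ⊗ₜ[k] ((1:H) ⊗ₜ[k] b) := rfl
      rw [h0]
      show (DeltaTA a) ⊗ₜ[k] ((1:H) ⊗ₜ[k] b) = _
      rw [DeltaTA_eq, TensorProduct.map_tmul, incl2_apply]
    | add s t hs ht => simp only [map_add, hs, ht]
  rw [h1, hR.hexagon1, map_mul, sigma2_emb13, sigma2_emb23]

/-- The expansion `(Δᵀ ⊗ Δᵀ) R = R₂₃ R₁₃ R₂₄ R₁₄`. -/
lemma mapDT_R (hR : IsUniversalRMatrix k H R) :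
    (TensorProduct.map (DeltaT k H) (DeltaT k H)) R
      = e23 R * e13 R * (e24 R * e14 R) := by
  have hsplit : TensorProduct.map (DeltaT k H) (DeltaT k H)
      = (TensorProduct.map (DeltaT k H) LinearMap.id) ∘ₗ
          (TensorProduct.map LinearMap.id (DeltaT k H)) := by
    rw [← TensorProduct.map_comp]; simp
  rw [hsplit, LinearMap.comp_apply, ← PhiT_eq, hexagon2T hR, map_mul,
    PhiT_emb12_R hR, PhiT_emb13_R hR]

lemma e13_e24_comm (W W' : H ⊗[k] H) : e13 W * e24 W' = e24 W' * e13 W := by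
  induction W using TensorProduct.induction_on with
  | zero => simp
  | tmul a b =>
    induction W' using TensorProduct.induction_on with
    | zero => simp
    | tmul c d =>
      rw [e13_tmul, e24_tmul, Algebra.TensorProduct.tmul_mul_tmul,
        Algebra.TensorProduct.tmul_mul_tmul, Algebra.TensorProduct.tmul_mul_tmul,
        Algebra.TensorProduct.tmul_mul_tmul, Algebra.TensorProduct.tmul_mul_tmul,
        Algebra.TensorProduct.tmul_mul_tmul]
      simp
    | add w w' hw hw' => simp only [mul_add, map_add, hw, hw', add_mul]
  | add w w' hw hw' => simp only [add_mul, map_add, hw, hw', mul_add]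

/-- Slot-(2;(3,4)) embedding of `H ⊗ (H ⊗ H)`. -/
def theta24 : H ⊗[k] (H ⊗[k] H) →ₐ[k] (H ⊗[k] H) ⊗[k] (H ⊗[k] H) :=
  Algebra.TensorProduct.map jR (AlgHom.id k (H ⊗[k] H))

@[simp] lemma theta24_tmul (x : H) (w : H ⊗[k] H) :
    theta24 (x ⊗ₜ[k] w) = ((1:H) ⊗ₜ[k] x) ⊗ₜ[k] w := rfl

lemma e23_mul_e24 (W W' : H ⊗[k] H) :
    e23 W * e24 W' = theta24 (emb12 k H W * emb13 k H W') := by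
  induction W using TensorProduct.induction_on with
  | zero => simp
  | tmul a b =>
    induction W' using TensorProduct.induction_on with
    | zero => simp
    | tmul c d =>
      have h1 : emb12 k H (a ⊗ₜ[k] b) = a ⊗ₜ[k] (b ⊗ₜ[k] (1:H)) := rfl
      have h2 : emb13 k H (c ⊗ₜ[k] d) = c ⊗ₜ[k] ((1:H) ⊗ₜ[k] d) := rfl
      rw [e23_tmul, e24_tmul, h1, h2]
      simp [Algebra.TensorProduct.tmul_mul_tmul]
    | add w w' hw hw' => simp only [mul_add, map_add, hw, hw']
  | add w w' hw hw' => simp only [add_mul, map_add, hw, hw']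

end Drinfeld


namespace Drinfeld
variable {k H : Type*} [CommRing k] [Ring H] [HopfAlgebra k H]
open Coalgebra HopfAlgebra

/-- `α ⊗ β ↦ (S⊗S)(β) · τ(α)`. -/
def psi2 : (H ⊗[k] H) ⊗[k] (H ⊗[k] H) →ₗ[k] H ⊗[k] H :=
  LinearMap.mul' k (H ⊗[k] H) ∘ₗ
    TensorProduct.map (TensorProduct.map (sA k H) (sA k H)) (tau k H) ∘ₗ
    (TensorProduct.comm k (H ⊗[k] H) (H ⊗[k] H)).toLinearMap

@[simp] lemma psi2_tmul (α β : H ⊗[k] H) :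
    psi2 (α ⊗ₜ[k] β) = (TensorProduct.map (sA k H) (sA k H)) β * tau k H α := by
  simp [psi2]

/-- `(i ⊗ j) ↦ (Z ↦ (1 ⊗ S j) Z (1 ⊗ i))`. -/
def G2 : H ⊗[k] H →ₗ[k] (H ⊗[k] H) →ₗ[k] H ⊗[k] H :=
  TensorProduct.lift <| LinearMap.mk₂ k
    (fun i j => LinearMap.mulLeft k ((1:H) ⊗ₜ[k] sA k H j) ∘ₗ
      LinearMap.mulRight k ((1:H) ⊗ₜ[k] i))
    (fun i i' j => by
      apply LinearMap.ext; intro Z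
      simp [TensorProduct.tmul_add, mul_add])
    (fun c i j => by
      apply LinearMap.ext; intro Z
      simp [TensorProduct.tmul_smul, mul_smul_comm, smul_mul_assoc])
    (fun i j j' => by
      apply LinearMap.ext; intro Z
      simp [map_add, TensorProduct.tmul_add, add_mul])
    (fun c i j => by
      apply LinearMap.ext; intro Z
      simp [map_smul, TensorProduct.tmul_smul, smul_mul_assoc])

@[simp] lemma G2_tmul (i j : H) (Z : H ⊗[k] H) :
    G2 (i ⊗ₜ[k] j) Z = ((1:H) ⊗ₜ[k] sA k H j) * (Z * ((1:H) ⊗ₜ[k] i)) := by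
  simp [G2]

/-- `(c ⊗ d) ↦ (Z ↦ (S d ⊗ 1) Z (1 ⊗ c))`. -/
def G1 : H ⊗[k] H →ₗ[k] (H ⊗[k] H) →ₗ[k] H ⊗[k] H :=
  TensorProduct.lift <| LinearMap.mk₂ k
    (fun c d => LinearMap.mulLeft k (sA k H d ⊗ₜ[k] (1:H)) ∘ₗ
      LinearMap.mulRight k ((1:H) ⊗ₜ[k] c))
    (fun c c' d => by
      apply LinearMap.ext; intro Z
      simp [TensorProduct.tmul_add, mul_add])
    (fun r c d => by
      apply LinearMap.ext; intro Z
      simp [TensorProduct.tmul_smul, mul_smul_comm, smul_mul_assoc])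
    (fun c d d' => by
      apply LinearMap.ext; intro Z
      simp [map_add, TensorProduct.add_tmul, add_mul])
    (fun r c d => by
      apply LinearMap.ext; intro Z
      simp only [map_smul, LinearMap.comp_apply, LinearMap.mulLeft_apply,
        LinearMap.mulRight_apply, ← TensorProduct.smul_tmul', smul_mul_assoc,
        LinearMap.smul_apply])

@[simp] lemma G1_tmul (c d : H) (Z : H ⊗[k] H) :
    G1 (c ⊗ₜ[k] d) Z = (sA k H d ⊗ₜ[k] (1:H)) * (Z * ((1:H) ⊗ₜ[k] c)) := by
  simp [G1]

/-- `x ⊗ w ↦ (S⊗S)(w) · Q · (x ⊗ 1)`. -/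
def ThetaQ (Q : H ⊗[k] H) : H ⊗[k] (H ⊗[k] H) →ₗ[k] H ⊗[k] H :=
  TensorProduct.lift <| LinearMap.mk₂ k
    (fun (x : H) (w : H ⊗[k] H) =>
      (TensorProduct.map (sA k H) (sA k H)) w * Q * (x ⊗ₜ[k] (1:H)))
    (fun x x' w => by simp [TensorProduct.add_tmul, mul_add])
    (fun c x w => by simp only [← TensorProduct.smul_tmul', mul_smul_comm])
    (fun x w w' => by simp [map_add, add_mul])
    (fun c x w => by simp [map_smul, smul_mul_assoc])

@[simp] lemma ThetaQ_tmul (Q : H ⊗[k] H) (x : H) (w : H ⊗[k] H) :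
    ThetaQ Q (x ⊗ₜ[k] w)
      = (TensorProduct.map (sA k H) (sA k H)) w * Q * (x ⊗ₜ[k] (1:H)) := by
  simp [ThetaQ]

/-- `a ⊗ b ↦ Δ(S b) · (a ⊗ 1)`. -/
def Xi : H ⊗[k] H →ₗ[k] H ⊗[k] H :=
  TensorProduct.lift <| LinearMap.mk₂ k
    (fun (a b : H) => cm k H (sA k H b) * (a ⊗ₜ[k] (1:H)))
    (fun a a' b => by simp [TensorProduct.add_tmul, mul_add])
    (fun c a b => by simp only [← TensorProduct.smul_tmul', mul_smul_comm])
    (fun a b b' => by simp [map_add, add_mul])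
    (fun c a b => by simp [map_smul, smul_mul_assoc])

@[simp] lemma Xi_tmul (a b : H) :
    (Xi (a ⊗ₜ[k] b) : H ⊗[k] H) = cm k H (sA k H b) * (a ⊗ₜ[k] (1:H)) := by
  simp [Xi]

/-- `x ⊗ w ↦ (S⊗S)(τ w) · (x ⊗ 1)`. -/
def Pi : H ⊗[k] (H ⊗[k] H) →ₗ[k] H ⊗[k] H :=
  TensorProduct.lift <| LinearMap.mk₂ k
    (fun (x : H) (w : H ⊗[k] H) =>
      (TensorProduct.map (sA k H) (sA k H)) (tau k H w) * (x ⊗ₜ[k] (1:H)))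
    (fun x x' w => by simp [TensorProduct.add_tmul, mul_add])
    (fun c x w => by simp only [← TensorProduct.smul_tmul', mul_smul_comm])
    (fun x w w' => by simp [map_add, add_mul])
    (fun c x w => by simp [map_smul, smul_mul_assoc])

@[simp] lemma Pi_tmul (x : H) (w : H ⊗[k] H) :
    (Pi (x ⊗ₜ[k] w) : H ⊗[k] H)
      = (TensorProduct.map (sA k H) (sA k H)) (tau k H w) * (x ⊗ₜ[k] (1:H)) := by
  simp [Pi]

variable {R : H ⊗[k] H}

/-- ML1 : `Δ(u) = ψ₂((Δᵀ ⊗ Δᵀ) R)`. -/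
lemma comul_uOp_eq (R : H ⊗[k] H) :
    cm k H (uOp k H R) = psi2 ((TensorProduct.map (DeltaT k H) (DeltaT k H)) R) := by
  induction R using TensorProduct.induction_on with
  | zero => simp [uOp]
  | tmul a b =>
    have h1 : uOp k H (a ⊗ₜ[k] b) = sA k H b * a := by simp [uOp]
    rw [h1, Bialgebra.comul_mul, TensorProduct.map_tmul, psi2_tmul, DeltaT_apply,
      DeltaT_apply, tau_tau, ← comul_antipode]
  | add s t hs ht =>
    have h0 : uOp k H (s + t) = uOp k H s + uOp k H t := by simp [uOp]
    rw [h0, map_add, hs, ht, ← map_add, ← map_add]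

/-- ML2. -/
lemma psi2_mul_right (T : (H ⊗[k] H) ⊗[k] (H ⊗[k] H)) (Z : H ⊗[k] H) :
    psi2 (T * ((tau k H Z) ⊗ₜ[k] (1 : H ⊗[k] H))) = psi2 T * Z := by
  induction T using TensorProduct.induction_on with
  | zero => simp
  | tmul α β =>
    rw [Algebra.TensorProduct.tmul_mul_tmul, psi2_tmul, psi2_tmul, mul_one, tau_mul, tau_tau]
    rw [mul_assoc]
  | add s t hs ht => simp only [add_mul, map_add, hs, ht]

/-- ML3. -/
lemma mapDT_comm_P (hR : IsUniversalRMatrix k H R) (W : H ⊗[k] H) :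
    (TensorProduct.map (DeltaT k H) (DeltaT k H)) W * ((R * tau k H R) ⊗ₜ[k] (1 : H ⊗[k] H))
      = ((R * tau k H R) ⊗ₜ[k] (1 : H ⊗[k] H)) *
          (TensorProduct.map (DeltaT k H) (DeltaT k H)) W := by
  induction W using TensorProduct.induction_on with
  | zero => simp
  | tmul a b =>
    rw [TensorProduct.map_tmul, Algebra.TensorProduct.tmul_mul_tmul,
      Algebra.TensorProduct.tmul_mul_tmul, mul_one, one_mul, P_comm hR]
  | add s t hs ht => simp only [add_mul, mul_add, map_add, hs, ht]

/-- ML4. -/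
lemma psi2_mul_e14 (W : H ⊗[k] H) (T : (H ⊗[k] H) ⊗[k] (H ⊗[k] H)) :
    psi2 (T * e14 W) = G2 W (psi2 T) := by
  induction W using TensorProduct.induction_on with
  | zero => simp
  | tmul i j =>
    induction T using TensorProduct.induction_on with
    | zero => simp
    | tmul α β =>
      rw [e14_tmul, Algebra.TensorProduct.tmul_mul_tmul, psi2_tmul, psi2_tmul, G2_tmul,
        mapSS_mul, tau_mul]
      have h1 : (TensorProduct.map (sA k H) (sA k H)) ((1:H) ⊗ₜ[k] j)
          = (1:H) ⊗ₜ[k] sA k H j := by simp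
      have h2 : tau k H (i ⊗ₜ[k] (1:H)) = (1:H) ⊗ₜ[k] i := rfl
      rw [h1, h2]
      simp only [mul_assoc]
    | add s t hs ht => simp only [add_mul, map_add, hs, ht]
  | add w w' hw hw' =>
    simp only [map_add, mul_add, hw, hw', LinearMap.add_apply]

/-- ML5. -/
lemma G2_u_one (W : H ⊗[k] H) (u : H) :
    G2 W (u ⊗ₜ[k] (1:H))
      = u ⊗ₜ[k] (LinearMap.mul' k H
          ((TensorProduct.map (sA k H) LinearMap.id) (tau k H W))) := by
  induction W using TensorProduct.induction_on with
  | zero => simp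
  | tmul i j =>
    rw [G2_tmul, Algebra.TensorProduct.tmul_mul_tmul, Algebra.TensorProduct.tmul_mul_tmul]
    simp
  | add w w' hw hw' =>
    simp only [map_add, hw, hw', LinearMap.add_apply, TensorProduct.tmul_add]

/-- ML6. -/
lemma psi2_big (hR : IsUniversalRMatrix k H R) (V : H ⊗[k] (H ⊗[k] H)) (W : H ⊗[k] H) :
    psi2 ((((R * tau k H R) ⊗ₜ[k] (1 : H ⊗[k] H)) * theta24 V) * e13 W)
      = G1 W (ThetaQ (tau k H R * R) V) := by
  have htauP : tau k H (R * tau k H R) = tau k H R * R := by rw [tau_mul, tau_tau]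
  induction W using TensorProduct.induction_on with
  | zero => simp
  | tmul c d =>
    induction V using TensorProduct.induction_on with
    | zero => simp
    | tmul x w =>
      rw [theta24_tmul, e13_tmul, Algebra.TensorProduct.tmul_mul_tmul,
        Algebra.TensorProduct.tmul_mul_tmul, psi2_tmul, G1_tmul, ThetaQ_tmul]
      rw [one_mul, mapSS_mul, tau_mul, tau_mul, htauP]
      have h1 : (TensorProduct.map (sA k H) (sA k H)) (d ⊗ₜ[k] (1:H))
          = sA k H d ⊗ₜ[k] (1:H) := by simp
      have h2 : tau k H ((1:H) ⊗ₜ[k] x) = x ⊗ₜ[k] (1:H) := rfl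
      have h3 : tau k H (c ⊗ₜ[k] (1:H)) = (1:H) ⊗ₜ[k] c := rfl
      rw [h1, h2, h3]
      simp only [mul_assoc]
    | add s t hs ht => simp only [mul_add, add_mul, map_add, hs, ht]
  | add w w' hw hw' =>
    simp only [map_add, hw, hw', LinearMap.add_apply, mul_add]

/-- ML7. -/
lemma ThetaQ_mapIdDT (hR : IsUniversalRMatrix k H R) (W : H ⊗[k] H) :
    ThetaQ (tau k H R * R) ((TensorProduct.map LinearMap.id (DeltaT k H)) W)
      = (tau k H R * R) * Xi W := by
  induction W using TensorProduct.induction_on with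
  | zero => simp
  | tmul a b =>
    rw [TensorProduct.map_tmul, LinearMap.id_apply, ThetaQ_tmul, Xi_tmul]
    rw [DeltaT_apply, ← comul_antipode, ← Q_comm hR (sA k H b), mul_assoc]
  | add s t hs ht => simp only [map_add, hs, ht, mul_add]

/-- ML9. -/
lemma u_one_mul (hR : IsUniversalRMatrix k H R) (Z : H ⊗[k] H) :
    ((uOp k H R) ⊗ₜ[k] (1:H)) * Z
      = (TensorProduct.map (sA k H ∘ₗ sA k H) LinearMap.id) Z * ((uOp k H R) ⊗ₜ[k] (1:H)) := by
  induction Z using TensorProduct.induction_on with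
  | zero => simp
  | tmul p q =>
    rw [Algebra.TensorProduct.tmul_mul_tmul, TensorProduct.map_tmul,
      Algebra.TensorProduct.tmul_mul_tmul, one_mul, mul_one, LinearMap.comp_apply,
      LinearMap.id_apply, u_mul_eq hR]
  | add s t hs ht => simp only [mul_add, add_mul, map_add, hs, ht]

lemma Xi_eq_Pi (W : H ⊗[k] H) : Xi W = Pi (IdDelta k H W) := by
  induction W using TensorProduct.induction_on with
  | zero => simp [IdDelta]
  | tmul a b =>
    have h0 : IdDelta k H (a ⊗ₜ[k] b) = a ⊗ₜ[k] (cm k H b) := rfl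
    rw [h0, Xi_tmul, Pi_tmul, ← comul_antipode]
  | add s t hs ht => simp only [map_add, hs, ht]

lemma Pi_emb (W W' : H ⊗[k] H) :
    Pi (emb13 k H W * emb12 k H W')
      = ((kappa W) ⊗ₜ[k] (1:H)) * (TensorProduct.map LinearMap.id (sA k H)) W' := by
  induction W using TensorProduct.induction_on with
  | zero => simp
  | tmul c d =>
    induction W' using TensorProduct.induction_on with
    | zero => simp
    | tmul m n =>
      have h1 : emb13 k H (c ⊗ₜ[k] d) = c ⊗ₜ[k] ((1:H) ⊗ₜ[k] d) := rfl
      have h2 : emb12 k H (m ⊗ₜ[k] n) = m ⊗ₜ[k] (n ⊗ₜ[k] (1:H)) := rfl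
      rw [h1, h2, Algebra.TensorProduct.tmul_mul_tmul, Algebra.TensorProduct.tmul_mul_tmul]
      simp [Algebra.TensorProduct.tmul_mul_tmul, mul_assoc]
    | add s t hs ht => simp only [mul_add, map_add, hs, ht]
  | add s t hs ht => simp only [add_mul, map_add, hs, ht, TensorProduct.add_tmul]

/-- ML8 : `Ξ(R) = R⁻¹ (u ⊗ 1)`. -/
lemma Xi_R (hR : IsUniversalRMatrix k H R) :
    Xi R = (TensorProduct.map (sA k H) LinearMap.id) R * ((uOp k H R) ⊗ₜ[k] (1:H)) := by
  rw [Xi_eq_Pi, hR.hexagon2, Pi_emb, ← uOp_eq_kappa, u_one_mul hR]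
  congr 1
  have hcomp : (TensorProduct.map (sA k H ∘ₗ sA k H) LinearMap.id) ∘ₗ
      (TensorProduct.map LinearMap.id (sA k H))
      = (TensorProduct.map (sA k H) (sA k H)) ∘ₗ
          (TensorProduct.map (sA k H) LinearMap.id) := by
    rw [← TensorProduct.map_comp, ← TensorProduct.map_comp]
    simp
  calc (TensorProduct.map (sA k H ∘ₗ sA k H) LinearMap.id)
        ((TensorProduct.map LinearMap.id (sA k H)) R)
      = ((TensorProduct.map (sA k H ∘ₗ sA k H) LinearMap.id) ∘ₗ
          (TensorProduct.map LinearMap.id (sA k H))) R := rfl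
    _ = (TensorProduct.map (sA k H) (sA k H))
          ((TensorProduct.map (sA k H) LinearMap.id) R) := by rw [hcomp]; rfl
    _ = (TensorProduct.map (sA k H) LinearMap.id) R := mapSS_Rinv hR

/-- ML12. -/
lemma G1_mul_u_one (W : H ⊗[k] H) (Z : H ⊗[k] H) (u : H) :
    G1 W (Z * (u ⊗ₜ[k] (1:H))) = G1 W Z * (u ⊗ₜ[k] (1:H)) := by
  induction W using TensorProduct.induction_on with
  | zero => simp
  | tmul c d =>
    rw [G1_tmul, G1_tmul]
    have h1 : (u ⊗ₜ[k] (1:H)) * ((1:H) ⊗ₜ[k] c) = ((1:H) ⊗ₜ[k] c) * (u ⊗ₜ[k] (1:H)) := by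
      rw [Algebra.TensorProduct.tmul_mul_tmul, Algebra.TensorProduct.tmul_mul_tmul]
      rw [one_mul, mul_one, one_mul, mul_one]
    rw [mul_assoc Z, h1, ← mul_assoc Z, ← mul_assoc, ← mul_assoc]
  | add w w' hw hw' => simp only [map_add, hw, hw', LinearMap.add_apply, add_mul]

/-- `id ⊗ κ`. -/
def M2map : H ⊗[k] (H ⊗[k] H) →ₗ[k] H ⊗[k] H := TensorProduct.map LinearMap.id kappa

lemma M2map_mapIdDT (W : H ⊗[k] H) :
    M2map ((TensorProduct.map LinearMap.id (DeltaT k H)) W) = incl1 (epsR W : H) := by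
  induction W using TensorProduct.induction_on with
  | zero => simp [M2map]
  | tmul a b =>
    rw [TensorProduct.map_tmul, LinearMap.id_apply, M2map, TensorProduct.map_tmul,
      LinearMap.id_apply]
    have h1 : kappa (DeltaT k H b) = algebraMap k H (cu k H b) := by
      rw [DeltaT_apply]
      have : kappa (tau k H (cm k H b))
          = LinearMap.mul' k H ((TensorProduct.map (sA k H) LinearMap.id) (cm k H b)) := by
        rw [kappa, LinearMap.comp_apply, LinearMap.comp_apply, tau_tau]
      rw [this, mulS_comul]
    rw [h1, epsR_tmul, incl1_apply, Algebra.algebraMap_eq_smul_one, TensorProduct.tmul_smul,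
      TensorProduct.smul_tmul']
  | add s t hs ht => simp only [map_add, hs, ht]

lemma M2map_emb (W W' : H ⊗[k] H) :
    M2map (emb12 k H W * emb13 k H W') = tau k H (G1 W' (tau k H W)) := by
  induction W using TensorProduct.induction_on with
  | zero => simp [M2map]
  | tmul m n =>
    induction W' using TensorProduct.induction_on with
    | zero => simp [M2map]
    | tmul c d =>
      have h1 : emb12 k H (m ⊗ₜ[k] n) = m ⊗ₜ[k] (n ⊗ₜ[k] (1:H)) := rfl
      have h2 : emb13 k H (c ⊗ₜ[k] d) = c ⊗ₜ[k] ((1:H) ⊗ₜ[k] d) := rfl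
      rw [h1, h2, Algebra.TensorProduct.tmul_mul_tmul, Algebra.TensorProduct.tmul_mul_tmul]
      rw [M2map, TensorProduct.map_tmul, LinearMap.id_apply, kappa_tmul]
      have h3 : tau k H (m ⊗ₜ[k] n) = n ⊗ₜ[k] m := rfl
      rw [h3, G1_tmul, Algebra.TensorProduct.tmul_mul_tmul, Algebra.TensorProduct.tmul_mul_tmul]
      rw [one_mul, mul_one, one_mul, tau_tmul]
    | add s t hs ht =>
      simp only [mul_add, map_add, hs, ht, LinearMap.add_apply]
  | add s t hs ht => simp only [add_mul, map_add, hs, ht]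

/-- ML13 : `G1 R (τ R) = 1`. -/
lemma G1_R_tauR (hR : IsUniversalRMatrix k H R) : G1 R (tau k H R) = 1 := by
  have h := congrArg M2map (hexagon2T hR)
  rw [M2map_mapIdDT, M2map_emb, counitR_R hR] at h
  have h2 := congrArg (tau k H) h
  rw [tau_tau] at h2
  rw [← h2]
  simp [Algebra.TensorProduct.one_def]

end Drinfeld

open Drinfeld in
/-- Theorem 1: `Δ(u) · (Rᵀ·R) = u ⊗ u` in `H ⊗ H`, where `Rᵀ = τ(R)`;
equivalently `Δ(u) = (u ⊗ u)(RᵀR)⁻¹`. -/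
theorem comul_uOp (R : H ⊗[k] H) (hR : IsUniversalRMatrix k H R) :
    Coalgebra.comul (R := k) (uOp k H R) * (tau k H R * R) =
      uOp k H R ⊗ₜ[k] uOp k H R := by
  classical
  show cm k H (uOp k H R) * (tau k H R * R) = uOp k H R ⊗ₜ[k] uOp k H R
  have htauQ : tau k H (tau k H R * R) = R * tau k H R := by rw [tau_mul, tau_tau]
  have hQRinv : (tau k H R * R) * (TensorProduct.map (sA k H) LinearMap.id) R
      = tau k H R := by
    rw [mul_assoc, R_mul_Rinv hR, mul_one]
  have hrearr : (e23 R : (H ⊗[k] H) ⊗[k] (H ⊗[k] H)) * e13 R * (e24 R * e14 R)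
      = ((e23 R * e24 R) * e13 R) * e14 R := by
    calc (e23 R : (H ⊗[k] H) ⊗[k] (H ⊗[k] H)) * e13 R * (e24 R * e14 R)
        = ((e23 R * e13 R) * e24 R) * e14 R := (mul_assoc _ _ _).symm
      _ = (e23 R * (e13 R * e24 R)) * e14 R := by rw [mul_assoc (e23 R)]
      _ = (e23 R * (e24 R * e13 R)) * e14 R := by rw [e13_e24_comm]
      _ = ((e23 R * e24 R) * e13 R) * e14 R := by rw [← mul_assoc (e23 R)]
  have htheta : (e23 R : (H ⊗[k] H) ⊗[k] (H ⊗[k] H)) * e24 R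
      = theta24 ((TensorProduct.map LinearMap.id (DeltaT k H)) R) := by
    rw [hexagon2T hR, ← e23_mul_e24]
  calc cm k H (uOp k H R) * (tau k H R * R)
      = psi2 ((TensorProduct.map (DeltaT k H) (DeltaT k H)) R) * (tau k H R * R) := by
        rw [comul_uOp_eq]
    _ = psi2 ((TensorProduct.map (DeltaT k H) (DeltaT k H)) R *
          ((R * tau k H R) ⊗ₜ[k] (1 : H ⊗[k] H))) := by
        rw [← htauQ, psi2_mul_right]
    _ = psi2 (((R * tau k H R) ⊗ₜ[k] (1 : H ⊗[k] H)) *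
          (TensorProduct.map (DeltaT k H) (DeltaT k H)) R) := by
        rw [mapDT_comm_P hR]
    _ = psi2 (((R * tau k H R) ⊗ₜ[k] (1 : H ⊗[k] H)) *
          (e23 R * e13 R * (e24 R * e14 R))) := by rw [mapDT_R hR]
    _ = psi2 (((((R * tau k H R) ⊗ₜ[k] (1 : H ⊗[k] H)) *
          theta24 ((TensorProduct.map LinearMap.id (DeltaT k H)) R)) * e13 R) * e14 R) := by
        rw [hrearr, ← htheta, ← mul_assoc, ← mul_assoc]
    _ = G2 R (psi2 ((((R * tau k H R) ⊗ₜ[k] (1 : H ⊗[k] H)) *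
          theta24 ((TensorProduct.map LinearMap.id (DeltaT k H)) R)) * e13 R)) :=
        psi2_mul_e14 R _
    _ = G2 R (G1 R (ThetaQ (tau k H R * R)
          ((TensorProduct.map LinearMap.id (DeltaT k H)) R))) := by
        rw [psi2_big hR]
    _ = G2 R (G1 R ((tau k H R * R) * Xi R)) := by rw [ThetaQ_mapIdDT hR]
    _ = G2 R (G1 R (tau k H R * ((uOp k H R) ⊗ₜ[k] (1:H)))) := by
        rw [Xi_R hR, ← mul_assoc, hQRinv]
    _ = G2 R (G1 R (tau k H R) * ((uOp k H R) ⊗ₜ[k] (1:H))) := by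
        rw [G1_mul_u_one]
    _ = G2 R ((uOp k H R) ⊗ₜ[k] (1:H)) := by rw [G1_R_tauR hR, one_mul]
    _ = uOp k H R ⊗ₜ[k] uOp k H R := by rw [G2_u_one]; rfl
end
end
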